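/- arXiv:1102.4951 — 12 statements merged into one kernel-verified Lean document; each statement's English description precedes it below -/
import Mathlib

section
/- Let S be an m-element set, let k ≥ 1, and let X = (X_1, …, X_n) be a collection of n subsets of S (repetitions allowed). Then the following two conditions are equivalent: (HC1[k]) for every index set J ⊆ {1,…,n} with 1 ≤ |J| ≤ k, the union ⋃_{j∈J} X_j has at least |J| elements; (HC2[k]) for every subset T ⊆ S with 0 ≤ |T| ≤ k−1, the number of indices i with X_i ⊆ T is at most |T|. -/
/-- Equivalence of the two forms HC1[k] and HC2[k] of the restricted Hall condition
for a collection `X` of `n` subsets of an `m`-element set `S`. -/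
theorem hall_conditions_equiv {α : Type*} [DecidableEq α]
    (S : Finset α) (m n k : ℕ) (hS : S.card = m) (hk : 1 ≤ k)
    (X : Fin n → Finset α) (hX : ∀ i, X i ⊆ S) :
    (∀ J : Finset (Fin n), 1 ≤ J.card → J.card ≤ k →
        J.card ≤ (J.biUnion X).card) ↔
    (∀ T : Finset α, T ⊆ S → T.card ≤ k - 1 →
        (Finset.univ.filter (fun i => X i ⊆ T)).card ≤ T.card) := by
  constructor
  · intro h1 T hTS hTk
    by_contra hc
    push_neg at hc
    set J := Finset.univ.filter (fun i => X i ⊆ T) with hJ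
    have hTJ : T.card + 1 ≤ J.card := hc
    obtain ⟨J', hJ'sub, hJ'card⟩ := Finset.exists_subset_card_eq hTJ
    have h1' := h1 J' (by omega) (by omega)
    have hsub : J'.biUnion X ⊆ T := by
      intro x hx
      simp only [Finset.mem_biUnion] at hx
      obtain ⟨i, hi, hxi⟩ := hx
      exact (Finset.mem_filter.mp (hJ'sub hi)).2 hxi
    have := Finset.card_le_card hsub
    omega
  · intro h2 J hJ1 hJk
    by_contra hc
    push_neg at hc
    set T := J.biUnion X with hT
    have hTS : T ⊆ S := Finset.biUnion_subset.mpr fun i _ => hX i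
    have hTk : T.card ≤ k - 1 := by omega
    have h := h2 T hTS hTk
    have hJsub : J ⊆ Finset.univ.filter (fun i => X i ⊆ T) := by
      intro i hi
      simp only [Finset.mem_filter, Finset.mem_univ, true_and]
      exact Finset.subset_biUnion_of_mem X hi
    have := Finset.card_le_card hJsub
    omega
end

section
/- Let (S,X) be an (n,N,k,m)-CBC in which every member X_i is nonempty, and for each j ≥ 1 let A_j denote the number of indices i with |X_i| = j. Then for every integer i with 1 ≤ i ≤ k−1 one has ∑_{j=1}^{i} C(m−j, i−j) · A_j ≤ i · C(m, i), where C(a,b) denotes the binomial coefficient. -/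
open Finset

lemma count_supersets (m j i : ℕ) (s : Finset (Fin m)) (hs : s.card = j) (hji : j ≤ i) :
    ((Finset.univ.powersetCard i).filter (fun T => s ⊆ T)).card = Nat.choose (m - j) (i - j) := by
  have : ((Finset.univ.powersetCard i).filter (fun T => s ⊆ T)).card
      = ((sᶜ).powersetCard (i - j)).card := by
    apply Finset.card_nbij' (fun T => T \ s) (fun U => U ∪ s)
    · intro T hT
      simp only [Finset.mem_coe, mem_filter, mem_powersetCard] at hT
      obtain ⟨⟨_, hcard⟩, hsub⟩ := hT
      rw [Finset.mem_coe, mem_powersetCard]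
      constructor
      · intro x hx; simp only [mem_sdiff] at hx; simpa using hx.2
      · rw [Finset.card_sdiff_of_subset hsub, hcard, hs]
    · intro U hU
      rw [Finset.mem_coe, mem_powersetCard] at hU
      obtain ⟨hUsub, hUcard⟩ := hU
      have hdisj : Disjoint U s := by
        rw [Finset.disjoint_left]; intro a ha has
        exact (Finset.mem_compl.mp (hUsub ha)) has
      simp only [Finset.mem_coe, mem_filter, mem_powersetCard]
      refine ⟨⟨Finset.subset_univ _, ?_⟩, Finset.subset_union_right⟩
      rw [Finset.card_union_of_disjoint hdisj, hUcard, hs]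
      omega
    · intro T hT
      simp only [Finset.mem_coe, mem_filter] at hT
      exact Finset.sdiff_union_of_subset hT.2
    · intro U hU
      rw [Finset.mem_coe, mem_powersetCard] at hU
      have hdisj : Disjoint U s := by
        rw [Finset.disjoint_left]; intro a ha has
        exact (Finset.mem_compl.mp (hU.1 ha)) has
      exact Finset.union_sdiff_cancel_right hdisj
  rw [this, Finset.card_powersetCard, Finset.card_compl, Fintype.card_fin, hs]

/-- The double-counting inequalities satisfied by an (n,N,k,m)-CBC whose members
are all nonempty: for `1 ≤ i ≤ k-1`, `∑_{j=1}^{i} C(m-j, i-j)·A_j ≤ i·C(m,i)`,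
where `A_j` is the number of members of cardinality `j`. -/
theorem cbc_double_counting (n N k m : ℕ) (X : Fin n → Finset (Fin m))
    (hN : ∑ t, (X t).card = N)
    (hne : ∀ t, (X t).Nonempty)
    (hHall : ∀ J : Finset (Fin n), 1 ≤ J.card → J.card ≤ k →
        J.card ≤ (J.biUnion X).card)
    (i : ℕ) (hi1 : 1 ≤ i) (hik : i ≤ k - 1) :
    ∑ j ∈ Finset.Icc 1 i,
        Nat.choose (m - j) (i - j) *
          (Finset.univ.filter (fun t => (X t).card = j)).card
      ≤ i * Nat.choose m i := by
  classical
  set P := (Finset.univ : Finset (Fin m)).powersetCard i with hP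
  -- Key bound: each T ∈ P contains at most i members
  have key : ∀ T ∈ P, (Finset.univ.filter (fun t => X t ⊆ T)).card ≤ i := by
    intro T hT
    rw [mem_powersetCard] at hT
    by_contra h
    push_neg at h
    set J := Finset.univ.filter (fun t => X t ⊆ T) with hJ
    obtain ⟨J', hJ'sub, hJ'card⟩ := Finset.exists_subset_card_eq (show i + 1 ≤ J.card by omega)
    have h1 : 1 ≤ J'.card := by omega
    have h2 : J'.card ≤ k := by omega
    have := hHall J' h1 h2
    have hsub : J'.biUnion X ⊆ T := by
      intro x hx
      rw [Finset.mem_biUnion] at hx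
      obtain ⟨t, ht, hxt⟩ := hx
      have := hJ'sub ht
      rw [hJ, Finset.mem_filter] at this
      exact this.2 hxt
    have := (Finset.card_le_card hsub)
    omega
  -- double counting
  have count : ∑ T ∈ P, (Finset.univ.filter (fun t => X t ⊆ T)).card
      = ∑ t : Fin n, (P.filter (fun T => X t ⊆ T)).card := by
    simp_rw [Finset.card_filter]
    rw [Finset.sum_comm]
  have step1 : ∑ j ∈ Finset.Icc 1 i,
        Nat.choose (m - j) (i - j) *
          (Finset.univ.filter (fun t => (X t).card = j)).card
      ≤ ∑ t : Fin n, (P.filter (fun T => X t ⊆ T)).card := by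
    have : ∑ j ∈ Finset.Icc 1 i,
        Nat.choose (m - j) (i - j) *
          (Finset.univ.filter (fun t => (X t).card = j)).card
        = ∑ j ∈ Finset.Icc 1 i, ∑ t ∈ Finset.univ.filter (fun t => (X t).card = j),
            (P.filter (fun T => X t ⊆ T)).card := by
      apply Finset.sum_congr rfl
      intro j hj
      rw [Finset.mem_Icc] at hj
      rw [Finset.sum_congr rfl (fun t ht => ?_), Finset.sum_const, mul_comm, smul_eq_mul, mul_comm]
      rw [Finset.mem_filter] at ht
      exact count_supersets m j i (X t) ht.2 hj.2
    rw [this]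
    rw [← Finset.sum_biUnion]
    · apply Finset.sum_le_sum_of_subset
      intro t _; exact Finset.mem_univ t
    · intro a ha b hb hab
      simp only [Finset.disjoint_left, Finset.mem_filter]
      intro t ht1 ht2
      exact hab (ht1.2 ▸ ht2.2.symm ▸ rfl)
  have step2 : ∑ t : Fin n, (P.filter (fun T => X t ⊆ T)).card ≤ i * Nat.choose m i := by
    rw [← count]
    calc ∑ T ∈ P, (Finset.univ.filter (fun t => X t ⊆ T)).card
        ≤ ∑ T ∈ P, i := Finset.sum_le_sum key
      _ = P.card * i := by rw [Finset.sum_const, smul_eq_mul]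
      _ = i * Nat.choose m i := by
          rw [hP, Finset.card_powersetCard, Finset.card_univ, Fintype.card_fin, mul_comm]
  exact le_trans step1 step2
end

section
/- Let m ≥ 3 and 1 ≤ i ≤ m−2 be integers, and let A_1, A_2, …, A_{i+1} be nonnegative real numbers. If ∑_{j=1}^{i+1} C(m−j, i−j+1) · A_j ≤ (i+1) · C(m, i+1), then ∑_{j=1}^{i} C(m−j, i−j) · A_j ≤ i · C(m, i). -/
/-- Among the double-counting inequalities, the (i+1)-th implies the i-th:
for `m ≥ 3`, `1 ≤ i ≤ m-2` and nonnegative reals `A_1, …, A_{i+1}`, if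
`∑_{j=1}^{i+1} C(m-j, i-j+1)·A_j ≤ (i+1)·C(m, i+1)` then
`∑_{j=1}^{i} C(m-j, i-j)·A_j ≤ i·C(m, i)`. -/
theorem double_counting_redundant (m i : ℕ) (hm : 3 ≤ m) (hi1 : 1 ≤ i) (hi2 : i ≤ m - 2)
    (A : ℕ → ℝ) (hA : ∀ j, 0 ≤ A j)
    (h : ∑ j ∈ Finset.Icc 1 (i + 1),
        (Nat.choose (m - j) (i - j + 1) : ℝ) * A j ≤ (i + 1) * Nat.choose m (i + 1)) :
    ∑ j ∈ Finset.Icc 1 i,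
        (Nat.choose (m - j) (i - j) : ℝ) * A j ≤ i * Nat.choose m i := by
  set c := m - i with hcdef
  have hcpos : 0 < c := by omega
  have hcR : (0:ℝ) < (c:ℝ) := by exact_mod_cast hcpos
  -- termwise inequality
  have key : ∀ j ∈ Finset.Icc 1 i,
      (c:ℝ) * ((Nat.choose (m - j) (i - j) : ℝ) * A j)
        ≤ (i:ℝ) * ((Nat.choose (m - j) (i - j + 1) : ℝ) * A j) := by
    intro j hj
    simp only [Finset.mem_Icc] at hj
    have hn : c * Nat.choose (m - j) (i - j) ≤ i * Nat.choose (m - j) (i - j + 1) := by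
      have h1 := Nat.choose_succ_right_eq (m - j) (i - j)
      have h2 : m - j - (i - j) = c := by omega
      rw [h2] at h1
      calc c * Nat.choose (m - j) (i - j)
          = Nat.choose (m - j) (i - j) * c := mul_comm _ _
        _ = Nat.choose (m - j) (i - j + 1) * (i - j + 1) := h1.symm
        _ ≤ Nat.choose (m - j) (i - j + 1) * i := Nat.mul_le_mul_left _ (by omega)
        _ = i * Nat.choose (m - j) (i - j + 1) := mul_comm _ _
    have hn' : ((c * Nat.choose (m - j) (i - j) : ℕ) : ℝ)
        ≤ ((i * Nat.choose (m - j) (i - j + 1) : ℕ) : ℝ) := by exact_mod_cast hn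
    push_cast at hn'
    nlinarith [hA j]
  have step1 : (c:ℝ) * ∑ j ∈ Finset.Icc 1 i, (Nat.choose (m - j) (i - j) : ℝ) * A j
      ≤ (i:ℝ) * ∑ j ∈ Finset.Icc 1 i, (Nat.choose (m - j) (i - j + 1) : ℝ) * A j := by
    rw [Finset.mul_sum, Finset.mul_sum]
    exact Finset.sum_le_sum key
  have step2 : ∑ j ∈ Finset.Icc 1 i, (Nat.choose (m - j) (i - j + 1) : ℝ) * A j
      ≤ ∑ j ∈ Finset.Icc 1 (i + 1), (Nat.choose (m - j) (i - j + 1) : ℝ) * A j := by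
    apply Finset.sum_le_sum_of_subset_of_nonneg
    · exact Finset.Icc_subset_Icc_right (by omega)
    · intro j _ _
      exact mul_nonneg (Nat.cast_nonneg _) (hA j)
  -- identity (i+1)·C(m,i+1) = c·C(m,i)
  have hid := Nat.choose_succ_right_eq m i
  rw [show m - i = c from rfl] at hid
  have hidR : (Nat.choose m (i + 1) : ℝ) * (i + 1) = (Nat.choose m i : ℝ) * c := by
    exact_mod_cast hid
  have final : (c:ℝ) * ∑ j ∈ Finset.Icc 1 i, (Nat.choose (m - j) (i - j) : ℝ) * A j
      ≤ (c:ℝ) * ((i:ℝ) * Nat.choose m i) := by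
    calc (c:ℝ) * ∑ j ∈ Finset.Icc 1 i, (Nat.choose (m - j) (i - j) : ℝ) * A j
        ≤ (i:ℝ) * ∑ j ∈ Finset.Icc 1 i, (Nat.choose (m - j) (i - j + 1) : ℝ) * A j := step1
      _ ≤ (i:ℝ) * ∑ j ∈ Finset.Icc 1 (i + 1), (Nat.choose (m - j) (i - j + 1) : ℝ) * A j := by
          exact mul_le_mul_of_nonneg_left step2 (Nat.cast_nonneg i)
      _ ≤ (i:ℝ) * ((i + 1) * Nat.choose m (i + 1)) :=
          mul_le_mul_of_nonneg_left h (Nat.cast_nonneg i)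
      _ = (c:ℝ) * ((i:ℝ) * Nat.choose m i) := by nlinarith [hidR]
  exact le_of_mul_le_mul_left final hcR
end

section
/- Let 1 ≤ c ≤ k−1 ≤ m−1 be integers. If there exists a c-uniform (n, cn, k, m)-CBC, i.e. an (n,N,k,m)-CBC in which every member X_i has cardinality exactly c (so N = cn), then n · C(k−1, c) ≤ (k−1) · C(m, c); equivalently n ≤ (k−1)C(m,c)/C(k−1,c). -/
open Finset

/-- Number of `K`-subsets of a finite type containing a fixed set `A`. -/
lemma count_supersets_s3 {α : Type*} [Fintype α] [DecidableEq α] (A : Finset α) (K : ℕ)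
    (hA : A.card ≤ K) :
    ((Finset.univ.powersetCard K).filter (fun Y => A ⊆ Y)).card
      = (Fintype.card α - A.card).choose (K - A.card) := by
  have : ((Finset.univ.powersetCard K).filter (fun Y => A ⊆ Y)).card
      = (Aᶜ.powersetCard (K - A.card)).card := by
    apply Finset.card_bij' (fun Y _ => Y \ A) (fun B _ => A ∪ B)
    · intro Y hY
      simp only [mem_filter, mem_powersetCard] at hY
      simp only [mem_powersetCard]
      constructor
      · intro x hx
        simp only [mem_sdiff] at hx
        simp [hx.2]
      · rw [card_sdiff_of_subset hY.2, hY.1.2]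
    · intro B hB
      simp only [mem_powersetCard] at hB
      simp only [mem_filter, mem_powersetCard]
      refine ⟨⟨subset_univ _, ?_⟩, subset_union_left⟩
      rw [card_union_of_disjoint, hB.2]
      · omega
      · exact disjoint_left.2 fun x hx hx' => by
          have := hB.1 hx'; simp at this; exact this hx
    · intro Y hY
      simp only [mem_filter, mem_powersetCard] at hY
      exact union_sdiff_of_subset hY.2
    · intro B hB
      simp only [mem_powersetCard] at hB
      exact Finset.union_sdiff_cancel_left (disjoint_left.2 fun x hx hx' => by
        have := hB.1 hx'; simp at this; exact this hx)
  rw [this, card_powersetCard, card_compl]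

/-- Upper bound on the number of items of a `c`-uniform (n, cn, k, m)-CBC:
if every member has cardinality exactly `c` (with `1 ≤ c ≤ k-1 ≤ m-1`), then
`n·C(k-1, c) ≤ (k-1)·C(m, c)`. -/
theorem uniform_cbc_bound (n k m c : ℕ) (hc : 1 ≤ c) (hck : c ≤ k - 1) (hkm : k - 1 ≤ m - 1)
    (X : Fin n → Finset (Fin m))
    (huni : ∀ t, (X t).card = c)
    (hHall : ∀ J : Finset (Fin n), 1 ≤ J.card → J.card ≤ k →
        J.card ≤ (J.biUnion X).card) :
    n * Nat.choose (k - 1) c ≤ (k - 1) * Nat.choose m c := by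
  set K := k - 1 with hK
  have hk2 : 2 ≤ k := by omega
  have hm2 : 2 ≤ m := by omega
  have hKm : K ≤ m := by omega
  set S : Finset (Finset (Fin m)) := Finset.univ.powersetCard K with hS
  -- each K-set contains at most K of the X i
  have hterm : ∀ Y ∈ S, (Finset.univ.filter (fun i => X i ⊆ Y)).card ≤ K := by
    intro Y hY
    by_contra h
    push_neg at h
    obtain ⟨J, hJsub, hJcard⟩ := Finset.exists_subset_card_eq (s := Finset.univ.filter (fun i => X i ⊆ Y)) (n := k) (by omega)
    have hJ1 : 1 ≤ J.card := by omega
    have hJk : J.card ≤ k := by omega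
    have := hHall J hJ1 hJk
    have hsub : J.biUnion X ⊆ Y := by
      intro x hx
      simp only [mem_biUnion] at hx
      obtain ⟨i, hi, hxi⟩ := hx
      exact (Finset.mem_filter.1 (hJsub hi)).2 hxi
    have hYcard : Y.card = K := (mem_powersetCard.1 hY).2
    have := Finset.card_le_card hsub
    omega
  -- double counting
  have hdc : ∑ Y ∈ S, (Finset.univ.filter (fun i => X i ⊆ Y)).card
      = n * (m - c).choose (K - c) := by
    have : ∑ Y ∈ S, (Finset.univ.filter (fun i => X i ⊆ Y)).card
        = ∑ i : Fin n, (S.filter (fun Y => X i ⊆ Y)).card := by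
      simp only [Finset.card_filter]
      rw [Finset.sum_comm]
    rw [this]
    have : ∀ i : Fin n, (S.filter (fun Y => X i ⊆ Y)).card = (m - c).choose (K - c) := by
      intro i
      have := count_supersets_s3 (X i) K (by rw [huni]; exact hck)
      rw [huni, Fintype.card_fin] at this
      exact this
    simp [this, mul_comm]
  have hsum : n * (m - c).choose (K - c) ≤ K * m.choose K := by
    rw [← hdc]
    calc ∑ Y ∈ S, (Finset.univ.filter (fun i => X i ⊆ Y)).card
        ≤ ∑ Y ∈ S, K := Finset.sum_le_sum hterm
      _ = S.card * K := by rw [Finset.sum_const, smul_eq_mul]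
      _ = m.choose K * K := by rw [hS, card_powersetCard, card_univ, Fintype.card_fin]
      _ = K * m.choose K := mul_comm _ _
  -- combine via choose identity
  have hid : m.choose K * K.choose c = m.choose c * (m - c).choose (K - c) :=
    Nat.choose_mul hck
  have hDpos : 0 < (m - c).choose (K - c) := Nat.choose_pos (by omega)
  have : n * K.choose c * (m - c).choose (K - c) ≤ K * m.choose c * (m - c).choose (K - c) := by
    calc n * K.choose c * (m - c).choose (K - c)
        = n * (m - c).choose (K - c) * K.choose c := by ring
      _ ≤ K * m.choose K * K.choose c := Nat.mul_le_mul_right _ hsum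
      _ = K * (m.choose K * K.choose c) := by ring
      _ = K * (m.choose c * (m - c).choose (K - c)) := by rw [hid]
      _ = K * m.choose c * (m - c).choose (K - c) := by ring
  exact Nat.le_of_mul_le_mul_right this hDpos
end

section
/- Let c, k, m, i be integers with 1 ≤ c < k ≤ m and 0 ≤ i ≤ k−1. Then, as rational numbers, C(m−i, k−1−i) / C(m−c, k−1−c) − 1 ≥ (m−k+1)(c−i)/(k−c), where C(a,b) denotes the binomial coefficient (note that c−i may be negative, in which case the right-hand side is negative). -/
/-- Upward step lemma: `C(n+d, r) ≥ C(n,r) * (1 + r*d/(n-r+1))`, multiplied out. -/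
lemma choose_ratio_up (n r : ℕ) (hr : 1 ≤ r) (hrn : r ≤ n) (d : ℕ) :
    (Nat.choose (n + d) r : ℚ) * ((n : ℚ) - r + 1)
      ≥ (Nat.choose n r : ℚ) * (((n : ℚ) - r + 1) + r * d) := by
  induction d with
  | zero => simp
  | succ d ih =>
    rw [show n + (d + 1) = n + d + 1 from by omega]
    have hid : (Nat.choose (n + d) r : ℚ) * ((n : ℚ) + d + 1)
        = (Nat.choose (n + d + 1) r : ℚ) * (((n : ℚ) + d + 1) - r) := by
      have h := congrArg (fun x : ℕ => (x : ℚ)) (Nat.choose_mul_succ_eq (n + d) r)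
      push_cast [Nat.cast_sub (by omega : r ≤ n + d + 1)] at h
      linarith [h]
    have hCn : (0 : ℚ) ≤ (Nat.choose n r : ℚ) := by positivity
    have hrQ : (r : ℚ) ≤ n := by exact_mod_cast hrn
    have hr1 : (1 : ℚ) ≤ (r : ℚ) := by exact_mod_cast hr
    have hd0 : (0 : ℚ) ≤ (d : ℚ) := by positivity
    have hsr : (0 : ℚ) < ((n : ℚ) + d + 1) - r := by linarith
    have hid2 : (Nat.choose (n + d) r : ℚ) * ((n : ℚ) + d + 1) * ((n : ℚ) - r + 1)
        = (Nat.choose (n + d + 1) r : ℚ) * (((n : ℚ) + d + 1) - r) * ((n : ℚ) - r + 1) := by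
      rw [hid]
    have ihs := mul_le_mul_of_nonneg_right ih (by linarith : (0:ℚ) ≤ (n : ℚ) + d + 1)
    have hint : (0:ℚ) ≤ (Nat.choose n r : ℚ) * (r : ℚ) * ((r : ℚ) * d - d) := by
      apply mul_nonneg (by positivity)
      nlinarith
    rw [ge_iff_le]
    apply le_of_mul_le_mul_right _ hsr
    push_cast
    linarith [hid2, ihs, hint]

/-- Downward step lemma: `C(n-d, r) ≥ C(n,r) * (1 - r*d/(n-r+1))`, multiplied out. -/
lemma choose_ratio_down (n r : ℕ) (hr : 1 ≤ r) (hrn : r ≤ n) (d : ℕ) (hd : d ≤ n) :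
    (Nat.choose (n - d) r : ℚ) * ((n : ℚ) - r + 1)
      ≥ (Nat.choose n r : ℚ) * (((n : ℚ) - r + 1) - r * d) := by
  induction d with
  | zero => simp
  | succ d ih =>
    have ih' := ih (by omega)
    have hCn : (0 : ℚ) ≤ (Nat.choose n r : ℚ) := by positivity
    have ha' : (0 : ℚ) ≤ (Nat.choose (n - (d + 1)) r : ℚ) := by positivity
    have hrQ : (r : ℚ) ≤ n := by exact_mod_cast hrn
    have hr1 : (1 : ℚ) ≤ (r : ℚ) := by exact_mod_cast hr
    have hd0 : (0 : ℚ) ≤ (d : ℚ) := by positivity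
    by_cases hB : ((n : ℚ) - r + 1) - r * ((d : ℚ) + 1) ≤ 0
    · have h1 : (0:ℚ) ≤ (Nat.choose (n - (d + 1)) r : ℚ) * ((n : ℚ) - r + 1) := by
        apply mul_nonneg ha'; linarith
      have h2 := mul_nonpos_of_nonneg_of_nonpos hCn hB
      push_cast
      linarith
    · push_neg at hB
      have hnat : r ≤ n - (d + 1) := by
        have h2 : ((d : ℚ) + 1) ≤ (r : ℚ) * (d + 1) := by nlinarith
        have h3 : (r:ℚ) ≤ (r:ℚ) * ((d:ℚ) + 1) := by nlinarith
        have h4 : (d : ℚ) + 1 + (r : ℚ) < (n : ℚ) + 1 := by linarith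
        have : d + 1 + r < n + 1 := by exact_mod_cast h4
        omega
      have hj : n - (d + 1) + 1 = n - d := by omega
      have hid := Nat.choose_mul_succ_eq (n - (d + 1)) r
      rw [hj] at hid
      have hcast : (Nat.choose (n - (d + 1)) r : ℚ) * ((n : ℚ) - d)
          = (Nat.choose (n - d) r : ℚ) * (((n : ℚ) - d) - r) := by
        have h := congrArg (fun x : ℕ => (x : ℚ)) hid
        push_cast [Nat.cast_sub (by omega : d ≤ n), Nat.cast_sub (by omega : r ≤ n - d)] at h
        linarith [h]
      have hjpos : (0 : ℚ) < (n : ℚ) - d := by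
        have : (d : ℚ) + 1 ≤ n := by exact_mod_cast (by omega : d + 1 ≤ n)
        linarith
      have hjr : (0 : ℚ) ≤ ((n : ℚ) - d) - r := by
        have : (r : ℚ) + d ≤ n := by exact_mod_cast (by omega : r + d ≤ n)
        linarith
      have hcast2 : (Nat.choose (n - (d + 1)) r : ℚ) * ((n : ℚ) - d) * ((n : ℚ) - r + 1)
          = (Nat.choose (n - d) r : ℚ) * (((n : ℚ) - d) - r) * ((n : ℚ) - r + 1) := by
        rw [hcast]
      have ihjr := mul_le_mul_of_nonneg_right ih' hjr
      have hint : (0:ℚ) ≤ (Nat.choose n r : ℚ) * (r : ℚ) * (((r : ℚ) - 1) * ((d:ℚ) + 1)) := by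
        apply mul_nonneg (by positivity)
        nlinarith
      rw [ge_iff_le]
      apply le_of_mul_le_mul_right _ hjpos
      push_cast
      linarith [hcast2, ihjr, hint]

/-- For integers `1 ≤ c < k ≤ m` and `0 ≤ i ≤ k-1`, as rational numbers,
`C(m-i, k-1-i)/C(m-c, k-1-c) - 1 ≥ (m-k+1)(c-i)/(k-c)`. -/
theorem choose_ratio_ineq (c k m i : ℕ) (hc : 1 ≤ c) (hck : c < k) (hkm : k ≤ m)
    (hik : i ≤ k - 1) :
    (Nat.choose (m - i) (k - 1 - i) : ℚ) / (Nat.choose (m - c) (k - 1 - c) : ℚ) - 1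
      ≥ ((m : ℚ) - k + 1) * ((c : ℚ) - i) / ((k : ℚ) - c) := by
  set r : ℕ := m + 1 - k with hrdef
  set n : ℕ := m - c with hndef
  have hr : 1 ≤ r := by omega
  have hrn : r ≤ n := by omega
  have hrQ : (r : ℚ) = (m : ℚ) - k + 1 := by
    rw [hrdef]; push_cast [Nat.cast_sub (by omega : k ≤ m + 1)]; ring
  have hnQ : (n : ℚ) = (m : ℚ) - c := by
    rw [hndef]; push_cast [Nat.cast_sub (by omega : c ≤ m)]; ring
  have hnr1 : (n : ℚ) - r + 1 = (k : ℚ) - c := by rw [hrQ, hnQ]; ring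
  have hkc : (0 : ℚ) < (k : ℚ) - c := by
    have : (c : ℚ) < k := by exact_mod_cast hck
    linarith
  have hsym1 : Nat.choose (m - i) (k - 1 - i) = Nat.choose (m - i) r := by
    have h1 : k - 1 - i = (m - i) - r := by omega
    rw [h1, Nat.choose_symm (by omega : r ≤ m - i)]
  have hsym2 : Nat.choose (m - c) (k - 1 - c) = Nat.choose n r := by
    have h1 : k - 1 - c = n - r := by omega
    rw [h1, Nat.choose_symm hrn]
  rw [hsym1, hsym2]
  have hYpos : (0 : ℚ) < (Nat.choose n r : ℚ) := by
    exact_mod_cast Nat.choose_pos hrn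
  have key : (Nat.choose (m - i) r : ℚ) * ((k : ℚ) - c)
      ≥ (Nat.choose n r : ℚ) * (((k : ℚ) - c) + ((m : ℚ) - k + 1) * ((c : ℚ) - i)) := by
    rcases le_or_gt i c with hic | hic
    · have hd : n + (c - i) = m - i := by omega
      have h := choose_ratio_up n r hr hrn (c - i)
      rw [hd, hnr1, hrQ] at h
      have hdQ : ((c - i : ℕ) : ℚ) = (c : ℚ) - i := by
        push_cast [Nat.cast_sub hic]; ring
      rw [hdQ] at h
      linarith [h]
    · have hd : n - (i - c) = m - i := by omega
      have h := choose_ratio_down n r hr hrn (i - c) (by omega)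
      rw [hd, hnr1, hrQ] at h
      have hdQ : ((i - c : ℕ) : ℚ) = (i : ℚ) - c := by
        push_cast [Nat.cast_sub (le_of_lt hic)]; ring
      rw [hdQ] at h
      calc (Nat.choose (m - i) r : ℚ) * ((k : ℚ) - c)
          ≥ (Nat.choose n r : ℚ) * (((k : ℚ) - c) - ((m : ℚ) - k + 1) * ((i : ℚ) - c)) := h
        _ = (Nat.choose n r : ℚ) * (((k : ℚ) - c) + ((m : ℚ) - k + 1) * ((c : ℚ) - i)) := by ring
  rw [ge_iff_le, div_le_iff₀ hkc, sub_mul, div_mul_eq_mul_div, one_mul, le_sub_iff_add_le,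
    le_div_iff₀ hYpos]
  nlinarith [key]
end

section
/- Let (S,X) be an (n,N,k,m)-CBC with m ≥ k ≥ 2, in which every member X_i has cardinality at most k, let 1 ≤ c ≤ k−1, let A_k be the number of indices i with |X_i| = k, and set U_{m,k,c} = (k−1)·C(m,c)/C(k−1,c) (a rational number). Then N ≥ n·c − (k−c)(U_{m,k,c} − n)/(m−k+1) + (k−c)(m−k)·A_k/(m−k+1), as an inequality between rational numbers. -/
open Finset

lemma cbc_choose_mono_succ (n r : ℕ) : n.choose r ≤ (n+1).choose (r+1) := by
  rw [Nat.choose_succ_succ]; exact Nat.le_add_right _ _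

lemma cbc_choose_mono_add (n r j : ℕ) : n.choose r ≤ (n+j).choose (r+j) := by
  induction j with
  | zero => exact le_refl _
  | succ j ih =>
      calc n.choose r ≤ (n+j).choose (r+j) := ih
        _ ≤ (n+j+1).choose (r+j+1) := cbc_choose_mono_succ _ _

lemma cbc_lemA (a b : ℕ) (hba : b < a) (j : ℕ) :
    a.choose b * ((b+1) + (a-b)*j) ≤ (b+1) * (a+j).choose (b+j) := by
  induction j with
  | zero => simp [Nat.mul_comm]
  | succ j ih =>
      have h1 : (a+(j+1)).choose (b+(j+1)) = (a+j).choose (b+j) + (a+j).choose (b+j+1) := by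
        show (a+j+1).choose (b+j+1) = _
        rw [Nat.choose_succ_succ]
      have h2 : a.choose (b+1) ≤ (a+j).choose (b+j+1) := by
        have := cbc_choose_mono_add a (b+1) j
        have e : b+1+j = b+j+1 := by omega
        rwa [e] at this
      have h3 : a.choose (b+1) * (b+1) = a.choose b * (a-b) := Nat.choose_succ_right_eq a b
      calc a.choose b * ((b+1) + (a-b)*(j+1))
          = a.choose b * ((b+1) + (a-b)*j) + a.choose b * (a-b) := by ring
        _ ≤ (b+1) * (a+j).choose (b+j) + a.choose (b+1) * (b+1) := by
            exact Nat.add_le_add ih (le_of_eq h3.symm)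
        _ ≤ (b+1) * (a+j).choose (b+j) + (b+1) * (a+j).choose (b+j+1) := by
            have : a.choose (b+1) * (b+1) ≤ (b+1) * (a+j).choose (b+j+1) := by
              rw [Nat.mul_comm]; exact Nat.mul_le_mul_left _ h2
            exact Nat.add_le_add_left this _
        _ = (b+1) * (a+(j+1)).choose (b+(j+1)) := by rw [h1, Nat.mul_add]

lemma cbc_lemB (a b : ℕ) (hba : b < a) (j : ℕ) (hj : j ≤ b) :
    a.choose b * (b+1) ≤ (b+1) * (a-j).choose (b-j) + a.choose b * ((a-b)*j) := by
  induction j with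
  | zero => simp [Nat.mul_comm]
  | succ j ih =>
      have hj' : j ≤ b := by omega
      have ih' := ih hj'
      have e1 : a - j = (a - (j+1)) + 1 := by omega
      have e2 : b - j = (b - (j+1)) + 1 := by omega
      have epas : (a-j).choose (b-j)
          = (a-(j+1)).choose (b-(j+1)) + (a-(j+1)).choose (b-(j+1)+1) := by
        rw [e1, e2, Nat.choose_succ_succ]
      have hb1 : (a-(j+1)).choose (b-(j+1)+1) ≤ (a-1).choose b := by
        have := cbc_choose_mono_add (a-(j+1)) (b-(j+1)+1) j
        have e3 : a-(j+1)+j = a-1 := by omega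
        have e4 : b-(j+1)+1+j = b := by omega
        rwa [e3, e4] at this
      have hb3 : a * (a-1).choose b = a.choose b * (a-b) := by
        have h := Nat.add_one_mul_choose_eq (a-1) b
        have e : a - 1 + 1 = a := by omega
        rw [e] at h
        rw [h, Nat.choose_succ_right_eq]
      have hb2 : (b+1) * (a-(j+1)).choose (b-(j+1)+1) ≤ a.choose b * (a-b) := by
        calc (b+1) * (a-(j+1)).choose (b-(j+1)+1) ≤ (b+1) * (a-1).choose b :=
              Nat.mul_le_mul_left _ hb1
          _ ≤ a * (a-1).choose b := Nat.mul_le_mul_right _ (by omega)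
          _ = a.choose b * (a-b) := hb3
      rw [epas] at ih'
      have expand : (b+1) * ((a-(j+1)).choose (b-(j+1)) + (a-(j+1)).choose (b-(j+1)+1))
          = (b+1) * (a-(j+1)).choose (b-(j+1)) + (b+1) * (a-(j+1)).choose (b-(j+1)+1) := by
        ring
      have expand2 : a.choose b * ((a-b)*(j+1))
          = a.choose b * ((a-b)*j) + a.choose b * (a-b) := by ring
      rw [expand] at ih'
      rw [expand2]
      linarith [ih', hb2]

lemma cbc_pointwise (m k c d : ℕ) (hk : 2 ≤ k) (hkm : k ≤ m) (hc1 : 1 ≤ c)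
    (hc2 : c ≤ k-1) (hd : d ≤ k-1) :
    (m-c).choose (k-1-c) * ((m-k+1)*c + (k-c)) ≤
      (k-c) * (m-d).choose (k-1-d) + (m-c).choose (k-1-c) * ((m-k+1)*d) := by
  have hba : k-1-c < m-c := by omega
  have hbk : k-1-c+1 = k - c := by omega
  have hab : (m-c) - (k-1-c) = m - k + 1 := by omega
  rw [← hbk, ← hab]
  rcases le_or_gt d c with h | h
  · have key := cbc_lemA (m-c) (k-1-c) hba (c-d)
    have e1 : m-c+(c-d) = m-d := by omega
    have e2 : k-1-c+(c-d) = k-1-d := by omega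
    rw [e1, e2] at key
    obtain ⟨j, rfl⟩ : ∃ j, c = d + j := ⟨c - d, by omega⟩
    have e3 : d + j - d = j := by omega
    rw [e3] at key
    calc (m-(d+j)).choose (k-1-(d+j)) * (((m-(d+j))-(k-1-(d+j)))*(d+j) + (k-1-(d+j)+1))
        = (m-(d+j)).choose (k-1-(d+j)) * ((k-1-(d+j)+1) + ((m-(d+j))-(k-1-(d+j)))*j)
          + (m-(d+j)).choose (k-1-(d+j)) * (((m-(d+j))-(k-1-(d+j)))*d) := by ring
      _ ≤ (k-1-(d+j)+1) * (m-d).choose (k-1-d)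
          + (m-(d+j)).choose (k-1-(d+j)) * (((m-(d+j))-(k-1-(d+j)))*d) :=
          Nat.add_le_add_right key _
  · have key := cbc_lemB (m-c) (k-1-c) hba (d-c) (by omega)
    have e1 : m-c-(d-c) = m-d := by omega
    have e2 : k-1-c-(d-c) = k-1-d := by omega
    rw [e1, e2] at key
    obtain ⟨j, rfl⟩ : ∃ j, d = c + j := ⟨d - c, by omega⟩
    have e3 : c + j - c = j := by omega
    rw [e3] at key
    calc (m-c).choose (k-1-c) * (((m-c)-(k-1-c))*c + (k-1-c+1))
        = (m-c).choose (k-1-c) * (k-1-c+1) + (m-c).choose (k-1-c) * (((m-c)-(k-1-c))*c) := by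
          ring
      _ ≤ ((k-1-c+1) * (m-(c+j)).choose (k-1-(c+j)) + (m-c).choose (k-1-c) * (((m-c)-(k-1-c))*j))
          + (m-c).choose (k-1-c) * (((m-c)-(k-1-c))*c) := Nat.add_le_add_right key _
      _ = (k-1-c+1) * (m-(c+j)).choose (k-1-(c+j))
          + (m-c).choose (k-1-c) * (((m-c)-(k-1-c))*(c+j)) := by ring


lemma cbc_card_supersets {m : ℕ} (r : ℕ) (T : Finset (Fin m)) (hr : T.card ≤ r) :
    ((Finset.powersetCard r (univ : Finset (Fin m))).filter (fun W => T ⊆ W)).card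
      = (m - T.card).choose (r - T.card) := by
  have h : ((Finset.powersetCard r (univ : Finset (Fin m))).filter (fun W => T ⊆ W)).card
      = (Finset.powersetCard (r - T.card) (univ \ T)).card := by
    apply Finset.card_bij' (fun W _ => W \ T) (fun V _ => V ∪ T)
    · intro W hW
      simp only [mem_filter, Finset.mem_powersetCard_univ] at hW
      rw [Finset.mem_powersetCard]
      constructor
      · intro x hx
        simp only [Finset.mem_sdiff] at hx ⊢
        exact ⟨Finset.mem_univ x, hx.2⟩
      · rw [Finset.card_sdiff_of_subset hW.2, hW.1]
    · intro V hV
      rw [Finset.mem_powersetCard] at hV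
      have hdisj : Disjoint V T := by
        intro s hsV hsT
        intro x hx
        have := hV.1 (hsV hx)
        simp only [Finset.mem_sdiff] at this
        exact absurd (hsT hx) this.2
      simp only [mem_filter, Finset.mem_powersetCard_univ]
      constructor
      · rw [Finset.card_union_of_disjoint hdisj, hV.2]
        omega
      · exact Finset.subset_union_right
    · intro W hW
      simp only [mem_filter] at hW
      exact Finset.sdiff_union_of_subset hW.2
    · intro V hV
      rw [Finset.mem_powersetCard] at hV
      have hdisj : Disjoint V T := by
        intro s hsV hsT
        intro x hx
        have := hV.1 (hsV hx)
        simp only [Finset.mem_sdiff] at this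
        exact absurd (hsT hx) this.2
      rw [Finset.union_sdiff_distrib, Finset.sdiff_self, Finset.union_empty,
        Finset.sdiff_eq_self_of_disjoint hdisj]
  rw [h, Finset.card_powersetCard, Finset.card_sdiff_of_subset (Finset.subset_univ T),
    Finset.card_univ, Fintype.card_fin]


lemma cbc_rat_final (c kc k1 Dm1 B Cmc s aC iC NQ nQ : ℚ)
    (hB : 0 < B) (hD : 0 < Dm1 + 1)
    (hN : NQ = s + (kc + c) * aC) (hn : nQ = aC + iC)
    (key : B * ((Dm1 + 1) * c + kc) * iC ≤ kc * (k1 * Cmc) + B * ((Dm1 + 1) * s)) :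
    NQ ≥ nQ * c - kc * (k1 * Cmc / B - nQ) / (Dm1 + 1) + kc * Dm1 * aC / (Dm1 + 1) := by
  rw [ge_iff_le, ← sub_nonneg]
  have heq : NQ - (nQ * c - kc * (k1 * Cmc / B - nQ) / (Dm1 + 1) + kc * Dm1 * aC / (Dm1 + 1))
      = ((kc * (k1 * Cmc) + B * ((Dm1 + 1) * s)) - B * ((Dm1 + 1) * c + kc) * iC)
        / (B * (Dm1 + 1)) := by
    rw [hN, hn]
    field_simp
    ring
  rw [heq]
  apply div_nonneg (by linarith) (by positivity)

/-- Lower bound on the total storage `N` of an (n,N,k,m)-CBC whose members all have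
cardinality at most `k`: for `1 ≤ c ≤ k-1`,
`N ≥ n·c - (k-c)(U_{m,k,c} - n)/(m-k+1) + (k-c)(m-k)·A_k/(m-k+1)`,
where `U_{m,k,c} = (k-1)·C(m,c)/C(k-1,c)` and `A_k` is the number of members of
cardinality exactly `k`. -/
theorem cbc_storage_lower_bound (n N k m c : ℕ) (hk : 2 ≤ k) (hkm : k ≤ m)
    (hc1 : 1 ≤ c) (hc2 : c ≤ k - 1)
    (X : Fin n → Finset (Fin m))
    (hN : ∑ t, (X t).card = N)
    (hcard : ∀ t, (X t).card ≤ k)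
    (hHall : ∀ J : Finset (Fin n), 1 ≤ J.card → J.card ≤ k →
        J.card ≤ (J.biUnion X).card) :
    (N : ℚ) ≥ (n : ℚ) * c
      - ((k : ℚ) - c) * (((k : ℚ) - 1) * (Nat.choose m c : ℚ) / (Nat.choose (k - 1) c : ℚ)
          - n) / ((m : ℚ) - k + 1)
      + ((k : ℚ) - c) * ((m : ℚ) - k)
          * ((Finset.univ.filter (fun t => (X t).card = k)).card : ℚ)
          / ((m : ℚ) - k + 1) := by
  classical
  set A : Finset (Fin n) := Finset.univ.filter (fun t => (X t).card = k) with hA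
  set I : Finset (Fin n) := Finset.univ.filter (fun t => ¬ (X t).card = k) with hI
  have hnA : A.card + I.card = n := by
    rw [hA, hI, Finset.card_filter_add_card_filter_not, Finset.card_univ,
      Fintype.card_fin]
  have hdI : ∀ t ∈ I, (X t).card ≤ k - 1 := by
    intro t ht
    rw [hI, Finset.mem_filter] at ht
    have := hcard t
    omega
  set S : ℕ := ∑ t ∈ I, (X t).card with hS
  have hNsplit : k * A.card + S = N := by
    have h1 : (∑ t ∈ A, (X t).card) + (∑ t ∈ I, (X t).card) = N := by
      rw [← hN, hA, hI]
      exact Finset.sum_filter_add_sum_filter_not _ _ _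
    have h2 : ∑ t ∈ A, (X t).card = k * A.card := by
      calc ∑ t ∈ A, (X t).card = ∑ _t ∈ A, k :=
            Finset.sum_congr rfl (fun t ht => by
              rw [hA, Finset.mem_filter] at ht
              exact ht.2)
        _ = k * A.card := by rw [Finset.sum_const, smul_eq_mul, mul_comm]
    rw [← h1, h2, hS]
  -- Hall: each (k-1)-set contains at most k-1 members
  have hWbound : ∀ W ∈ Finset.powersetCard (k-1) (Finset.univ : Finset (Fin m)),
      (I.filter (fun t => X t ⊆ W)).card ≤ k - 1 := by
    intro W hWmem
    rw [Finset.mem_powersetCard_univ] at hWmem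
    by_contra hlt
    have hk' : k ≤ (I.filter (fun t => X t ⊆ W)).card := by omega
    obtain ⟨J, hJsub, hJcard⟩ := Finset.exists_subset_card_eq hk'
    have h1 := hHall J (by omega) (by omega)
    have hsub : J.biUnion X ⊆ W := by
      intro x hx
      rw [Finset.mem_biUnion] at hx
      obtain ⟨t, htJ, hxt⟩ := hx
      have h := hJsub htJ
      rw [Finset.mem_filter] at h
      exact h.2 hxt
    have h2 := Finset.card_le_card hsub
    rw [hWmem] at h2
    rw [hJcard] at h1
    omega
  -- double counting
  have hcount : ∑ t ∈ I, (m - (X t).card).choose (k-1-(X t).card)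
      ≤ (k-1) * m.choose (k-1) := by
    calc ∑ t ∈ I, (m - (X t).card).choose (k-1-(X t).card)
        = ∑ t ∈ I, ((Finset.powersetCard (k-1) (Finset.univ : Finset (Fin m))).filter
            (fun W => X t ⊆ W)).card :=
          Finset.sum_congr rfl (fun t ht => (cbc_card_supersets (k-1) (X t) (hdI t ht)).symm)
      _ = ∑ t ∈ I, ∑ W ∈ Finset.powersetCard (k-1) (Finset.univ : Finset (Fin m)),
            (if X t ⊆ W then 1 else 0) := by
          refine Finset.sum_congr rfl (fun t _ => ?_)
          rw [Finset.card_filter]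
      _ = ∑ W ∈ Finset.powersetCard (k-1) (Finset.univ : Finset (Fin m)), ∑ t ∈ I,
            (if X t ⊆ W then 1 else 0) := Finset.sum_comm
      _ = ∑ W ∈ Finset.powersetCard (k-1) (Finset.univ : Finset (Fin m)),
            (I.filter (fun t => X t ⊆ W)).card := by
          refine Finset.sum_congr rfl (fun W _ => ?_)
          rw [Finset.card_filter]
      _ ≤ ∑ _W ∈ Finset.powersetCard (k-1) (Finset.univ : Finset (Fin m)), (k-1) :=
          Finset.sum_le_sum hWbound
      _ = (k-1) * m.choose (k-1) := by
          rw [Finset.sum_const, smul_eq_mul, Finset.card_powersetCard, Finset.card_univ,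
            Fintype.card_fin, mul_comm]
  -- master inequality
  have hM : (m-c).choose (k-1-c) * ((m-k+1)*c + (k-c)) * I.card
      ≤ (k-c) * ((k-1) * m.choose (k-1)) + (m-c).choose (k-1-c) * ((m-k+1) * S) := by
    calc (m-c).choose (k-1-c) * ((m-k+1)*c + (k-c)) * I.card
        = ∑ _t ∈ I, (m-c).choose (k-1-c) * ((m-k+1)*c + (k-c)) := by
          rw [Finset.sum_const, smul_eq_mul, mul_comm]
      _ ≤ ∑ t ∈ I, ((k-c) * (m-(X t).card).choose (k-1-(X t).card)
            + (m-c).choose (k-1-c) * ((m-k+1)*(X t).card)) :=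
          Finset.sum_le_sum (fun t ht =>
            cbc_pointwise m k c ((X t).card) hk hkm hc1 hc2 (hdI t ht))
      _ = (k-c) * (∑ t ∈ I, (m-(X t).card).choose (k-1-(X t).card))
            + (m-c).choose (k-1-c) * ((m-k+1) * S) := by
          rw [Finset.sum_add_distrib, ← Finset.mul_sum, ← Finset.mul_sum, ← Finset.mul_sum, hS]
      _ ≤ (k-c) * ((k-1) * m.choose (k-1)) + (m-c).choose (k-1-c) * ((m-k+1) * S) := by
          exact Nat.add_le_add_right (Nat.mul_le_mul_left _ hcount) _
  -- cancel the factor (m-c).choose (k-1-c)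
  have hQpos : 0 < (m-c).choose (k-1-c) := Nat.choose_pos (by omega)
  have hid : m.choose (k-1) * (k-1).choose c = m.choose c * (m-c).choose (k-1-c) :=
    Nat.choose_mul hc2
  have hM' : (k-1).choose c * ((m-k+1)*c + (k-c)) * I.card
      ≤ (k-c) * ((k-1) * m.choose c) + (k-1).choose c * ((m-k+1) * S) := by
    apply Nat.le_of_mul_le_mul_left ?_ hQpos
    calc (m-c).choose (k-1-c) * ((k-1).choose c * ((m-k+1)*c + (k-c)) * I.card)
        = (k-1).choose c * ((m-c).choose (k-1-c) * ((m-k+1)*c + (k-c)) * I.card) := by ring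
      _ ≤ (k-1).choose c * ((k-c) * ((k-1) * m.choose (k-1))
            + (m-c).choose (k-1-c) * ((m-k+1) * S)) := Nat.mul_le_mul_left _ hM
      _ = (k-c) * (k-1) * (m.choose (k-1) * (k-1).choose c)
            + (m-c).choose (k-1-c) * ((k-1).choose c * ((m-k+1) * S)) := by ring
      _ = (m-c).choose (k-1-c) * ((k-c) * ((k-1) * m.choose c)
            + (k-1).choose c * ((m-k+1) * S)) := by rw [hid]; ring
  -- final rational assembly
  have hck : c ≤ k := by omega
  have h1k : 1 ≤ k := by omega
  rw [show ((k:ℚ) - c) = ((k-c : ℕ) : ℚ) from (Nat.cast_sub hck).symm,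
    show ((k:ℚ) - 1) = ((k-1 : ℕ) : ℚ) from by
      rw [Nat.cast_sub h1k]; norm_num,
    show ((m:ℚ) - k) = ((m-k : ℕ) : ℚ) from (Nat.cast_sub hkm).symm]
  have hBpos : (0:ℚ) < ((k-1).choose c : ℚ) := by
    exact_mod_cast Nat.choose_pos hc2
  apply cbc_rat_final ((c:ℚ)) (((k-c:ℕ)):ℚ) (((k-1:ℕ)):ℚ) (((m-k:ℕ)):ℚ)
      (((k-1).choose c : ℕ):ℚ) ((m.choose c : ℕ):ℚ) ((S:ℕ):ℚ) _ ((I.card:ℕ):ℚ) _ _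
      hBpos (by positivity)
  · -- NQ = s + (kc + c) * aC
    have h2 : ((k:ℚ)) * A.card + S = N := by exact_mod_cast hNsplit
    have h3 : ((k-c:ℕ):ℚ) = (k:ℚ) - c := Nat.cast_sub hck
    rw [h3]
    linear_combination -h2
  · -- nQ = aC + iC
    have h2 : ((A.card:ℚ)) + I.card = n := by exact_mod_cast hnA
    linarith
  · -- key
    exact_mod_cast hM'
end

section
/- Let m ≥ k ≥ 2 be integers, let 1 ≤ n ≤ (k−1)·C(m, k−1), and let c be the least integer with 1 ≤ c ≤ k−1 such that n ≤ U_{m,k,c}. Then every (n,N,k,m)-CBC satisfies N ≥ n·c − ⌊(k−c)(U_{m,k,c} − n)/(m−k+1)⌋; in particular N(n,k,m) ≥ n·c − ⌊(k−c)(U_{m,k,c} − n)/(m−k+1)⌋, where the floor is taken of the rational number (k−c)(U_{m,k,c} − n)/(m−k+1). -/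
/-- `batchU m k c` is the rational number `U_{m,k,c} = (k-1)·C(m,c)/C(k-1,c)`. -/
def batchU (m k c : ℕ) : ℚ :=
  ((k : ℚ) - 1) * (Nat.choose m c : ℚ) / (Nat.choose (k - 1) c : ℚ)


namespace CBCAux

/-- recurrence: `(m-s) * F(s+1) = (d-s) * F(s)`. -/
lemma F_rec (m d s : ℕ) (hsd : s + 1 ≤ d) (hdm : d ≤ m) :
    (m - s) * (m - (s+1)).choose (d - (s+1)) = (d - s) * (m - s).choose (d - s) := by
  have h1 : m - s = (m - (s+1)) + 1 := by omega
  have h2 : d - s = (d - (s+1)) + 1 := by omega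
  rw [h1, h2]
  have := Nat.add_one_mul_choose_eq (m - (s+1)) (d - (s+1))
  simpa [Nat.succ_eq_add_one, mul_comm] using this

lemma claimG (m d c : ℕ) (hdm : d + 1 ≤ m) (hcd : c ≤ d) :
    ∀ j s, c - 1 - s = j → 1 ≤ s → s ≤ c - 1 →
      (m - s) * (m - c).choose (d - c) ≤ (d + 1 - c) * (m - s).choose (d - s) := by
  intro j
  induction j with
  | zero =>
      intro s hj hs1 hs2
      have hsc : s = c - 1 := by omega
      subst hsc
      have hrec := F_rec m d (c-1) (by omega) (by omega)
      have h1 : c - 1 + 1 = c := by omega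
      have h2 : d - (c-1) = d + 1 - c := by omega
      have h3 : m - (c-1) = m - c + 1 := by omega
      rw [h1] at hrec
      exact le_of_eq (by rw [hrec, h2])
  | succ j ih =>
      intro s hj hs1 hs2
      have ihs := ih (s+1) (by omega) (by omega) (by omega)
      -- (m-(s+1)) * F c ≤ (d+1-c) * F (s+1)
      have hrec := F_rec m d s (by omega) (by omega)
      -- (m-s) * F(s+1) = (d-s) * F s
      have key : (d - s) * ((m - s) * (m - c).choose (d - c))
          ≤ (d - s) * ((d + 1 - c) * (m - s).choose (d - s)) := by
        calc (d - s) * ((m - s) * (m - c).choose (d - c))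
            ≤ (m - (s+1)) * ((m - s) * (m - c).choose (d - c)) := by
              apply Nat.mul_le_mul_right; omega
          _ = (m - s) * ((m - (s+1)) * (m - c).choose (d - c)) := by ring
          _ ≤ (m - s) * ((d + 1 - c) * (m - (s+1)).choose (d - (s+1))) :=
              Nat.mul_le_mul_left _ ihs
          _ = (d + 1 - c) * ((m - s) * (m - (s+1)).choose (d - (s+1))) := by ring
          _ = (d + 1 - c) * ((d - s) * (m - s).choose (d - s)) := by rw [hrec]
          _ = (d - s) * ((d + 1 - c) * (m - s).choose (d - s)) := by ring
      exact Nat.le_of_mul_le_mul_left key (by omega)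

lemma claimH (m d c : ℕ) (hdm : d + 1 ≤ m) (hcd : c ≤ d) (hc1 : 1 ≤ c) :
    ∀ s, c ≤ s → s ≤ d →
      (d + 1 - c) * (m - s).choose (d - s) ≤ (m - s) * (m - c).choose (d - c) := by
  intro s
  induction s with
  | zero => intro h1 h2; omega
  | succ s ih =>
      intro h1 h2
      rcases Nat.eq_or_lt_of_le h1 with heq | hlt
      · -- s+1 = c
        have : m - (s+1) = m - c ∧ d - (s+1) = d - c := by omega
        rw [this.1, this.2]
        apply Nat.mul_le_mul_right; omega
      · have hcs : c ≤ s := by omega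
        have ihs := ih hcs (by omega)
        have hrec := F_rec m d s (by omega) (by omega)
        have key : (m - s) * ((d + 1 - c) * (m - (s+1)).choose (d - (s+1)))
            ≤ (m - s) * ((m - (s+1)) * (m - c).choose (d - c)) := by
          calc (m - s) * ((d + 1 - c) * (m - (s+1)).choose (d - (s+1)))
              = (d + 1 - c) * ((m - s) * (m - (s+1)).choose (d - (s+1))) := by ring
            _ = (d + 1 - c) * ((d - s) * (m - s).choose (d - s)) := by rw [hrec]
            _ = (d - s) * ((d + 1 - c) * (m - s).choose (d - s)) := by ring
            _ ≤ (d - s) * ((m - s) * (m - c).choose (d - c)) :=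
                Nat.mul_le_mul_left _ ihs
            _ ≤ (m - (s+1)) * ((m - s) * (m - c).choose (d - c)) := by
                apply Nat.mul_le_mul_right; omega
            _ = (m - s) * ((m - (s+1)) * (m - c).choose (d - c)) := by ring
        exact Nat.le_of_mul_le_mul_left key (by omega)

end CBCAux

namespace CBCAux

lemma stepDown (m d c s : ℕ) (hdm : d + 1 ≤ m) (hcd : c ≤ d) (hs1 : 1 ≤ s)
    (hs2 : s ≤ c - 1) :
    ((m - d : ℕ) : ℤ) * (m - c).choose (d - c) ≤
      ((d + 1 - c : ℕ) : ℤ) * ((m - s).choose (d - s) - (m - (s+1)).choose (d - (s+1))) := by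
  have hG := claimG m d c hdm hcd (c - 1 - s) s rfl hs1 hs2
  have hrec := F_rec m d s (by omega) (by omega)
  have hGz : ((m - s : ℕ) : ℤ) * ((m - c).choose (d - c) : ℤ) ≤ ((d + 1 - c : ℕ) : ℤ) * ((m - s).choose (d - s) : ℤ) := by exact_mod_cast hG
  have hrecz : ((m - s : ℕ) : ℤ) * ((m - (s+1)).choose (d - (s+1)) : ℤ) = ((d - s : ℕ) : ℤ) * ((m - s).choose (d - s) : ℤ) := by exact_mod_cast hrec
  set Fc : ℤ := ((m - c).choose (d - c) : ℤ)
  set Fs : ℤ := ((m - s).choose (d - s) : ℤ)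
  set Fs1 : ℤ := ((m - (s+1)).choose (d - (s+1)) : ℤ)
  have hAB : ((m - s : ℕ) : ℤ) = ((d - s : ℕ) : ℤ) + ((m - d : ℕ) : ℤ) := by omega
  have hApos : (0 : ℤ) < ((m - s : ℕ) : ℤ) := by omega
  have hD : (0 : ℤ) ≤ ((m - d : ℕ) : ℤ) := by positivity
  refine le_of_mul_le_mul_left ?_ hApos
  calc ((m - s : ℕ) : ℤ) * (((m - d : ℕ) : ℤ) * Fc)
      = ((m - d : ℕ) : ℤ) * (((m - s : ℕ) : ℤ) * Fc) := by ring
    _ ≤ ((m - d : ℕ) : ℤ) * (((d + 1 - c : ℕ) : ℤ) * Fs) :=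
        mul_le_mul_of_nonneg_left hGz hD
    _ = ((m - s : ℕ) : ℤ) * (((d + 1 - c : ℕ) : ℤ) * (Fs - Fs1)) := by
        have h : ((m - s : ℕ) : ℤ) * (((d + 1 - c : ℕ) : ℤ) * (Fs - Fs1))
            = ((d + 1 - c : ℕ) : ℤ) * (((m - s : ℕ) : ℤ) * Fs - ((m - s : ℕ) : ℤ) * Fs1) := by
          ring
        rw [h, hrecz, hAB]; ring

lemma stepUp (m d c s : ℕ) (hdm : d + 1 ≤ m) (hcd : c ≤ d) (hc1 : 1 ≤ c)
    (hs1 : c ≤ s) (hs2 : s + 1 ≤ d) :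
    ((d + 1 - c : ℕ) : ℤ) * ((m - s).choose (d - s) - (m - (s+1)).choose (d - (s+1))) ≤
      ((m - d : ℕ) : ℤ) * (m - c).choose (d - c) := by
  have hH := claimH m d c hdm hcd hc1 s hs1 (by omega)
  have hrec := F_rec m d s (by omega) (by omega)
  have hHz : ((d + 1 - c : ℕ) : ℤ) * ((m - s).choose (d - s) : ℤ) ≤ ((m - s : ℕ) : ℤ) * ((m - c).choose (d - c) : ℤ) := by exact_mod_cast hH
  have hrecz : ((m - s : ℕ) : ℤ) * ((m - (s+1)).choose (d - (s+1)) : ℤ) = ((d - s : ℕ) : ℤ) * ((m - s).choose (d - s) : ℤ) := by exact_mod_cast hrec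
  set Fc : ℤ := ((m - c).choose (d - c) : ℤ)
  set Fs : ℤ := ((m - s).choose (d - s) : ℤ)
  set Fs1 : ℤ := ((m - (s+1)).choose (d - (s+1)) : ℤ)
  have hAB : ((m - s : ℕ) : ℤ) = ((d - s : ℕ) : ℤ) + ((m - d : ℕ) : ℤ) := by omega
  have hApos : (0 : ℤ) < ((m - s : ℕ) : ℤ) := by omega
  have hD : (0 : ℤ) ≤ ((m - d : ℕ) : ℤ) := by positivity
  refine le_of_mul_le_mul_left ?_ hApos
  calc ((m - s : ℕ) : ℤ) * (((d + 1 - c : ℕ) : ℤ) * (Fs - Fs1))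
      = ((m - d : ℕ) : ℤ) * (((d + 1 - c : ℕ) : ℤ) * Fs) := by
        have h : ((m - s : ℕ) : ℤ) * (((d + 1 - c : ℕ) : ℤ) * (Fs - Fs1))
            = ((d + 1 - c : ℕ) : ℤ) * (((m - s : ℕ) : ℤ) * Fs - ((m - s : ℕ) : ℤ) * Fs1) := by
          ring
        rw [h, hrecz, hAB]; ring
    _ ≤ ((m - d : ℕ) : ℤ) * (((m - s : ℕ) : ℤ) * Fc) :=
        mul_le_mul_of_nonneg_left hHz hD
    _ = ((m - s : ℕ) : ℤ) * (((m - d : ℕ) : ℤ) * Fc) := by ring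

lemma keyIneq (m d c : ℕ) (hdm : d + 1 ≤ m) (hc1 : 1 ≤ c) (hcd : c ≤ d) :
    ∀ s, 1 ≤ s → s ≤ d →
      ((c : ℤ) - s) * ((m - d : ℕ) : ℤ) * (m - c).choose (d - c) ≤
        ((d + 1 - c : ℕ) : ℤ) * (((m - s).choose (d - s) : ℤ) - (m - c).choose (d - c)) := by
  have down : ∀ j s, c - s = j → 1 ≤ s → s ≤ c →
      ((c : ℤ) - s) * ((m - d : ℕ) : ℤ) * (m - c).choose (d - c) ≤
        ((d + 1 - c : ℕ) : ℤ) * (((m - s).choose (d - s) : ℤ) - (m - c).choose (d - c)) := by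
    intro j
    induction j with
    | zero =>
        intro s hj hs1 hs2
        have : s = c := by omega
        subst this
        simp
    | succ j ih =>
        intro s hj hs1 hs2
        have ihs := ih (s+1) (by omega) (by omega) (by omega)
        have hstep := stepDown m d c s hdm hcd hs1 (by omega)
        have hcast : ((c : ℤ) - s) = ((c : ℤ) - (s+1)) + 1 := by ring
        push_cast at ihs hstep ⊢
        nlinarith [ihs, hstep]
  have up : ∀ j s, s - c = j → s ≤ d → c ≤ s →
      ((c : ℤ) - s) * ((m - d : ℕ) : ℤ) * (m - c).choose (d - c) ≤
        ((d + 1 - c : ℕ) : ℤ) * (((m - s).choose (d - s) : ℤ) - (m - c).choose (d - c)) := by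
    intro j
    induction j with
    | zero =>
        intro s hj hs1 hs2
        have : s = c := by omega
        subst this
        simp
    | succ j ih =>
        intro s hj hs1 hs2
        have hsc : c ≤ s - 1 := by omega
        have hs1' : s - 1 + 1 = s := by omega
        have ihs := ih (s-1) (by omega) (by omega) hsc
        have hstep := stepUp m d c (s-1) hdm hcd hc1 hsc (by omega)
        rw [hs1'] at hstep
        have hcasts : ((s - 1 : ℕ) : ℤ) = (s : ℤ) - 1 := by omega
        rw [hcasts] at ihs
        nlinarith [ihs, hstep]
  intro s hs1 hs2
  rcases le_or_gt s c with h | h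
  · exact down (c - s) s rfl hs1 h
  · exact up (s - c) s rfl hs2 (le_of_lt h)

end CBCAux



lemma count_supersets_s6 (m d : ℕ) (hdm : d ≤ m) (A : Finset (Fin m)) (hA : A.card ≤ d) :
    (m - A.card).choose (d - A.card) ≤
      ((Finset.powersetCard d (Finset.univ : Finset (Fin m))).filter
        (fun Y => A ⊆ Y)).card := by
  classical
  have hcard : ((Finset.univ : Finset (Fin m)) \ A).card = m - A.card := by
    rw [Finset.card_sdiff_of_subset (Finset.subset_univ A)]
    simp
  have hsrc : (Finset.powersetCard (d - A.card) ((Finset.univ : Finset (Fin m)) \ A)).card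
      = (m - A.card).choose (d - A.card) := by
    rw [Finset.card_powersetCard, hcard]
  rw [← hsrc]
  apply Finset.card_le_card_of_injOn (fun B => A ∪ B)
  · intro B hB
    rw [Finset.mem_coe, Finset.mem_powersetCard] at hB
    obtain ⟨hBsub, hBcard⟩ := hB
    have hdisj : Disjoint A B := by
      rw [Finset.disjoint_right]
      intro x hxB
      exact (Finset.mem_sdiff.mp (hBsub hxB)).2
    rw [Finset.mem_coe, Finset.mem_filter, Finset.mem_powersetCard]
    refine ⟨⟨Finset.subset_univ _, ?_⟩, Finset.subset_union_left⟩
    rw [Finset.card_union_of_disjoint hdisj, hBcard]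
    omega
  · intro B hB B' hB' hEq
    simp only [Finset.mem_coe, Finset.mem_powersetCard] at hB hB'
    have hd : Disjoint A B := by
      rw [Finset.disjoint_right]; intro x hxB; exact (Finset.mem_sdiff.mp (hB.1 hxB)).2
    have hd' : Disjoint A B' := by
      rw [Finset.disjoint_right]; intro x hxB; exact (Finset.mem_sdiff.mp (hB'.1 hxB)).2
    have : (A ∪ B) \ A = (A ∪ B') \ A := by simp only at hEq; rw [hEq]
    rwa [Finset.union_sdiff_cancel_left hd, Finset.union_sdiff_cancel_left hd'] at this


/-- Lower bound on the total storage of any (n,N,k,m)-CBC: for `m ≥ k ≥ 2` and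
`1 ≤ n ≤ (k-1)·C(m,k-1)`, if `c` is least with `1 ≤ c ≤ k-1` and `n ≤ U_{m,k,c}`, then
`N ≥ n·c - ⌊(k-c)(U_{m,k,c} - n)/(m-k+1)⌋`. -/
theorem cbc_lower_bound (n k m c : ℕ) (hk : 2 ≤ k) (hkm : k ≤ m)
    (hn1 : 1 ≤ n) (hn2 : n ≤ (k - 1) * Nat.choose m (k - 1))
    (hc1 : 1 ≤ c) (hc2 : c ≤ k - 1) (hcU : (n : ℚ) ≤ batchU m k c)
    (hleast : ∀ c', 1 ≤ c' → c' < c → ¬ ((n : ℚ) ≤ batchU m k c'))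
    (N : ℕ) (X : Fin n → Finset (Fin m))
    (hN : ∑ t, (X t).card = N)
    (hHall : ∀ J : Finset (Fin n), 1 ≤ J.card → J.card ≤ k →
        J.card ≤ (J.biUnion X).card) :
    (N : ℤ) ≥ (n : ℤ) * c
      - ⌊((k : ℚ) - c) * (batchU m k c - n) / ((m : ℚ) - k + 1)⌋ := by
  classical
  set d := k - 1 with hd
  have hd1 : 1 ≤ d := by omega
  have hdm : d + 1 ≤ m := by omega
  have hcd : c ≤ d := hc2
  -- every set is nonempty
  have hpos : ∀ i : Fin n, 1 ≤ (X i).card := by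
    intro i
    have h := hHall {i} (by simp) (by simp; omega)
    simpa using h
  -- per (k-1)-set bound
  have hY : ∀ Y : Finset (Fin m), Y.card = d →
      (Finset.univ.filter (fun i : Fin n => X i ⊆ Y)).card ≤ d := by
    intro Y hYc
    by_contra hcon
    push_neg at hcon
    obtain ⟨J, hJsub, hJcard⟩ :=
      Finset.exists_subset_card_eq (s := Finset.univ.filter (fun i : Fin n => X i ⊆ Y)) (n := k) (by omega)
    have hk' := hHall J (by omega) (by omega)
    have hsub : J.biUnion X ⊆ Y := by
      intro x hx
      rw [Finset.mem_biUnion] at hx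
      obtain ⟨i, hiJ, hxi⟩ := hx
      exact (Finset.mem_filter.mp (hJsub hiJ)).2 hxi
    have hle := Finset.card_le_card hsub
    omega
  -- double counting
  set P := Finset.powersetCard d (Finset.univ : Finset (Fin m)) with hP
  have hPcard : P.card = m.choose d := by
    rw [hP, Finset.card_powersetCard, Finset.card_univ, Fintype.card_fin]
  have hDC : ∑ i : Fin n, (P.filter (fun Y => X i ⊆ Y)).card ≤ d * m.choose d := by
    have h1 : ∑ i : Fin n, (P.filter (fun Y => X i ⊆ Y)).card
        = ∑ Y ∈ P, (Finset.univ.filter (fun i : Fin n => X i ⊆ Y)).card := by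
      simp only [Finset.card_filter]
      exact Finset.sum_comm
    rw [h1]
    calc ∑ Y ∈ P, (Finset.univ.filter (fun i : Fin n => X i ⊆ Y)).card
        ≤ ∑ _Y ∈ P, d :=
          Finset.sum_le_sum (fun Y hYm => hY Y (Finset.mem_powersetCard.mp hYm).2)
      _ = P.card * d := by rw [Finset.sum_const, smul_eq_mul]
      _ = d * m.choose d := by rw [hPcard]; ring
  have hgsum : ∑ i : Fin n,
      (if (X i).card ≤ d then (m - (X i).card).choose (d - (X i).card) else 0)
      ≤ d * m.choose d := by
    refine le_trans (Finset.sum_le_sum fun i _ => ?_) hDC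
    split
    · exact count_supersets_s6 m d (by omega) (X i) ‹_›
    · exact Nat.zero_le _
  -- per-index integer inequality
  have hkey : ∀ i : Fin n,
      ((c : ℤ) - (X i).card) * ((m - d : ℕ) : ℤ) * ((m - c).choose (d - c) : ℤ)
      ≤ ((d + 1 - c : ℕ) : ℤ) *
        ((if (X i).card ≤ d then ((m - (X i).card).choose (d - (X i).card) : ℤ) else 0)
          - ((m - c).choose (d - c) : ℤ)) := by
    intro i
    by_cases hsd : (X i).card ≤ d
    · simpa [hsd] using CBCAux.keyIneq m d c hdm hc1 hcd (X i).card (hpos i) hsd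
    · rw [if_neg hsd]
      have hFc : (1 : ℤ) ≤ ((m - c).choose (d - c) : ℤ) := by
        exact_mod_cast Nat.choose_pos (show d - c ≤ m - c by omega)
      have hs : (d : ℤ) + 1 ≤ ((X i).card : ℤ) := by
        exact_mod_cast Nat.succ_le_of_lt (Nat.lt_of_not_le hsd)
      have hD : (1 : ℤ) ≤ ((m - d : ℕ) : ℤ) := by omega
      have hE : ((d + 1 - c : ℕ) : ℤ) = (d : ℤ) + 1 - c := by omega
      have h1 : ((d + 1 - c : ℕ) : ℤ) ≤ ((X i).card : ℤ) - c := by omega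
      have h2 : ((X i).card : ℤ) - c ≤ (((X i).card : ℤ) - c) * ((m - d : ℕ) : ℤ) :=
        le_mul_of_one_le_right (by omega) hD
      have h3 : ((d + 1 - c : ℕ) : ℤ) * ((m - c).choose (d - c) : ℤ)
          ≤ ((((X i).card : ℤ) - c) * ((m - d : ℕ) : ℤ)) * ((m - c).choose (d - c) : ℤ) :=
        mul_le_mul_of_nonneg_right (h1.trans h2) (by linarith)
      nlinarith [h3]
  -- sum the inequalities
  have hsum0 : ∑ i : Fin n, ((X i).card : ℤ) = (N : ℤ) := by
    rw [← Nat.cast_sum, hN]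
  have hsumc : ∑ i : Fin n, ((c : ℤ) - (X i).card) = (n : ℤ) * c - N := by
    rw [Finset.sum_sub_distrib, hsum0, Finset.sum_const, Finset.card_univ, Fintype.card_fin]
    simp [nsmul_eq_mul]
  have hmain : ((n : ℤ) * c - N) * ((m - d : ℕ) : ℤ) * ((m - c).choose (d - c) : ℤ)
      ≤ ((d + 1 - c : ℕ) : ℤ) *
        ((d : ℤ) * (m.choose d : ℤ) - (n : ℤ) * ((m - c).choose (d - c) : ℤ)) := by
    have hEnn : (0 : ℤ) ≤ ((d + 1 - c : ℕ) : ℤ) := by positivity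
    have hgZ : ∑ i : Fin n,
        (if (X i).card ≤ d then ((m - (X i).card).choose (d - (X i).card) : ℤ) else 0)
        ≤ (d : ℤ) * (m.choose d : ℤ) := by
      have := hgsum
      have hcast : ∑ i : Fin n,
          (if (X i).card ≤ d then ((m - (X i).card).choose (d - (X i).card) : ℤ) else 0)
          = ((∑ i : Fin n,
            (if (X i).card ≤ d then (m - (X i).card).choose (d - (X i).card) else 0) : ℕ) : ℤ) := by
        push_cast
        rfl
      rw [hcast]
      exact_mod_cast this
    calc ((n : ℤ) * c - N) * ((m - d : ℕ) : ℤ) * ((m - c).choose (d - c) : ℤ)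
        = ∑ i : Fin n,
            (((c : ℤ) - (X i).card) * ((m - d : ℕ) : ℤ) * ((m - c).choose (d - c) : ℤ)) := by
          rw [← Finset.sum_mul, ← Finset.sum_mul, hsumc]
      _ ≤ ∑ i : Fin n, ((d + 1 - c : ℕ) : ℤ) *
            ((if (X i).card ≤ d then ((m - (X i).card).choose (d - (X i).card) : ℤ) else 0)
              - ((m - c).choose (d - c) : ℤ)) :=
          Finset.sum_le_sum fun i _ => hkey i
      _ = ((d + 1 - c : ℕ) : ℤ) *
            ((∑ i : Fin n,
              (if (X i).card ≤ d then ((m - (X i).card).choose (d - (X i).card) : ℤ) else 0))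
              - (n : ℤ) * ((m - c).choose (d - c) : ℤ)) := by
          rw [← Finset.mul_sum, Finset.sum_sub_distrib, Finset.sum_const, Finset.card_univ,
            Fintype.card_fin]
          simp [nsmul_eq_mul]
      _ ≤ _ := by
          apply mul_le_mul_of_nonneg_left _ hEnn
          linarith [hgZ]
  -- rational endgame
  have hFcQ : (0 : ℚ) < ((m - c).choose (d - c) : ℚ) := by
    exact_mod_cast Nat.choose_pos (show d - c ≤ m - c by omega)
  have hkd : (k : ℚ) - 1 = (d : ℚ) := by
    have h : d + 1 = k := by omega
    rw [← h]; push_cast; ring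
  have hdc0 : (0 : ℚ) < (d.choose c : ℚ) := by exact_mod_cast Nat.choose_pos hcd
  have hUid : batchU m k c * ((m - c).choose (d - c) : ℚ) = (d : ℚ) * (m.choose d : ℚ) := by
    unfold batchU
    rw [← hd, hkd]
    rw [div_mul_eq_mul_div, div_eq_iff (ne_of_gt hdc0)]
    have hnat := Nat.choose_mul (n := m) hcd
    have hQ : (m.choose d : ℚ) * (d.choose c : ℚ)
        = (m.choose c : ℚ) * ((m - c).choose (d - c) : ℚ) := by exact_mod_cast hnat
    linear_combination (-(d : ℚ)) * hQ
  have hEQ : ((d + 1 - c : ℕ) : ℚ) = (k : ℚ) - c := by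
    have h : (d + 1 - c) + c = k := by omega
    have := congrArg (fun x : ℕ => (x : ℚ)) h
    push_cast at this
    linarith
  have hDQ : ((m - d : ℕ) : ℚ) = (m : ℚ) - k + 1 := by
    have h : (m - d) + d = m := by omega
    have h2 : d + 1 = k := by omega
    have := congrArg (fun x : ℕ => (x : ℚ)) h
    have := congrArg (fun x : ℕ => (x : ℚ)) h2
    push_cast at *
    linarith
  have hDQpos : (0 : ℚ) < (m : ℚ) - k + 1 := by
    rw [← hDQ]
    exact_mod_cast Nat.sub_pos_of_lt (by omega)
  have hfloor : (n : ℤ) * c - N ≤ ⌊((k : ℚ) - c) * (batchU m k c - n) / ((m : ℚ) - k + 1)⌋ := by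
    rw [Int.le_floor]
    have hcast : (((n : ℤ) * c - N : ℤ) : ℚ) = (n : ℚ) * c - N := by push_cast; ring
    rw [hcast, le_div_iff₀ hDQpos]
    -- goal: ((n:ℚ)*c - N) * ((m:ℚ)-k+1) ≤ ((k:ℚ)-c) * (batchU - n)
    have hmQ : ((n : ℚ) * c - N) * ((m - d : ℕ) : ℚ) * ((m - c).choose (d - c) : ℚ)
        ≤ ((d + 1 - c : ℕ) : ℚ) *
          ((d : ℚ) * (m.choose d : ℚ) - (n : ℚ) * ((m - c).choose (d - c) : ℚ)) := by
      exact_mod_cast hmain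
    have hrw : ((d + 1 - c : ℕ) : ℚ) *
          ((d : ℚ) * (m.choose d : ℚ) - (n : ℚ) * ((m - c).choose (d - c) : ℚ))
        = (((d + 1 - c : ℕ) : ℚ) * (batchU m k c - n)) * ((m - c).choose (d - c) : ℚ) := by
      rw [← hUid]; ring
    rw [hrw] at hmQ
    have h2 : ((n : ℚ) * c - N) * ((m - d : ℕ) : ℚ)
        ≤ ((d + 1 - c : ℕ) : ℚ) * (batchU m k c - n) :=
      le_of_mul_le_mul_right (by linarith [hmQ]) hFcQ
    rw [hEQ, hDQ] at h2
    linarith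
  linarith [hfloor]
end

section
/- Let m ≥ k ≥ 3 be integers and let n satisfy C(m, k−2) ≤ n ≤ (k−1)·C(m, k−1). Then there exists an (n,N,k,m)-CBC with N = n(k−1) − ⌊((k−1)·C(m,k−1) − n)/(m−k+1)⌋, in which every member of the collection is either a (k−1)-subset or a (k−2)-subset of S and the (k−2)-subsets occurring are pairwise distinct. -/
open Finset

lemma exists_distribution {α : Type*} [DecidableEq α] (s : Finset α) (cap : α → ℕ) :
    ∀ t : ℕ, t ≤ ∑ x ∈ s, cap x → ∃ a : α → ℕ, (∀ x, a x ≤ cap x) ∧ (∀ x ∉ s, a x = 0) ∧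
      ∑ x ∈ s, a x = t := by
  induction s using Finset.induction with
  | empty =>
    intro t ht
    simp only [Finset.sum_empty, Nat.le_zero] at ht
    exact ⟨fun _ => 0, fun _ => Nat.zero_le _, fun _ _ => rfl, by simp [ht]⟩
  | @insert x s hx ih =>
    intro t ht
    rw [Finset.sum_insert hx] at ht
    obtain ⟨a, ha1, ha2, ha3⟩ := ih (t - min t (cap x)) (by omega)
    refine ⟨fun y => if y = x then min t (cap x) else a y, ?_, ?_, ?_⟩
    · intro y
      by_cases h : y = x
      · subst h; simp only [if_pos rfl]; exact min_le_right _ _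
      · simpa [h] using ha1 y
    · intro y hy
      simp only [Finset.mem_insert, not_or] at hy
      simp [hy.1, ha2 y hy.2]
    · rw [Finset.sum_insert hx, if_pos rfl]
      rw [Finset.sum_congr rfl (fun y hy => if_neg (by rintro rfl; exact hx hy)), ha3]
      omega

lemma count_get {α : Type*} [DecidableEq α] (L : List α) (v : α) :
    (Finset.univ.filter fun i : Fin L.length => L.get i = v).card = L.count v := by
  induction L with
  | nil => simp
  | cons a l ih =>
    rw [Finset.card_filter]
    have key : (∑ i : Fin (l.length + 1), if (a :: l).get i = v then 1 else 0)
        = List.count v (a :: l) := by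
      rw [Fin.sum_univ_succ]
      have h2 : ∀ i : Fin l.length, ((a :: l).get i.succ = v) = (l.get i = v) := fun i => rfl
      simp only [List.get_cons_zero, h2]
      rw [← Finset.card_filter, ih, List.count_cons]
      rcases eq_or_ne a v with h | h <;> simp [h, add_comm]
    exact key

lemma sum_get {α M : Type*} [AddCommMonoid M] (L : List α) (f : α → M) :
    ∑ i : Fin L.length, f (L.get i) = (L.map f).sum := by
  induction L with
  | nil => simp
  | cons a l ih =>
    have key : (∑ i : Fin (l.length + 1), f ((a :: l).get i)) = ((a :: l).map f).sum := by
      rw [Fin.sum_univ_succ]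
      have h2 : ∀ i : Fin l.length, (a :: l).get i.succ = l.get i := fun i => rfl
      simp only [List.get_cons_zero, h2, ih, List.map_cons, List.sum_cons]
    exact key

lemma card_supersets {m : ℕ} (r : ℕ) (D : Finset (Fin m)) (hD : D.card = r) :
    ((Finset.powersetCard (r + 1) (Finset.univ : Finset (Fin m))).filter
      (fun U => D ⊆ U)).card = m - r := by
  have hcompl : (Dᶜ : Finset (Fin m)).card = m - r := by
    rw [Finset.card_compl, hD, Fintype.card_fin]
  rw [← hcompl]
  apply (Finset.card_bij (fun x _ => insert x D) ?_ ?_ ?_).symm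
  · intro x hx
    rw [Finset.mem_compl] at hx
    rw [Finset.mem_filter, Finset.mem_powersetCard]
    exact ⟨⟨Finset.subset_univ _, by rw [Finset.card_insert_of_notMem hx, hD]⟩,
      Finset.subset_insert _ _⟩
  · intro x hx y hy h
    rw [Finset.mem_compl] at hx hy
    have h' : insert x D = insert y D := h
    have : x ∈ insert y D := by rw [← h']; exact Finset.mem_insert_self x D
    rcases Finset.mem_insert.mp this with h' | h'
    · exact h'
    · exact absurd h' hx
  · intro U hU
    rw [Finset.mem_filter, Finset.mem_powersetCard] at hU
    obtain ⟨⟨-, hcard⟩, hsub⟩ := hU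
    have hne : (U \ D).Nonempty := by
      rw [← Finset.card_pos, Finset.card_sdiff_of_subset hsub, hcard, hD]; omega
    obtain ⟨x, hx⟩ := hne
    rw [Finset.mem_sdiff] at hx
    refine ⟨x, Finset.mem_compl.mpr hx.2, ?_⟩
    apply Finset.eq_of_subset_of_card_le
    · exact Finset.insert_subset hx.1 hsub
    · rw [hcard, Finset.card_insert_of_notMem hx.2, hD]

lemma union_card_lb {α : Type*} [DecidableEq α] {A B : Finset α} {r : ℕ}
    (hne : A ≠ B) (hA : r ≤ A.card) (hB : r ≤ B.card) : r + 1 ≤ (A ∪ B).card := by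
  by_cases hBA : B ⊆ A
  · have h1 : A ∪ B = A := Finset.union_eq_left.mpr hBA
    have h2 : B.card < A.card := Finset.card_lt_card ⟨hBA, fun h => hne (Finset.Subset.antisymm h hBA)⟩
    rw [h1]; omega
  · obtain ⟨x, hxB, hxA⟩ := Finset.not_subset.mp hBA
    have h1 : insert x A ⊆ A ∪ B :=
      Finset.insert_subset (Finset.mem_union_right _ hxB) Finset.subset_union_left
    have h2 := Finset.card_le_card h1
    rw [Finset.card_insert_of_notMem hxA] at h2
    omega

/-- Construction of optimal CBCs for `C(m,k-2) ≤ n ≤ (k-1)·C(m,k-1)` (with `m ≥ k ≥ 3`):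
there exists an (n,N,k,m)-CBC with `N = n(k-1) - ⌊((k-1)·C(m,k-1) - n)/(m-k+1)⌋` whose
members are (k-1)-subsets and pairwise distinct (k-2)-subsets. -/
theorem optimal_cbc_construction (n k m : ℕ) (hk : 3 ≤ k) (hkm : k ≤ m)
    (hn1 : Nat.choose m (k - 2) ≤ n) (hn2 : n ≤ (k - 1) * Nat.choose m (k - 1)) :
    ∃ X : Fin n → Finset (Fin m),
      (∀ J : Finset (Fin n), 1 ≤ J.card → J.card ≤ k →
          J.card ≤ (J.biUnion X).card) ∧
      ((∑ t, (X t).card : ℤ) = (n : ℤ) * (k - 1)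
          - ⌊((((k - 1) * Nat.choose m (k - 1) : ℕ) : ℚ) - n) / ((m : ℚ) - k + 1)⌋) ∧
      (∀ t, (X t).card = k - 1 ∨ (X t).card = k - 2) ∧
      (∀ t s, t ≠ s → (X t).card = k - 2 → (X s).card = k - 2 → X t ≠ X s) := by
  classical
  set A := (k - 1) * Nat.choose m (k - 1) with hA
  set b := m - k + 1 with hb
  set q := (A - n) / b with hqdef
  have hb1 : 1 ≤ b := by omega
  have hkk : k - 2 + 1 = k - 1 := by omega
  -- the identity (k-1) C(m,k-1) = C(m,k-2) (m-k+2)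
  have hACb : A = Nat.choose m (k - 2) * b + Nat.choose m (k - 2) := by
    have h := Nat.choose_succ_right_eq m (k - 2)
    rw [hkk] at h
    have h2 : m - (k - 2) = b + 1 := by omega
    rw [hA, mul_comm, h, h2, mul_add, mul_one]
  have hq1 : q ≤ Nat.choose m (k - 2) := by
    have h1 : A - n ≤ Nat.choose m (k - 2) * b := by omega
    calc q ≤ Nat.choose m (k - 2) * b / b := Nat.div_le_div_right h1
      _ = _ := Nat.mul_div_cancel _ (by omega)
  have hq2 : q * b ≤ A - n := Nat.div_mul_le_self _ _
  have hqn : q ≤ n := hq1.trans hn1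
  -- the family of (k-1)-subsets
  set 𝒰 := Finset.powersetCard (k - 1) (Finset.univ : Finset (Fin m)) with h𝒰
  have hcard𝒰 : 𝒰.card = Nat.choose m (k - 1) := by
    rw [h𝒰, Finset.card_powersetCard, Finset.card_univ, Fintype.card_fin]
  have hmem𝒰 : ∀ U : Finset (Fin m), U ∈ 𝒰 ↔ U.card = k - 1 := by
    intro U; rw [h𝒰, Finset.mem_powersetCard_univ]
  -- choose q distinct (k-2)-subsets
  obtain ⟨D, hD𝒟, hDcard⟩ : ∃ D ⊆ Finset.powersetCard (k - 2) (Finset.univ : Finset (Fin m)),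
      D.card = q := by
    apply Finset.exists_subset_card_eq
    rw [Finset.card_powersetCard, Finset.card_univ, Fintype.card_fin]
    exact hq1
  have hDmem : ∀ d ∈ D, (d : Finset (Fin m)).card = k - 2 := fun d hd =>
    Finset.mem_powersetCard_univ.mp (hD𝒟 hd)
  -- the counting function c
  set c : Finset (Fin m) → ℕ := fun U => (D.filter (· ⊆ U)).card with hc_def
  have hc : ∀ U ∈ 𝒰, c U ≤ k - 1 := by
    intro U hU
    have hsub : D.filter (· ⊆ U) ⊆ Finset.powersetCard (k - 2) U := by
      intro d hd
      rw [Finset.mem_filter] at hd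
      rw [Finset.mem_powersetCard]
      exact ⟨hd.2, hDmem d hd.1⟩
    calc c U ≤ (Finset.powersetCard (k - 2) U).card := Finset.card_le_card hsub
      _ = (k - 1).choose (k - 2) := by rw [Finset.card_powersetCard, (hmem𝒰 U).mp hU]
      _ = k - 1 := by rw [← hkk]; exact Nat.choose_succ_self_right _
  have hsumc : ∑ U ∈ 𝒰, c U = q * (b + 1) := by
    have h1 : ∀ U, c U = ∑ d ∈ D, if d ⊆ U then 1 else 0 := fun U => Finset.card_filter _ _
    calc ∑ U ∈ 𝒰, c U = ∑ U ∈ 𝒰, ∑ d ∈ D, if d ⊆ U then 1 else 0 :=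
          Finset.sum_congr rfl (fun U _ => h1 U)
      _ = ∑ d ∈ D, ∑ U ∈ 𝒰, if d ⊆ U then 1 else 0 := Finset.sum_comm
      _ = ∑ d ∈ D, (𝒰.filter fun U => d ⊆ U).card :=
          Finset.sum_congr rfl (fun d _ => (Finset.card_filter _ _).symm)
      _ = ∑ d ∈ D, (b + 1) := by
          apply Finset.sum_congr rfl
          intro d hd
          have h := card_supersets (k - 2) d (hDmem d hd)
          rw [hkk] at h
          rw [h𝒰, h]; omega
      _ = q * (b + 1) := by rw [Finset.sum_const, hDcard, smul_eq_mul]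
  -- the capacities and the distribution
  set cap : Finset (Fin m) → ℕ := fun U => k - 1 - c U with hcap_def
  have hcapsum : n - q ≤ ∑ U ∈ 𝒰, cap U := by
    have hsum2 : ∑ U ∈ 𝒰, (cap U + c U) = A := by
      rw [Finset.sum_congr rfl (fun U hU => Nat.sub_add_cancel (hc U hU)),
        Finset.sum_const, hcard𝒰, smul_eq_mul, hA, mul_comm]
    rw [Finset.sum_add_distrib] at hsum2
    have hqq : q * (b + 1) = q * b + q := by ring
    omega
  obtain ⟨a, ha1, ha2, ha3⟩ := exists_distribution 𝒰 cap (n - q) hcapsum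
  -- the multiset of sets
  set M : Multiset (Finset (Fin m)) :=
    D.val + 𝒰.val.bind (fun U => Multiset.replicate (a U) U) with hM
  have hMcard : Multiset.card M = n := by
    rw [hM, Multiset.card_add, Multiset.card_bind]
    have h1 : (Multiset.map (Multiset.card ∘ fun U => Multiset.replicate (a U) U) 𝒰.val).sum
        = ∑ U ∈ 𝒰, a U := by
      rw [Finset.sum]
      congr 1
      apply Multiset.map_congr rfl
      intro U _
      simp [Multiset.card_replicate]
    rw [h1, ha3]
    have : (D.val.card : ℕ) = q := hDcard
    omega
  have hMcount : ∀ v, M.count v = (if v ∈ D then 1 else 0) + (if v ∈ 𝒰 then a v else 0) := by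
    intro v
    rw [hM, Multiset.count_add]
    congr 1
    · by_cases hv : v ∈ D
      · rw [if_pos hv, Multiset.count_eq_one_of_mem D.nodup hv]
      · rw [if_neg hv, Multiset.count_eq_zero.mpr hv]
    · rw [Multiset.count_bind]
      have h1 : (Multiset.map (fun U => (Multiset.replicate (a U) U).count v) 𝒰.val).sum
          = ∑ U ∈ 𝒰, if U = v then a U else 0 := by
        rw [Finset.sum]
        congr 1
        apply Multiset.map_congr rfl
        intro U _
        rw [Multiset.count_replicate]
      rw [h1, Finset.sum_ite_eq']
  have hMsum : (M.map Finset.card).sum = q * (k - 2) + (n - q) * (k - 1) := by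
    rw [hM, Multiset.map_add, Multiset.sum_add]
    congr 1
    · have h1 : (D.val.map Finset.card).sum = ∑ d ∈ D, d.card := rfl
      rw [h1, Finset.sum_congr rfl hDmem, Finset.sum_const, hDcard, smul_eq_mul, mul_comm]
    · rw [Multiset.map_bind]
      have h1 : (𝒰.val.bind fun U => (Multiset.replicate (a U) U).map Finset.card).sum
          = ∑ U ∈ 𝒰, a U * U.card := by
        rw [Multiset.sum_bind, Finset.sum]
        congr 1
        apply Multiset.map_congr rfl
        intro U _
        simp [Multiset.map_replicate, Multiset.sum_replicate]
      rw [h1]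
      rw [Finset.sum_congr rfl (fun U hU => by rw [(hmem𝒰 U).mp hU]), ← Finset.sum_mul, ha3]
  have hMmem : ∀ v ∈ M, Finset.card v = k - 1 ∨ Finset.card v = k - 2 := by
    intro v hv
    rw [hM, Multiset.mem_add] at hv
    rcases hv with hv | hv
    · exact Or.inr (hDmem v hv)
    · rw [Multiset.mem_bind] at hv
      obtain ⟨U, hU, hvU⟩ := hv
      rw [Multiset.eq_of_mem_replicate hvU]
      exact Or.inl ((hmem𝒰 U).mp hU)
  -- turn the multiset into a function
  set L := M.toList with hL
  have hlen : L.length = n := by rw [hL, Multiset.length_toList, hMcard]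
  set X : Fin n → Finset (Fin m) := fun t => L.get (Fin.cast hlen.symm t) with hX
  have hcoe : (L : Multiset (Finset (Fin m))) = M := Multiset.coe_toList M
  have hXmem : ∀ t, X t ∈ M := by
    intro t
    rw [← hcoe]
    exact List.get_mem L _
  have hXcount : ∀ v, (Finset.univ.filter fun t => X t = v).card = M.count v := by
    intro v
    rw [← hcoe, Multiset.coe_count, ← count_get L v]
    apply Finset.card_bij (fun t _ => Fin.cast hlen.symm t)
    · intro t ht
      rw [Finset.mem_filter] at ht ⊢
      exact ⟨Finset.mem_univ _, ht.2⟩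
    · intro t _ s _ h
      exact Fin.cast_injective _ h
    · intro i hi
      rw [Finset.mem_filter] at hi
      exact ⟨Fin.cast hlen i, Finset.mem_filter.mpr ⟨Finset.mem_univ _, hi.2⟩, rfl⟩
  -- the card dichotomy
  have hX3 : ∀ t, (X t).card = k - 1 ∨ (X t).card = k - 2 := fun t => hMmem _ (hXmem t)
  -- distinctness of (k-2)-sets
  have hX4 : ∀ t s, t ≠ s → (X t).card = k - 2 → (X s).card = k - 2 → X t ≠ X s := by
    intro t s hts ht hs heq
    have hnot𝒰 : X t ∉ 𝒰 := by
      intro hmem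
      have := (hmem𝒰 _).mp hmem
      omega
    have h2 : ({t, s} : Finset (Fin n)) ⊆ Finset.univ.filter fun r => X r = X t := by
      intro r hr
      rw [Finset.mem_insert, Finset.mem_singleton] at hr
      rcases hr with rfl | rfl
      · exact Finset.mem_filter.mpr ⟨Finset.mem_univ _, rfl⟩
      · exact Finset.mem_filter.mpr ⟨Finset.mem_univ _, heq.symm⟩
    have h3 : 2 ≤ M.count (X t) := by
      rw [← hXcount]
      calc 2 = ({t, s} : Finset (Fin n)).card := (Finset.card_pair hts).symm
        _ ≤ _ := Finset.card_le_card h2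
    rw [hMcount, if_neg hnot𝒰] at h3
    split at h3 <;> omega
  -- membership in D for (k-2)-sets
  have hXD : ∀ t, (X t).card = k - 2 → X t ∈ D := by
    intro t ht
    have hnot𝒰 : X t ∉ 𝒰 := by
      intro hmem
      have := (hmem𝒰 _).mp hmem
      omega
    have h1 : 1 ≤ M.count (X t) := by
      rw [← hXcount]
      apply Finset.card_pos.mpr
      exact ⟨t, Finset.mem_filter.mpr ⟨Finset.mem_univ _, rfl⟩⟩
    rw [hMcount, if_neg hnot𝒰] at h1
    by_contra hD
    rw [if_neg hD] at h1
    omega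
  refine ⟨X, ?_, ?_, hX3, hX4⟩
  · -- Hall condition
    intro J hJ1 hJk
    set V := J.biUnion X with hV
    have hsub : ∀ t ∈ J, X t ⊆ V := fun t ht => Finset.subset_biUnion_of_mem X ht
    obtain ⟨t0, ht0⟩ := Finset.card_pos.mp hJ1
    have hV1 : k - 2 ≤ V.card := by
      have h1 : k - 2 ≤ (X t0).card := by rcases hX3 t0 with h | h <;> omega
      exact h1.trans (Finset.card_le_card (hsub t0 ht0))
    by_cases hc1 : J.card ≤ k - 2
    · omega
    have hV2 : k - 1 ≤ V.card := by
      by_cases hall : ∀ t ∈ J, ∀ s ∈ J, X t = X s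
      · obtain ⟨s0, hs0, hts⟩ := Finset.exists_mem_ne (s := J) (by omega) t0
        have heq := hall s0 hs0 t0 ht0
        rcases hX3 t0 with h | h
        · rw [← h]
          exact Finset.card_le_card (hsub t0 ht0)
        · exact absurd heq (hX4 s0 t0 hts (by rw [heq, h]) h)
      · push_neg at hall
        obtain ⟨t, ht, s, hs, hne⟩ := hall
        have h1 : X t ∪ X s ⊆ V := Finset.union_subset (hsub t ht) (hsub s hs)
        have h2 : k - 2 + 1 ≤ (X t ∪ X s).card := by
          apply union_card_lb (r := k - 2) hne
          · rcases hX3 t with h | h <;> omega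
          · rcases hX3 s with h | h <;> omega
        have := Finset.card_le_card h1
        omega
    by_cases hc2 : J.card ≤ k - 1
    · omega
    have hJcard : J.card = k := by omega
    by_contra hcon
    push_neg at hcon
    have hVcard : V.card = k - 1 := by omega
    have hV𝒰 : V ∈ 𝒰 := (hmem𝒰 V).mpr hVcard
    have hVnotD : V ∉ D := by
      intro h
      have := hDmem V h
      omega
    -- (k-1)-sets in J are all equal to V
    have hcard1 : (J.filter fun t => (X t).card = k - 1).card ≤ a V := by
      have hsub1 : J.filter (fun t => (X t).card = k - 1) ⊆
          Finset.univ.filter fun t => X t = V := by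
        intro t ht
        rw [Finset.mem_filter] at ht
        rw [Finset.mem_filter]
        refine ⟨Finset.mem_univ _, ?_⟩
        apply Finset.eq_of_subset_of_card_le (hsub t ht.1)
        rw [hVcard, ht.2]
        -- done if rfl
      calc (J.filter fun t => (X t).card = k - 1).card
          ≤ (Finset.univ.filter fun t => X t = V).card := Finset.card_le_card hsub1
        _ = M.count V := hXcount V
        _ = a V := by rw [hMcount, if_neg hVnotD, if_pos hV𝒰, zero_add]
    -- (k-2)-sets in J are distinct members of D contained in V
    have hcard2 : (J.filter fun t => ¬(X t).card = k - 1).card ≤ c V := by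
      apply Finset.card_le_card_of_injOn X
      · intro t ht
        rw [Finset.mem_coe, Finset.mem_filter] at ht
        have hcd : (X t).card = k - 2 := by
          rcases hX3 t with h | h
          · exact absurd h ht.2
          · exact h
        rw [Finset.mem_coe, Finset.mem_filter]
        exact ⟨hXD t hcd, hsub t ht.1⟩
      · intro t ht s hs h
        by_contra hts
        rw [Finset.coe_filter, Set.mem_setOf_eq] at ht hs
        have hcdt : (X t).card = k - 2 := by
          rcases hX3 t with h' | h'
          · exact absurd h' ht.2
          · exact h'
        have hcds : (X s).card = k - 2 := by
          rcases hX3 s with h' | h'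
          · exact absurd h' hs.2
          · exact h'
        exact hX4 t s hts hcdt hcds h
    have hsplit := Finset.card_filter_add_card_filter_not
      (s := J) (p := fun t => (X t).card = k - 1)
    have hav : a V ≤ cap V := ha1 V
    have hcapv : cap V = k - 1 - c V := rfl
    have hcV : c V ≤ k - 1 := hc V hV𝒰
    omega
  · -- the sum condition
    have hfloor : ⌊((((k - 1) * Nat.choose m (k - 1) : ℕ) : ℚ) - (n : ℚ)) / ((m : ℚ) - k + 1)⌋
        = (q : ℤ) := by
      have hcast : ((m : ℚ) - k + 1) = ((b : ℕ) : ℚ) := by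
        rw [hb, Nat.cast_add, Nat.cast_sub hkm, Nat.cast_one]
      have hcast2 : ((((k - 1) * Nat.choose m (k - 1) : ℕ) : ℚ) - (n : ℚ)) = ((A - n : ℕ) : ℚ) := by
        rw [Nat.cast_sub hn2]
      rw [hcast, hcast2, ← Int.natCast_floor_eq_floor (by positivity), Nat.floor_div_eq_div]
    rw [hfloor]
    have h1 : (∑ t, ((X t).card : ℤ)) = ((∑ t, (X t).card : ℕ) : ℤ) := by push_cast; rfl
    have h2 : ∑ t, (X t).card = q * (k - 2) + (n - q) * (k - 1) := by
      rw [← hMsum]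
      have h3 : ∑ t : Fin n, (X t).card = ∑ i : Fin L.length, (L.get i).card := by
        apply Fintype.sum_equiv (finCongr hlen.symm)
        intro t
        rfl
      rw [h3, sum_get, ← hcoe]
      rfl
    rw [h1, h2]
    push_cast [Nat.cast_sub hqn, Nat.cast_sub (show 1 ≤ k by omega),
      Nat.cast_sub (show 2 ≤ k by omega)]
    ring
end

section
/- Let m ≥ k ≥ 3 be integers and let n satisfy C(m, k−2) ≤ n ≤ (k−1)·C(m, k−1). Then N(n, k, m) = n(k−1) − ⌊((k−1)·C(m, k−1) − n)/(m−k+1)⌋. -/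
open Finset

lemma aux_lb1 : ∀ (r N : ℕ), 1 ≤ r → r ≤ N → N + 1 - r ≤ N.choose r := by
  intro r
  induction r with
  | zero => omega
  | succ r ih =>
    intro N h1 h2
    rcases Nat.eq_zero_or_pos r with hr | hr
    · subst hr; simp
    · obtain ⟨N', rfl⟩ : ∃ N', N = N' + 1 := ⟨N - 1, by omega⟩
      rw [Nat.choose_succ_succ]
      have := ih N' hr (by omega)
      omega

lemma aux_lb2 (a : ℕ) (ha : 1 ≤ a) : ∀ d : ℕ, 1 + a * d ≤ (a + d).choose d := by
  intro d
  induction d with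
  | zero => simp
  | succ d ih =>
    have h1 : (a + (d+1)).choose (d+1) = (a+d).choose d + (a+d).choose (d+1) := by
      rw [show a + (d+1) = (a+d) + 1 by ring, Nat.choose_succ_succ]
    have h2 : a + d + 1 - (d+1) ≤ (a+d).choose (d+1) := aux_lb1 (d+1) (a+d) (by omega) (by omega)
    have : 1 + a * (d+1) = (1 + a * d) + a := by ring
    omega

-- counting supersets

lemma card_supersets_s8 {m : ℕ} (B : Finset (Fin m)) (r : ℕ) (hBr : B.card ≤ r) :
    ((Finset.univ.powersetCard r).filter (fun A => B ⊆ A)).card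
      = Nat.choose (m - B.card) (r - B.card) := by
  classical
  have h1 : (Bᶜ.powersetCard (r - B.card)).card = Nat.choose (m - B.card) (r - B.card) := by
    rw [card_powersetCard, card_compl, Fintype.card_fin]
  rw [← h1]
  apply Finset.card_bij' (fun A _ => A \ B) (fun C _ => C ∪ B)
  · intro A hA
    simp only [mem_filter, mem_powersetCard] at hA
    simp only [mem_powersetCard]
    refine ⟨fun x hx => ?_, ?_⟩
    · simp only [mem_sdiff] at hx
      simp [hx.2]
    · rw [card_sdiff_of_subset hA.2, hA.1.2]
  · intro C hC
    simp only [mem_powersetCard] at hC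
    have hdisj : Disjoint C B := by
      rw [Finset.disjoint_left]
      intro x hx hxB
      have := hC.1 hx
      simp [hxB] at this
    simp only [mem_filter, mem_powersetCard]
    refine ⟨⟨subset_univ _, ?_⟩, subset_union_right⟩
    rw [card_union_of_disjoint hdisj, hC.2]
    omega
  · intro A hA
    simp only [mem_filter, mem_powersetCard] at hA
    exact sdiff_union_of_subset hA.2
  · intro C hC
    simp only [mem_powersetCard] at hC
    have hdisj : Disjoint C B := by
      rw [Finset.disjoint_left]
      intro x hx hxB
      have := hC.1 hx
      simp [hxB] at this
    exact union_sdiff_cancel_right hdisj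

lemma hall_of_count {n m k : ℕ} (X : Fin n → Finset (Fin m))
    (h : ∀ A : Finset (Fin m), A.card + 1 ≤ k →
      (Finset.univ.filter (fun t => X t ⊆ A)).card ≤ A.card) :
    ∀ J : Finset (Fin n), 1 ≤ J.card → J.card ≤ k → J.card ≤ (J.biUnion X).card := by
  classical
  intro J h1 h2
  by_contra hcon
  push_neg at hcon
  set A := J.biUnion X with hA
  have hJsub : J ⊆ Finset.univ.filter (fun t => X t ⊆ A) := by
    intro t ht
    simp only [mem_filter, mem_univ, true_and]
    exact subset_biUnion_of_mem X ht
  have := card_le_card hJsub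
  have := h A (by omega)
  omega

lemma sum_map_const {α : Type*} (M : Multiset α) (f : α → ℕ) (c : ℕ)
    (h : ∀ x ∈ M, f x = c) : (M.map f).sum = M.card * c := by
  induction M using Multiset.induction_on with
  | empty => simp
  | cons a s ih =>
    simp only [Multiset.map_cons, Multiset.sum_cons, Multiset.card_cons]
    rw [h a (Multiset.mem_cons_self a s), ih (fun x hx => h x (Multiset.mem_cons_of_mem hx))]
    ring

lemma sum_map_indicator {α : Type*} (M : Multiset α) (p : α → Prop) [DecidablePred p] :
    (M.map fun a => if p a then 1 else 0).sum = (M.filter p).card := by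
  induction M using Multiset.induction_on with
  | empty => simp
  | cons a s ih =>
    by_cases hp : p a <;>
      simp [Multiset.filter_cons, hp, ih, Nat.add_comm]

lemma exists_fn_of_multiset {α : Type*} (M : Multiset α) (n : ℕ) (h : M.card = n) :
    ∃ X : Fin n → α, ∀ f : α → ℕ, ∑ t, f (X t) = (M.map f).sum := by
  classical
  set l := M.toList with hl
  have hlen : l.length = n := by rw [hl, Multiset.length_toList, h]
  refine ⟨fun t => l.get (Fin.cast hlen.symm t), fun f => ?_⟩
  have h1 : ∑ t : Fin n, f (l.get (Fin.cast hlen.symm t)) = ∑ i : Fin l.length, f (l.get i) :=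
    Fintype.sum_equiv (finCongr hlen.symm) _ _ (fun i => rfl)
  rw [h1]
  have h2 : ∑ i : Fin l.length, f (l.get i) = (List.ofFn fun i => f (l.get i)).sum :=
    (List.sum_ofFn).symm
  rw [h2]
  have h3 : (List.ofFn fun i => f (l.get i)) = l.map f := by
    rw [show (fun i => f (l.get i)) = f ∘ l.get from rfl, ← List.map_ofFn, List.ofFn_get]
  rw [h3, ← Multiset.sum_coe, ← Multiset.map_coe, Multiset.coe_toList]

lemma lower_core (n K e : ℕ) (X : Fin n → Finset (Fin (K+3+e)))
    (hX : ∀ J : Finset (Fin n), 1 ≤ J.card → J.card ≤ K+3 → J.card ≤ (J.biUnion X).card) :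
    (n : ℤ) + ((e:ℤ)+1) * ((n : ℤ) * ((K:ℤ)+2) - ∑ t, ((X t).card : ℤ))
      ≤ (((K+2) * Nat.choose (K+3+e) (K+2) : ℕ) : ℤ) := by
  classical
  set P2 := (Finset.univ : Finset (Fin (K+3+e))).powersetCard (K+2) with hP2
  have key1 : ∀ A ∈ P2, (Finset.univ.filter (fun t => X t ⊆ A)).card ≤ K+2 := by
    intro A hA
    by_contra hcon
    push_neg at hcon
    obtain ⟨J, hJsub, hJcard⟩ := Finset.exists_subset_card_eq
      (show K+3 ≤ (Finset.univ.filter (fun t => X t ⊆ A)).card by omega)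
    have h := hX J (by omega) (le_of_eq hJcard)
    have hsub : J.biUnion X ⊆ A :=
      Finset.biUnion_subset.2 fun t ht => (Finset.mem_filter.1 (hJsub ht)).2
    have hAcard : A.card = K+2 := (Finset.mem_powersetCard.1 hA).2
    have := Finset.card_le_card hsub
    omega
  have key2 : ∑ A ∈ P2, (Finset.univ.filter (fun t => X t ⊆ A)).card
      ≤ Nat.choose (K+3+e) (K+2) * (K+2) := by
    calc ∑ A ∈ P2, (Finset.univ.filter (fun t => X t ⊆ A)).card
        ≤ ∑ _A ∈ P2, (K+2) := Finset.sum_le_sum key1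
      _ = P2.card * (K+2) := by rw [Finset.sum_const, smul_eq_mul]
      _ = Nat.choose (K+3+e) (K+2) * (K+2) := by
          rw [hP2, card_powersetCard, card_univ, Fintype.card_fin]
  have swap : ∑ A ∈ P2, (Finset.univ.filter (fun t => X t ⊆ A)).card
      = ∑ t : Fin n, (P2.filter (fun A => X t ⊆ A)).card := by
    simp only [Finset.card_filter]
    exact Finset.sum_comm
  have pert : ∀ t : Fin n, 1 + ((e:ℤ)+1) * (((K:ℤ)+2) - ((X t).card : ℤ))
      ≤ ((P2.filter (fun A => X t ⊆ A)).card : ℤ) := by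
    intro t
    by_cases hc : (X t).card ≤ K+2
    · have hcount : (P2.filter (fun A => X t ⊆ A)).card
          = Nat.choose ((K+3+e) - (X t).card) ((K+2) - (X t).card) :=
        card_supersets_s8 (X t) (K+2) hc
      have harith : (K+3+e) - (X t).card = (e+1) + ((K+2) - (X t).card) := by omega
      have := aux_lb2 (e+1) (by omega) ((K+2) - (X t).card)
      rw [harith] at hcount
      have hcast : ((K:ℤ)+2) - ((X t).card : ℤ) = (((K+2) - (X t).card : ℕ) : ℤ) := by
        have := Int.ofNat_sub hc
        omega
      rw [hcount, hcast]
      exact_mod_cast (by omega : 1 + (e+1) * ((K+2) - (X t).card)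
        ≤ ((e+1) + ((K+2) - (X t).card)).choose ((K+2) - (X t).card))
    · push_neg at hc
      have h1 : ((K:ℤ)+2) - ((X t).card : ℤ) ≤ -1 := by
        have : (K+3 : ℤ) ≤ ((X t).card : ℤ) := by exact_mod_cast hc
        linarith
      have h2 : ((e:ℤ)+1) * (((K:ℤ)+2) - ((X t).card : ℤ)) ≤ ((e:ℤ)+1) * (-1) := by
        apply mul_le_mul_of_nonneg_left h1 (by positivity)
      have h3 : (0:ℤ) ≤ ((P2.filter (fun A => X t ⊆ A)).card : ℤ) := Int.natCast_nonneg _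
      linarith
  have sumZ : ∑ t : Fin n, (1 + ((e:ℤ)+1) * (((K:ℤ)+2) - ((X t).card : ℤ)))
      ≤ ∑ t : Fin n, ((P2.filter (fun A => X t ⊆ A)).card : ℤ) :=
    Finset.sum_le_sum (fun t _ => pert t)
  have expand : ∑ t : Fin n, (1 + ((e:ℤ)+1) * (((K:ℤ)+2) - ((X t).card : ℤ)))
      = (n:ℤ) + ((e:ℤ)+1) * ((n : ℤ) * ((K:ℤ)+2) - ∑ t, ((X t).card : ℤ)) := by
    rw [Finset.sum_add_distrib, Finset.sum_const, ← Finset.mul_sum, Finset.sum_sub_distrib,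
      Finset.sum_const]
    simp only [card_univ, Fintype.card_fin, smul_eq_mul, mul_one]
    ring
  have hrhs : ∑ t : Fin n, ((P2.filter (fun A => X t ⊆ A)).card : ℤ)
      ≤ (((K+2) * Nat.choose (K+3+e) (K+2) : ℕ) : ℤ) := by
    rw [← Nat.cast_sum]
    have : ∑ t : Fin n, (P2.filter (fun A => X t ⊆ A)).card
        ≤ (K+2) * Nat.choose (K+3+e) (K+2) := by
      rw [← swap]
      calc ∑ A ∈ P2, (Finset.univ.filter (fun t => X t ⊆ A)).card
          ≤ Nat.choose (K+3+e) (K+2) * (K+2) := key2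
        _ = (K+2) * Nat.choose (K+3+e) (K+2) := Nat.mul_comm _ _
    exact_mod_cast this
  rw [← expand]
  exact le_trans sumZ hrhs

lemma upper_core (n K e : ℕ)
    (hn1 : Nat.choose (K+3+e) (K+1) ≤ n)
    (hn2 : n ≤ (K+2) * Nat.choose (K+3+e) (K+2)) :
    ∃ X : Fin n → Finset (Fin (K+3+e)),
      (∑ t, (X t).card) = n * (K+2) - ((K+2) * Nat.choose (K+3+e) (K+2) - n) / (e+1) ∧
      ∀ J : Finset (Fin n), 1 ≤ J.card → J.card ≤ K+3 → J.card ≤ (J.biUnion X).card := by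
  classical
  set m := K+3+e with hm
  set T := (K+2) * Nat.choose m (K+2) with hT
  set D := (T - n) / (e+1) with hD
  set C1 := Nat.choose m (K+1) with hC1
  -- key binomial identity
  have hid : T = (e+2) * C1 := by
    have h0 := Nat.choose_succ_right_eq m (K+1)
    have hm1 : m - (K+1) = e + 2 := by omega
    rw [hm1] at h0
    rw [hT, Nat.mul_comm, h0, Nat.mul_comm]
  have hDle : D ≤ C1 := by
    have h1 : T - n ≤ (e+1) * C1 := by
      have h2 : (e+2) * C1 = (e+1) * C1 + C1 := by ring
      omega
    calc D ≤ ((e+1) * C1) / (e+1) := Nat.div_le_div_right h1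
      _ = C1 := Nat.mul_div_cancel_left C1 (by omega)
  have hDn : D ≤ n := le_trans hDle hn1
  have hDT : n + D * (e+1) ≤ T := by
    have := Nat.div_mul_le_self (T - n) (e+1)
    have h2 : D * (e+1) ≤ T - n := this
    omega
  -- pick D distinct (K+1)-sets
  set P1 := (Finset.univ : Finset (Fin m)).powersetCard (K+1) with hP1
  set P2 := (Finset.univ : Finset (Fin m)).powersetCard (K+2) with hP2
  have hP1card : P1.card = C1 := by
    rw [hP1, card_powersetCard, card_univ, Fintype.card_fin]
  have hP2card : P2.card = Nat.choose m (K+2) := by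
    rw [hP2, card_powersetCard, card_univ, Fintype.card_fin]
  obtain ⟨S1, hS1sub, hS1card⟩ := Finset.exists_subset_card_eq (hP1card ▸ hDle : D ≤ P1.card)
  have hS1mem : ∀ B ∈ S1, B.card = K+1 := fun B hB =>
    (Finset.mem_powersetCard.1 (hS1sub hB)).2
  -- loads and capacities
  have hload_le : ∀ A ∈ P2, (S1.filter (fun B => B ⊆ A)).card ≤ K+2 := by
    intro A hA
    have hAcard : A.card = K+2 := (Finset.mem_powersetCard.1 hA).2
    have hsub : S1.filter (fun B => B ⊆ A) ⊆ A.powersetCard (K+1) := by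
      intro B hB
      simp only [Finset.mem_filter] at hB
      exact Finset.mem_powersetCard.2 ⟨hB.2, hS1mem B hB.1⟩
    calc (S1.filter (fun B => B ⊆ A)).card ≤ (A.powersetCard (K+1)).card :=
          Finset.card_le_card hsub
      _ = Nat.choose (K+2) (K+1) := by rw [card_powersetCard, hAcard]
      _ = K+2 := Nat.choose_succ_self_right (K+1)
  have hsumload : ∑ A ∈ P2, (S1.filter (fun B => B ⊆ A)).card = D * (e+2) := by
    have hswap : ∑ A ∈ P2, (S1.filter (fun B => B ⊆ A)).card
        = ∑ B ∈ S1, (P2.filter (fun A => B ⊆ A)).card := by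
      simp only [Finset.card_filter]
      exact Finset.sum_comm
    have hone : ∀ B ∈ S1, (P2.filter (fun A => B ⊆ A)).card = e+2 := by
      intro B hB
      have hc := card_supersets_s8 B (K+2) (by rw [hS1mem B hB]; omega)
      rw [hS1mem B hB] at hc
      rw [hP2]
      rw [hc]
      have h1 : m - (K+1) = e+2 := by omega
      have h2 : (K+2) - (K+1) = 1 := by omega
      rw [h1, h2, Nat.choose_one_right]
    rw [hswap, Finset.sum_congr rfl hone, Finset.sum_const, hS1card, smul_eq_mul]
  have hsumc : ∑ A ∈ P2, (K + 2 - (S1.filter (fun B => B ⊆ A)).card) = T - D * (e+2) := by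
    rw [Finset.sum_tsub_distrib _ hload_le, hsumload, Finset.sum_const, hP2card, smul_eq_mul,
      Nat.mul_comm]
  have hsge : n - D ≤ ∑ A ∈ P2, (K + 2 - (S1.filter (fun B => B ⊆ A)).card) := by
    rw [hsumc]
    have h4 : D * (e+2) = D * (e+1) + D := by ring
    omega
  -- the capacity multiset
  set Cms : Multiset (Finset (Fin m)) :=
    ∑ A ∈ P2, Multiset.replicate (K + 2 - (S1.filter (fun B => B ⊆ A)).card) A with hCms
  have hCcard : Cms.card = ∑ A ∈ P2, (K + 2 - (S1.filter (fun B => B ⊆ A)).card) := by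
    rw [hCms]
    induction P2 using Finset.cons_induction with
    | empty => simp
    | cons a s ha ih => simp [Finset.sum_cons, ih]
  have hCmem : ∀ x ∈ Cms, x ∈ P2 := by
    intro x hx
    rw [hCms, Multiset.mem_sum] at hx
    obtain ⟨A, hA, hxA⟩ := hx
    rwa [Multiset.eq_of_mem_replicate hxA]
  have hCcount : ∀ A ∈ P2, Cms.count A = K + 2 - (S1.filter (fun B => B ⊆ A)).card := by
    intro A hA
    rw [hCms, Multiset.count_sum']
    rw [Finset.sum_congr rfl (fun A' _ => Multiset.count_replicate A A' _)]
    rw [Finset.sum_ite_eq' P2 A (fun A' => K + 2 - (S1.filter (fun B => B ⊆ A')).card), if_pos hA]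
  -- take n - D elements from Cms
  set l2 := Cms.toList with hl2
  have hlen : n - D ≤ l2.length := by
    rw [hl2, Multiset.length_toList, hCcard]; exact hsge
  set M2 : Multiset (Finset (Fin m)) := (↑(l2.take (n-D)) : Multiset (Finset (Fin m))) with hM2
  have hM2card : M2.card = n - D := by
    rw [hM2, Multiset.coe_card, List.length_take]
    omega
  have hM2le : M2 ≤ Cms := by
    rw [hM2]
    calc (↑(l2.take (n-D)) : Multiset (Finset (Fin m))) ≤ (l2 : Multiset _) :=
          Multiset.coe_le.2 (List.take_sublist _ _).subperm
      _ = Cms := by rw [hl2, Multiset.coe_toList]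
  have hM2mem : ∀ x ∈ M2, x ∈ P2 := fun x hx => hCmem x (Multiset.mem_of_le hM2le hx)
  have hM2memcard : ∀ x ∈ M2, x.card = K+2 := fun x hx =>
    (Finset.mem_powersetCard.1 (hM2mem x hx)).2
  -- the final multiset
  set M : Multiset (Finset (Fin m)) := S1.val + M2 with hM
  have hMcard : M.card = n := by
    rw [hM, Multiset.card_add, hM2card]
    have : S1.val.card = D := hS1card
    omega
  obtain ⟨X, hXf⟩ := exists_fn_of_multiset M n hMcard
  refine ⟨X, ?_, ?_⟩
  · -- total storage
    rw [hXf Finset.card, hM, Multiset.map_add, Multiset.sum_add]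
    have e1 : (Multiset.map Finset.card S1.val).sum = D * (K+1) := by
      rw [sum_map_const S1.val Finset.card (K+1) (fun x hx => hS1mem x hx)]
      rw [show Multiset.card S1.val = D from hS1card]
    have e2 : (Multiset.map Finset.card M2).sum = (n - D) * (K+2) := by
      rw [sum_map_const M2 Finset.card (K+2) hM2memcard, hM2card]
    rw [e1, e2]
    have h3 : (n-D)*(K+2) + D*(K+2) = n*(K+2) := by
      rw [← Nat.add_mul, Nat.sub_add_cancel hDn]
    have h4 : D*(K+2) = D*(K+1) + D := by ring
    omega
  · -- Hall condition
    apply hall_of_count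
    intro A hAcard
    have hcount : (Finset.univ.filter (fun t => X t ⊆ A)).card
        = ((M.filter (fun s => s ⊆ A)).card) := by
      rw [Finset.card_filter]
      rw [hXf (fun s => if s ⊆ A then 1 else 0)]
      exact sum_map_indicator M (fun s => s ⊆ A)
    rw [hcount, hM, Multiset.filter_add, Multiset.card_add]
    have hS1eq : Multiset.card (S1.val.filter (fun s => s ⊆ A))
        = (S1.filter (fun s => s ⊆ A)).card := rfl
    rw [hS1eq]
    by_cases h1 : A.card ≤ K
    · have hz1 : S1.filter (fun s => s ⊆ A) = ∅ := by
        rw [Finset.filter_eq_empty_iff]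
        intro B hB hBA
        have := Finset.card_le_card hBA
        have := hS1mem B hB
        omega
      have hz2 : M2.filter (fun s => s ⊆ A) = 0 := by
        rw [Multiset.filter_eq_nil]
        intro x hx hxA
        have := Finset.card_le_card hxA
        have := hM2memcard x hx
        omega
      rw [hz1, hz2]
      simp
    · by_cases h2 : A.card = K+1
      · have hz2 : M2.filter (fun s => s ⊆ A) = 0 := by
          rw [Multiset.filter_eq_nil]
          intro x hx hxA
          have := Finset.card_le_card hxA
          have := hM2memcard x hx
          omega
        have hle1 : (S1.filter (fun s => s ⊆ A)).card ≤ 1 := by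
          rw [Finset.card_le_one]
          intro B hB B' hB'
          simp only [Finset.mem_filter] at hB hB'
          have e1 : B = A := Finset.eq_of_subset_of_card_le hB.2
            (by rw [hS1mem B hB.1, h2])
          have e2 : B' = A := Finset.eq_of_subset_of_card_le hB'.2
            (by rw [hS1mem B' hB'.1, h2])
          rw [e1, e2]
        rw [hz2]
        simp only [Multiset.card_zero]
        omega
      · have h3 : A.card = K+2 := by omega
        have hAP2 : A ∈ P2 := Finset.mem_powersetCard.2 ⟨Finset.subset_univ _, h3⟩
        have hM2f : M2.filter (fun s => s ⊆ A) = M2.filter (fun s => A = s) := by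
          apply Multiset.filter_congr
          intro x hx
          constructor
          · intro hxA
            exact (Finset.eq_of_subset_of_card_le hxA (by rw [hM2memcard x hx, h3])).symm
          · intro hAx
            rw [← hAx]
        have hle2 : Multiset.card (M2.filter (fun s => s ⊆ A))
            ≤ K + 2 - (S1.filter (fun B => B ⊆ A)).card := by
          rw [hM2f]
          rw [← Multiset.count_eq_card_filter_eq]
          calc M2.count A ≤ Cms.count A := Multiset.count_le_of_le A hM2le
            _ = K + 2 - (S1.filter (fun B => B ⊆ A)).card := hCcount A hAP2
        have := hload_le A hAP2
        omega

/-- `Nmin n k m` is the minimum total storage `N` over all (n,N,k,m)-combinatorial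
batch codes: set systems of `n` subsets of an `m`-set such that every subcollection
of size at most `k` satisfies Hall's condition. -/
noncomputable def Nmin (n k m : ℕ) : ℕ :=
  sInf {N : ℕ | ∃ X : Fin n → Finset (Fin m),
    (∑ t, (X t).card) = N ∧
    ∀ J : Finset (Fin n), 1 ≤ J.card → J.card ≤ k → J.card ≤ (J.biUnion X).card}

/-- Optimal total storage for `C(m,k-2) ≤ n ≤ (k-1)·C(m,k-1)` (with `m ≥ k ≥ 3`):
`N(n,k,m) = n(k-1) - ⌊((k-1)·C(m,k-1) - n)/(m-k+1)⌋`. -/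
theorem Nmin_middle_range (n k m : ℕ) (hk : 3 ≤ k) (hkm : k ≤ m)
    (hn1 : Nat.choose m (k - 2) ≤ n) (hn2 : n ≤ (k - 1) * Nat.choose m (k - 1)) :
    (Nmin n k m : ℤ) = (n : ℤ) * (k - 1)
      - ⌊((((k - 1) * Nat.choose m (k - 1) : ℕ) : ℚ) - n) / ((m : ℚ) - k + 1)⌋ := by
  obtain ⟨K, rfl⟩ : ∃ K, k = K + 3 := ⟨k - 3, by omega⟩
  obtain ⟨e, rfl⟩ : ∃ e, m = K + 3 + e := ⟨m - (K + 3), by omega⟩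
  simp only [show K + 3 - 1 = K + 2 from by omega, show K + 3 - 2 = K + 1 from by omega]
    at hn1 hn2 ⊢
  set m := K + 3 + e with hm
  set T := (K+2) * Nat.choose m (K+2) with hT
  set D := (T - n) / (e+1) with hD
  -- D ≤ n
  have hid : T = (e+2) * Nat.choose m (K+1) := by
    have h0 := Nat.choose_succ_right_eq m (K+1)
    have hm1 : m - (K+1) = e + 2 := by omega
    rw [hm1] at h0
    rw [hT, Nat.mul_comm, h0, Nat.mul_comm]
  have hDn : D ≤ n := by
    have h1 : T - n ≤ (e+1) * Nat.choose m (K+1) := by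
      have h2 : (e+2) * Nat.choose m (K+1) = (e+1) * Nat.choose m (K+1)
          + Nat.choose m (K+1) := by ring
      omega
    calc D ≤ ((e+1) * Nat.choose m (K+1)) / (e+1) := Nat.div_le_div_right h1
      _ = Nat.choose m (K+1) := Nat.mul_div_cancel_left _ (by omega)
      _ ≤ n := hn1
  -- floor computation
  have h0 : ((T - n : ℕ) : ℤ) = (T:ℤ) - (n:ℤ) := by omega
  have h1 : (((T - n : ℕ) : ℤ) : ℚ) = ((T : ℕ) : ℚ) - (n:ℚ) := by
    rw [h0]; push_cast; ring
  have h2 : (m : ℚ) - ((K + 3 : ℕ) : ℚ) + 1 = ((e + 1 : ℕ) : ℚ) := by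
    rw [hm]; push_cast; ring
  have hfloor : ⌊(((T : ℕ) : ℚ) - (n:ℚ)) / ((m : ℚ) - ((K + 3 : ℕ) : ℚ) + 1)⌋ = (D : ℤ) := by
    rw [← h1, h2, Rat.floor_intCast_div_natCast, hD, Int.natCast_div]
  -- the two bounds
  obtain ⟨X₀, hX₀sum, hX₀hall⟩ := upper_core n K e hn1 hn2
  have hmem : n * (K+2) - D ∈ {N : ℕ | ∃ X : Fin n → Finset (Fin m),
      (∑ t, (X t).card) = N ∧
      ∀ J : Finset (Fin n), 1 ≤ J.card → J.card ≤ K+3 → J.card ≤ (J.biUnion X).card} :=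
    ⟨X₀, hX₀sum, hX₀hall⟩
  have hub : Nmin n (K+3) m ≤ n * (K+2) - D := Nat.sInf_le hmem
  have hlb : n * (K+2) - D ≤ Nmin n (K+3) m := by
    apply le_csInf ⟨_, hmem⟩
    rintro N ⟨X, hXsum, hXhall⟩
    have hcore := lower_core n K e X hXhall
    have hNsum : (∑ t : Fin n, ((X t).card : ℤ)) = (N : ℤ) := by
      rw [← hXsum]; push_cast; rfl
    rw [hNsum] at hcore
    have hmul : (((n * (K+2) : ℕ) : ℤ) - (N : ℤ)) * ((e:ℤ)+1) ≤ ((T - n : ℕ) : ℤ) := by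
      rw [h0, hT, hm]
      push_cast at hcore ⊢
      linarith
    have h3 : ((n * (K+2) : ℕ) : ℤ) - (N : ℤ) ≤ (D : ℤ) := by
      rw [hD, Int.natCast_div]
      rw [show ((e + 1 : ℕ) : ℤ) = (e:ℤ)+1 from by push_cast; ring]
      exact (Int.le_ediv_iff_mul_le (by positivity)).2 hmul
    omega
  have hNmin : Nmin n (K+3) m = n * (K+2) - D := le_antisymm hub hlb
  rw [hNmin, hfloor]
  have hDn' : D ≤ n * (K+2) := le_trans hDn (Nat.le_mul_of_pos_right n (by omega))
  push_cast [Nat.cast_sub hDn']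
  ring
end

section
/- Let m ≥ k ≥ 5 be integers and let n satisfy C(m, k−2) − (m−k+1)·A(m, 4, k−3) ≤ n ≤ C(m, k−2). Then there exists an (n,N,k,m)-CBC with N = n(k−2) − 2·⌊(C(m, k−2) − n)/(m−k+1)⌋, in which every member of the collection is a (k−2)-subset or a (k−3)-subset of S, the (k−2)-subsets occurring are pairwise distinct, each (k−3)-subset occurs exactly twice, and distinct (k−3)-subsets occurring have symmetric difference of cardinality at least 4. -/
open Finset

private lemma sumGet {α β : Type*} [AddCommMonoid β] (l : List α) (f : α → β) :
    ∑ i : Fin l.length, f (l.get i) = (l.map f).sum := by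
  rw [Fin.sum_univ_def]
  conv_rhs => rw [← List.map_get_finRange l]
  rw [List.map_map]
  rfl

private lemma cardSymm {α : Type*} [DecidableEq α] (s t : Finset α) :
    (symmDiff s t).card + (s ∩ t).card + (s ∩ t).card = s.card + t.card := by
  have h1 := Finset.card_sdiff_add_card_inter s t
  have h2 := Finset.card_sdiff_add_card_inter t s
  rw [Finset.inter_comm t s] at h2
  have h3 : (symmDiff s t).card = (s \ t).card + (t \ s).card := by
    rw [symmDiff_def, Finset.sup_eq_union,
      Finset.card_union_of_disjoint disjoint_sdiff_sdiff]
  omega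

private lemma cardSupersets {M w : ℕ} (B : Finset (Fin M)) (hB : B.card = w) :
    ((Finset.univ.powersetCard (w + 1)).filter (fun T => B ⊆ T)).card = M - w := by
  have himg : (Finset.univ \ B).image (fun x => insert x B)
      = (Finset.univ.powersetCard (w + 1)).filter (fun T => B ⊆ T) := by
    ext T
    simp only [Finset.mem_image, Finset.mem_filter, Finset.mem_powersetCard,
      Finset.mem_sdiff, Finset.mem_univ, true_and]
    constructor
    · rintro ⟨x, hx, rfl⟩
      exact ⟨⟨Finset.subset_univ _, by rw [Finset.card_insert_of_notMem hx, hB]⟩,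
        Finset.subset_insert _ _⟩
    · rintro ⟨⟨-, hcard⟩, hsub⟩
      have hne : (T \ B).Nonempty := by
        rw [← Finset.card_pos, Finset.card_sdiff_of_subset hsub, hcard, hB]; omega
      obtain ⟨x, hx⟩ := hne
      rw [Finset.mem_sdiff] at hx
      refine ⟨x, hx.2, ?_⟩
      refine Finset.eq_of_subset_of_card_le (Finset.insert_subset hx.1 hsub) ?_
      rw [Finset.card_insert_of_notMem hx.2, hB, hcard]
  rw [← himg, Finset.card_image_of_injOn, Finset.card_sdiff_of_subset (Finset.subset_univ _),
    Finset.card_univ, Fintype.card_fin, hB]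
  intro x hx y hy hxy
  simp only [Finset.mem_coe, Finset.mem_sdiff, Finset.mem_univ, true_and] at hx hy
  have hxy' : insert x B = insert y B := hxy
  have : x ∈ insert y B := hxy' ▸ Finset.mem_insert_self x B
  rcases Finset.mem_insert.1 this with h | h
  · exact h
  · exact absurd h hx



/-- `maxCW m d w` = `A(m, d, w)`: the maximum size of a family of pairwise distinct
`w`-element subsets of an `m`-element set whose pairwise symmetric differences have
cardinality at least `d` (the maximum number of codewords of a binary constant weight
code of length `m`, weight `w` and minimum distance `d`). -/
noncomputable def maxCW (m d w : ℕ) : ℕ :=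
  sSup {s : ℕ | ∃ F : Finset (Finset (Fin m)), F.card = s ∧
    (∀ C ∈ F, C.card = w) ∧
    ∀ C ∈ F, ∀ D ∈ F, C ≠ D → d ≤ (symmDiff C D).card}

/-- Construction via binary constant weight codes, for `m ≥ k ≥ 5` and
`C(m,k-2) - (m-k+1)·A(m,4,k-3) ≤ n ≤ C(m,k-2)`: there is an (n,N,k,m)-CBC with
`N = n(k-2) - 2⌊(C(m,k-2) - n)/(m-k+1)⌋` whose members are pairwise distinct
(k-2)-subsets together with (k-3)-subsets, each occurring exactly twice, that are
pairwise at symmetric-difference distance at least 4. -/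
theorem cbc_construction_cw (n k m : ℕ) (hk : 5 ≤ k) (hkm : k ≤ m)
    (hn1 : Nat.choose m (k - 2) - (m - k + 1) * maxCW m 4 (k - 3) ≤ n)
    (hn2 : n ≤ Nat.choose m (k - 2)) :
    ∃ X : Fin n → Finset (Fin m),
      (∀ J : Finset (Fin n), 1 ≤ J.card → J.card ≤ k →
          J.card ≤ (J.biUnion X).card) ∧
      ((∑ t, (X t).card : ℤ) = (n : ℤ) * (k - 2)
          - 2 * ⌊((Nat.choose m (k - 2) : ℚ) - n) / ((m : ℚ) - k + 1)⌋) ∧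
      (∀ t, (X t).card = k - 2 ∨ (X t).card = k - 3) ∧
      (∀ t s, t ≠ s → (X t).card = k - 2 → (X s).card = k - 2 → X t ≠ X s) ∧
      (∀ t, (X t).card = k - 3 →
          (Finset.univ.filter (fun s => X s = X t)).card = 2) ∧
      (∀ t s, (X t).card = k - 3 → (X s).card = k - 3 → X t ≠ X s →
          4 ≤ (symmDiff (X t) (X s)).card) := by
  obtain ⟨a, rfl⟩ : ∃ a, k = a + 5 := ⟨k - 5, by omega⟩
  obtain ⟨b, rfl⟩ : ∃ b, m = a + 5 + b := ⟨m - (a + 5), by omega⟩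
  simp only [show a + 5 - 2 = a + 3 by omega, show a + 5 - 3 = a + 2 by omega,
    show a + 5 + b - (a + 5) + 1 = b + 1 by omega] at hn1 hn2 ⊢
  set M : ℕ := a + 5 + b with hM
  set C : ℕ := Nat.choose M (a + 3) with hCdef
  set A : ℕ := maxCW M 4 (a + 2) with hAdef
  -- obtain a maximum constant-weight code
  have hcode : ∃ F : Finset (Finset (Fin M)), F.card = A ∧
      (∀ T ∈ F, T.card = a + 2) ∧
      ∀ T ∈ F, ∀ D ∈ F, T ≠ D → 4 ≤ (symmDiff T D).card := by
    have hne : {s : ℕ | ∃ F : Finset (Finset (Fin M)), F.card = s ∧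
        (∀ C ∈ F, C.card = a + 2) ∧
        ∀ C ∈ F, ∀ D ∈ F, C ≠ D → 4 ≤ (symmDiff C D).card}.Nonempty :=
      ⟨0, ∅, rfl, by simp, by simp⟩
    have hbdd : BddAbove {s : ℕ | ∃ F : Finset (Finset (Fin M)), F.card = s ∧
        (∀ C ∈ F, C.card = a + 2) ∧
        ∀ C ∈ F, ∀ D ∈ F, C ≠ D → 4 ≤ (symmDiff C D).card} := by
      refine ⟨Fintype.card (Finset (Fin M)), ?_⟩
      rintro s ⟨F, rfl, -, -⟩
      exact (Finset.card_le_univ F).trans_eq Finset.card_univ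
    have hmem : A ∈ {s : ℕ | ∃ F : Finset (Finset (Fin M)), F.card = s ∧
        (∀ C ∈ F, C.card = a + 2) ∧
        ∀ C ∈ F, ∀ D ∈ F, C ≠ D → 4 ≤ (symmDiff C D).card} := by
      rw [hAdef, maxCW]; exact Nat.sSup_mem hne hbdd
    obtain ⟨F, h1, h2, h3⟩ := hmem
    exact ⟨F, h1, h2, h3⟩
  obtain ⟨F, hFcard, hFw, hFd⟩ := hcode
  set P : Finset (Finset (Fin M)) := Finset.univ.powersetCard (a + 3) with hPdef
  have hPcard : P.card = C := by
    rw [hPdef, Finset.card_powersetCard, Finset.card_univ, Fintype.card_fin]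
  have hPmem : ∀ T ∈ P, T.card = a + 3 := by
    intro T hT
    exact (Finset.mem_powersetCard.1 hT).2
  -- each codeword has exactly b+3 supersets in P
  have hsupB : ∀ B : Finset (Fin M), B.card = a + 2 →
      (P.filter (fun T => B ⊆ T)).card = b + 3 := by
    intro B hB
    have := cardSupersets B hB
    rw [show a + 2 + 1 = a + 3 by omega] at this
    rw [hPdef, this, hM]
    omega
  -- distance ≥ 4 codewords have disjoint superset families
  have hdisj : ∀ B D : Finset (Fin M), B.card = a + 2 → D.card = a + 2 →
      4 ≤ (symmDiff B D).card →
      Disjoint (P.filter (fun T => B ⊆ T)) (P.filter (fun T => D ⊆ T)) := by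
    intro B D hB hD hdist
    rw [Finset.disjoint_left]
    intro T hT1 hT2
    rw [Finset.mem_filter] at hT1 hT2
    have hTc : T.card = a + 3 := hPmem T hT1.1
    have hsub : B ∪ D ⊆ T := Finset.union_subset hT1.2 hT2.2
    have h1 := Finset.card_union_add_card_inter B D
    have h2 := cardSymm B D
    have h3 : (B ∪ D).card ≤ a + 3 := hTc ▸ Finset.card_le_card hsub
    omega
  -- the whole code's superset families pack into P
  have hCge : A * (b + 3) ≤ C := by
    have hsub : F.biUnion (fun B => P.filter (fun T => B ⊆ T)) ⊆ P :=
      Finset.biUnion_subset.2 (fun B _ => Finset.filter_subset _ _)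
    have hcard := Finset.card_biUnion (fun B hB D hD hBD =>
      hdisj B D (hFw B hB) (hFw D hD) (hFd B hB D hD hBD))
    have h2 : ∑ B ∈ F, (P.filter (fun T => B ⊆ T)).card = A * (b + 3) := by
      rw [Finset.sum_congr rfl (fun B hB => hsupB B (hFw B hB)), Finset.sum_const,
        hFcard, smul_eq_mul]
    calc A * (b + 3) = (F.biUnion (fun B => P.filter (fun T => B ⊆ T))).card := by
          rw [hcard, h2]
      _ ≤ C := hPcard ▸ Finset.card_le_card hsub
  set q : ℕ := (C - n) / (b + 1) with hqdef
  have hq1 : (b + 1) * q + (C - n) % (b + 1) = C - n := Nat.div_add_mod _ _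
  have hCn : C - n ≤ (b + 1) * A := by omega
  have hqA : q ≤ A := by
    rw [hqdef]
    calc (C - n) / (b + 1) ≤ (b + 1) * A / (b + 1) := Nat.div_le_div_right hCn
      _ = A := Nat.mul_div_cancel_left A (by omega)
  have hn2q : 2 * q ≤ n := by
    have h5 : A * (b + 3) = (b + 1) * A + 2 * A := by ring
    omega
  -- choose q codewords
  obtain ⟨S, hSF, hScard⟩ := Finset.exists_subset_card_eq (hFcard ▸ hqA)
  have hSw : ∀ B ∈ S, B.card = a + 2 := fun B hB => hFw B (hSF hB)
  have hSd : ∀ B ∈ S, ∀ D ∈ S, B ≠ D → 4 ≤ (symmDiff B D).card :=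
    fun B hB D hD => hFd B (hSF hB) D (hSF hD)
  -- good (a+3)-sets
  set G0 : Finset (Finset (Fin M)) := P.filter (fun T => ∀ B ∈ S, ¬ B ⊆ T) with hG0def
  have hbadcard : (P.filter (fun T => ¬ ∀ B ∈ S, ¬ B ⊆ T)).card = q * (b + 3) := by
    have hbad : P.filter (fun T => ¬ ∀ B ∈ S, ¬ B ⊆ T)
        = S.biUnion (fun B => P.filter (fun T => B ⊆ T)) := by
      ext T
      simp only [Finset.mem_filter, Finset.mem_biUnion]
      push_neg
      tauto
    rw [hbad, Finset.card_biUnion (fun B hB D hD hBD =>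
      hdisj B D (hSw B hB) (hSw D hD) (hSd B hB D hD hBD)),
      Finset.sum_congr rfl (fun B hB => hsupB B (hSw B hB)), Finset.sum_const,
      hScard, smul_eq_mul]
  have hG0card : G0.card = C - q * (b + 3) := by
    have h := Finset.card_filter_add_card_filter_not
      (s := P) (p := fun T => ∀ B ∈ S, ¬ B ⊆ T)
    rw [hPcard, hbadcard, ← hG0def] at h
    omega
  have hle : n - 2 * q ≤ G0.card := by
    have h5 : q * (b + 3) = (b + 1) * q + 2 * q := by ring
    omega
  obtain ⟨G, hGsub, hGcard⟩ := Finset.exists_subset_card_eq hle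
  have hGw : ∀ T ∈ G, T.card = a + 3 := by
    intro T hT
    exact hPmem T (Finset.mem_filter.1 (hGsub hT)).1
  have hGgood : ∀ T ∈ G, ∀ B ∈ S, ¬ B ⊆ T := by
    intro T hT
    exact (Finset.mem_filter.1 (hGsub hT)).2
  -- build the list and the indexed family
  set l : List (Finset (Fin M)) := G.toList ++ (S.toList ++ S.toList) with hldef
  have hlen : l.length = n := by
    rw [hldef]
    simp only [List.length_append, Finset.length_toList, hGcard, hScard]
    omega
  have hgetmem : ∀ t : Fin n,
      l.get (Fin.cast hlen.symm t) ∈ G ∨ l.get (Fin.cast hlen.symm t) ∈ S := by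
    intro t
    have h : l.get (Fin.cast hlen.symm t) ∈ l := List.get_mem l _
    rcases List.mem_append.1 h with h1 | h1
    · exact Or.inl (Finset.mem_toList.1 h1)
    · rcases List.mem_append.1 h1 with h2 | h2 <;>
        exact Or.inr (Finset.mem_toList.1 h2)
  have hcount : ∀ (p : Finset (Fin M) → Prop) [DecidablePred p],
      (Finset.univ.filter (fun t : Fin n => p (l.get (Fin.cast hlen.symm t)))).card
        = (G.filter p).card + 2 * (S.filter p).card := by
    intro p hp
    have e1 : ∑ t : Fin n, (if p (l.get (Fin.cast hlen.symm t)) then 1 else 0)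
        = ∑ i : Fin l.length, (if p (l.get i) then 1 else 0) :=
      (Fintype.sum_equiv (finCongr hlen)
        (fun i : Fin l.length => if p (l.get i) then 1 else 0)
        (fun t : Fin n => if p (l.get (Fin.cast hlen.symm t)) then 1 else 0)
        (fun i => rfl)).symm
    rw [Finset.card_filter, e1, sumGet l (fun x => if p x then 1 else 0), hldef,
      List.map_append, List.map_append, List.sum_append, List.sum_append,
      Finset.sum_map_toList, Finset.sum_map_toList,
      ← Finset.card_filter, ← Finset.card_filter]
    ring
  have hcnt_sub : ∀ U : Finset (Fin M),
      (Finset.univ.filter (fun t : Fin n => l.get (Fin.cast hlen.symm t) ⊆ U)).card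
        = (G.filter (· ⊆ U)).card + 2 * (S.filter (· ⊆ U)).card :=
    fun U => hcount (· ⊆ U)
  have hcnt_eq : ∀ v : Finset (Fin M),
      (Finset.univ.filter (fun t : Fin n => l.get (Fin.cast hlen.symm t) = v)).card
        = (G.filter (· = v)).card + 2 * (S.filter (· = v)).card :=
    fun v => hcount (· = v)
  refine ⟨fun t => l.get (Fin.cast hlen.symm t), ?_, ?_, ?_, ?_, ?_, ?_⟩
  · -- Hall condition
    intro J hJ1 hJk
    set U : Finset (Fin M) := J.biUnion (fun t => l.get (Fin.cast hlen.symm t)) with hUdef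
    by_cases hu : a + 5 ≤ U.card
    · exact hJk.trans hu
    push_neg at hu
    have hJle : J.card ≤ (Finset.univ.filter
        (fun t : Fin n => l.get (Fin.cast hlen.symm t) ⊆ U)).card := by
      apply Finset.card_le_card
      intro t ht
      exact Finset.mem_filter.2 ⟨Finset.mem_univ t,
        Finset.subset_biUnion_of_mem (fun r : Fin n => l.get (Fin.cast hlen.symm r)) ht⟩
    rw [hcnt_sub U] at hJle
    refine hJle.trans ?_
    set GU := G.filter (· ⊆ U) with hGUdef
    set SU := S.filter (· ⊆ U) with hSUdef
    have hGUmem : ∀ T ∈ GU, T ⊆ U ∧ T.card = a + 3 ∧ ∀ B ∈ S, ¬ B ⊆ T := by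
      intro T hT
      have h := Finset.mem_filter.1 hT
      exact ⟨h.2, hGw T h.1, hGgood T h.1⟩
    have hSUmem : ∀ B ∈ SU, B ⊆ U ∧ B.card = a + 2 ∧ B ∈ S := by
      intro B hB
      have h := Finset.mem_filter.1 hB
      exact ⟨h.2, hSw B h.1, h.1⟩
    have hSUpair : ∀ B ∈ SU, ∀ D ∈ SU, B ≠ D → a + 4 ≤ (B ∪ D).card := by
      intro B hB D hD hBD
      have h1 := cardSymm B D
      have h2 := Finset.card_union_add_card_inter B D
      have h3 := hSd B (hSUmem B hB).2.2 D (hSUmem D hD).2.2 hBD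
      have h4 := (hSUmem B hB).2.1
      have h5 := (hSUmem D hD).2.1
      omega
    rcases Nat.lt_or_ge U.card (a + 4) with hcase | hcase
    · -- U.card ≤ a + 3
      have hSU1 : SU.card ≤ 1 := by
        rw [Finset.card_le_one]
        intro B hB D hD
        by_contra hne
        have h6 := hSUpair B hB D hD hne
        have h7 : (B ∪ D).card ≤ U.card :=
          Finset.card_le_card (Finset.union_subset (hSUmem B hB).1 (hSUmem D hD).1)
        omega
      have hGUeq : ∀ T ∈ GU, T = U := by
        intro T hT
        refine Finset.eq_of_subset_of_card_le (hGUmem T hT).1 ?_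
        rw [(hGUmem T hT).2.1]
        omega
      rcases Finset.eq_empty_or_nonempty SU with hSUe | ⟨B, hB⟩
      · rcases Finset.eq_empty_or_nonempty GU with hGUe | ⟨T, hT⟩
        · simp [hSUe, hGUe]
        · have h1 := hGUeq T hT
          have h2 : U.card = a + 3 := by rw [← h1]; exact (hGUmem T hT).2.1
          have h3 : GU.card ≤ 1 := Finset.card_le_one.2
            (fun x hx y hy => (hGUeq x hx).trans (hGUeq y hy).symm)
          rw [hSUe]
          simp only [Finset.card_empty]
          omega
      · have hBU := hSUmem B hB
        have hUB : a + 2 ≤ U.card := by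
          have h6 := Finset.card_le_card hBU.1
          omega
        have hGUe : GU = ∅ := by
          rw [Finset.eq_empty_iff_forall_notMem]
          intro T hT
          have h1 := hGUeq T hT
          exact (hGUmem T hT).2.2 B hBU.2.2 (h1 ▸ hBU.1)
        rw [hGUe]
        simp only [Finset.card_empty]
        omega
    · -- U.card = a + 4
      have hUc : U.card = a + 4 := by omega
      have hTerase : ∀ T ∈ GU, ∀ x ∈ U \ T, T = U.erase x := by
        intro T hT x hx
        rw [Finset.mem_sdiff] at hx
        refine Finset.eq_of_subset_of_card_le
          (Finset.subset_erase.2 ⟨(hGUmem T hT).1, hx.2⟩) ?_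
        rw [Finset.card_erase_of_mem hx.1, hUc, (hGUmem T hT).2.1]
        omega
      have hdG : ∀ T ∈ GU, ∀ T' ∈ GU, T ≠ T' → Disjoint (U \ T) (U \ T') := by
        intro T hT T' hT' hne
        rw [Finset.disjoint_left]
        intro x hx hx'
        exact hne ((hTerase T hT x hx).trans (hTerase T' hT' x hx').symm)
      have hdS : ∀ B ∈ SU, ∀ D ∈ SU, B ≠ D → Disjoint (U \ B) (U \ D) := by
        intro B hB D hD hne
        rw [Finset.disjoint_left]
        intro x hx hx'
        rw [Finset.mem_sdiff] at hx hx'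
        have h1 : B ∪ D ⊆ U.erase x := Finset.union_subset
          (Finset.subset_erase.2 ⟨(hSUmem B hB).1, hx.2⟩)
          (Finset.subset_erase.2 ⟨(hSUmem D hD).1, hx'.2⟩)
        have h2 := Finset.card_le_card h1
        rw [Finset.card_erase_of_mem hx.1, hUc] at h2
        have h3 := hSUpair B hB D hD hne
        omega
      have hdGS : ∀ T ∈ GU, ∀ B ∈ SU, Disjoint (U \ T) (U \ B) := by
        intro T hT B hB
        rw [Finset.disjoint_left]
        intro x hx hx'
        rw [Finset.mem_sdiff] at hx'
        have h1 : B ⊆ U.erase x := Finset.subset_erase.2 ⟨(hSUmem B hB).1, hx'.2⟩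
        rw [← hTerase T hT x hx] at h1
        exact (hGUmem T hT).2.2 B (hSUmem B hB).2.2 h1
      have hcard1 : (GU.biUnion (fun T => U \ T)).card = GU.card := by
        rw [Finset.card_biUnion hdG]
        have h1 : ∀ T ∈ GU, (U \ T).card = 1 := by
          intro T hT
          have h := Finset.card_sdiff_of_subset (hGUmem T hT).1
          rw [hUc, (hGUmem T hT).2.1] at h
          omega
        rw [Finset.sum_congr rfl h1, Finset.sum_const, smul_eq_mul, mul_one]
      have hcard2 : (SU.biUnion (fun B => U \ B)).card = 2 * SU.card := by
        rw [Finset.card_biUnion hdS]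
        have h1 : ∀ B ∈ SU, (U \ B).card = 2 := by
          intro B hB
          have h := Finset.card_sdiff_of_subset (hSUmem B hB).1
          rw [hUc, (hSUmem B hB).2.1] at h
          omega
        rw [Finset.sum_congr rfl h1, Finset.sum_const, smul_eq_mul]
        ring
      have hdisjGS : Disjoint (GU.biUnion fun T => U \ T) (SU.biUnion fun B => U \ B) := by
        rw [Finset.disjoint_left]
        intro x hx hx'
        rw [Finset.mem_biUnion] at hx hx'
        obtain ⟨T, hT, hxT⟩ := hx
        obtain ⟨B, hB, hxB⟩ := hx'
        exact Finset.disjoint_left.1 (hdGS T hT B hB) hxT hxB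
      calc GU.card + 2 * SU.card
          = ((GU.biUnion fun T => U \ T) ∪ (SU.biUnion fun B => U \ B)).card := by
            rw [Finset.card_union_of_disjoint hdisjGS, hcard1, hcard2]
        _ ≤ U.card := by
            apply Finset.card_le_card
            intro x hx
            rcases Finset.mem_union.1 hx with h | h <;>
            · rw [Finset.mem_biUnion] at h
              obtain ⟨T, -, hxT⟩ := h
              exact (Finset.mem_sdiff.1 hxT).1
  · -- the total size
    have hGsum : ∑ T ∈ G, T.card = (n - 2 * q) * (a + 3) := by
      rw [Finset.sum_congr rfl hGw, Finset.sum_const, smul_eq_mul, hGcard]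
    have hSsum : ∑ B ∈ S, B.card = q * (a + 2) := by
      rw [Finset.sum_congr rfl hSw, Finset.sum_const, smul_eq_mul, hScard]
    have hsum : ∑ t : Fin n, (l.get (Fin.cast hlen.symm t)).card
        = (n - 2 * q) * (a + 3) + (q * (a + 2) + q * (a + 2)) := by
      have e1 : ∑ t : Fin n, (l.get (Fin.cast hlen.symm t)).card
          = ∑ i : Fin l.length, (l.get i).card :=
        (Fintype.sum_equiv (finCongr hlen)
          (fun i : Fin l.length => (l.get i).card)
          (fun t : Fin n => (l.get (Fin.cast hlen.symm t)).card)
          (fun i => rfl)).symm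
      rw [e1, sumGet l Finset.card, hldef, List.map_append, List.map_append,
        List.sum_append, List.sum_append,
        Finset.sum_map_toList, Finset.sum_map_toList, hGsum, hSsum]
    have hfloor : ⌊((C : ℚ) - n) / ((M : ℚ) - ((a + 5 : ℕ) : ℚ) + 1)⌋ = (q : ℤ) := by
      have h1 : ((C : ℚ) - n) = ((C - n : ℕ) : ℚ) := by
        rw [Nat.cast_sub hn2]
      have h2 : ((M : ℚ) - ((a + 5 : ℕ) : ℚ) + 1) = ((b + 1 : ℕ) : ℚ) := by
        rw [hM]; push_cast; ring
      rw [h1, h2, Rat.floor_natCast_div_natCast, hqdef]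
      exact (Int.natCast_ediv _ _).symm
    rw [← Nat.cast_sum, hsum, hfloor]
    rw [Nat.cast_add, Nat.cast_add, Nat.cast_mul, Nat.cast_mul, Nat.cast_sub hn2q]
    push_cast
    ring
  · -- cards
    intro t
    rcases hgetmem t with h | h
    · exact Or.inl (hGw _ h)
    · exact Or.inr (hSw _ h)
  · -- distinct (k-2)-sets
    intro t s hts h2 h3 heq
    beta_reduce at h2 h3
    have hpair : ({t, s} : Finset (Fin n)) ⊆ Finset.univ.filter
        (fun r : Fin n => l.get (Fin.cast hlen.symm r) = l.get (Fin.cast hlen.symm t)) := by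
      intro r hr
      rcases Finset.mem_insert.1 hr with rfl | hr
      · simp
      · rw [Finset.mem_singleton] at hr
        subst hr
        simpa using heq.symm
    have h2le : 2 ≤ (Finset.univ.filter (fun r : Fin n =>
        l.get (Fin.cast hlen.symm r) = l.get (Fin.cast hlen.symm t))).card := by
      calc 2 = ({t, s} : Finset (Fin n)).card := (Finset.card_pair hts).symm
        _ ≤ _ := Finset.card_le_card hpair
    rw [hcnt_eq (l.get (Fin.cast hlen.symm t))] at h2le
    have hnotS : l.get (Fin.cast hlen.symm t) ∉ S := fun hmem => by
      have := hSw _ hmem; omega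
    have hSfil : S.filter (· = l.get (Fin.cast hlen.symm t)) = ∅ := by
      rw [Finset.filter_eq', if_neg hnotS]
    have hGfil : (G.filter (· = l.get (Fin.cast hlen.symm t))).card ≤ 1 := by
      rw [Finset.filter_eq']
      split <;> simp
    rw [hSfil] at h2le
    simp only [Finset.card_empty] at h2le
    omega
  · -- each small set occurs exactly twice
    intro t h3
    beta_reduce at h3
    have hmemS : l.get (Fin.cast hlen.symm t) ∈ S := by
      rcases hgetmem t with h | h
      · have := hGw _ h; omega
      · exact h
    have hnotG : l.get (Fin.cast hlen.symm t) ∉ G := fun hmem => by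
      have := hGw _ hmem; omega
    rw [hcnt_eq (l.get (Fin.cast hlen.symm t)), Finset.filter_eq', Finset.filter_eq',
      if_pos hmemS, if_neg hnotG]
    simp
  · -- minimum distance
    intro t s h1 h2 hne
    beta_reduce at h1 h2
    have hmt : l.get (Fin.cast hlen.symm t) ∈ S := by
      rcases hgetmem t with h | h
      · have := hGw _ h; omega
      · exact h
    have hms : l.get (Fin.cast hlen.symm s) ∈ S := by
      rcases hgetmem s with h | h
      · have := hGw _ h; omega
      · exact h
    exact hSd _ hmt _ hms hne
end

section
/- Let m ≥ k ≥ 5 be integers and let n satisfy C(m, k−2) − (m−k+1)·A(m, 4, k−3) ≤ n ≤ C(m, k−2). If the remainder of C(m, k−2) − n upon division by m−k+1 is strictly less than (m−k+1)/2, then N(n, k, m) = n(k−2) − ⌊2(C(m, k−2) − n)/(m−k+1)⌋. -/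
section AuxCBC
open Finset

lemma aux_list_sum {α β : Type*} [AddCommMonoid β] (l : List α) (f : α → β) :
    ∑ i : Fin l.length, f l[(i:ℕ)] = (l.map f).sum := by
  rw [← Fin.sum_univ_getElem (l.map f)]
  exact Fintype.sum_equiv (finCongr (List.length_map f).symm) _ _ (by intro i; simp)

lemma aux_card_supersets {m : ℕ} (s : Finset (Fin m)) (j : ℕ) (h1 : s.card ≤ j) :
    (((Finset.univ : Finset (Fin m)).powersetCard j).filter (fun U => s ⊆ U)).card
      = (m - s.card).choose (j - s.card) := by
  have key : (((Finset.univ : Finset (Fin m)).powersetCard j).filter (fun U => s ⊆ U)).card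
      = ((Finset.univ \ s).powersetCard (j - s.card)).card := by
    apply Finset.card_bij' (fun U _ => U \ s) (fun V _ => V ∪ s)
    · intro U hU
      simp only [mem_filter, mem_powersetCard] at hU
      simp only [mem_powersetCard]
      exact ⟨Finset.sdiff_subset_sdiff hU.1.1 le_rfl,
        by rw [Finset.card_sdiff_of_subset hU.2, hU.1.2]⟩
    · intro V hV
      simp only [mem_powersetCard] at hV
      have hVs : Disjoint V s := Finset.disjoint_left.2 fun x hx hxs =>
        (Finset.mem_sdiff.1 (hV.1 hx)).2 hxs
      simp only [mem_filter, mem_powersetCard]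
      refine ⟨⟨Finset.subset_univ _, ?_⟩, Finset.subset_union_right⟩
      rw [Finset.card_union_of_disjoint hVs, hV.2]
      omega
    · intro U hU
      simp only [mem_filter, mem_powersetCard] at hU
      exact Finset.sdiff_union_of_subset hU.2
    · intro V hV
      simp only [mem_powersetCard] at hV
      have hVs : Disjoint V s := Finset.disjoint_left.2 fun x hx hxs =>
        (Finset.mem_sdiff.1 (hV.1 hx)).2 hxs
      rw [Finset.union_sdiff_right, Finset.sdiff_eq_self_of_disjoint hVs]
  rw [key, Finset.card_powersetCard, Finset.card_sdiff_of_subset (Finset.subset_univ s),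
    Finset.card_univ, Fintype.card_fin]

lemma aux_binom (t d : ℕ) (ht : 1 ≤ t) :
    (t + 1) * (2 + t * d) ≤ 2 * (t + 1 + d).choose (d + 1) := by
  induction d with
  | zero => simp [Nat.choose_one_right, Nat.mul_comm]
  | succ d ih =>
    have pas : (t + 1 + (d + 1)).choose (d + 1 + 1)
        = (t + 1 + d).choose (d + 1) + (t + 1 + d).choose (d + 1 + 1) := by
      have e : t + 1 + (d + 1) = (t + 1 + d) + 1 := by ring
      rw [e, Nat.choose_succ_succ (t + 1 + d) (d + 1)]
    have h2 : t * (t + 1) ≤ 2 * (t + 1 + d).choose (d + 1 + 1) := by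
      have e1 : (t + 1 + d).choose (d + 1 + 1) = (t + 1 + d).choose (t - 1) := by
        have h : d + 2 ≤ t + 1 + d := by omega
        have hs := Nat.choose_symm h
        have e : t + 1 + d - (d + 2) = t - 1 := by omega
        rw [e] at hs
        exact hs.symm
      have e2 : (t + 1).choose (t - 1) = (t + 1).choose 2 := by
        have h : (2 : ℕ) ≤ t + 1 := by omega
        have hs := Nat.choose_symm h
        have e : t + 1 - 2 = t - 1 := by omega
        rw [e] at hs; exact hs
      have mono : (t + 1).choose (t - 1) ≤ (t + 1 + d).choose (t - 1) :=
        Nat.choose_le_choose _ (by omega)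
      have e3 : 2 * (t + 1).choose 2 = t * (t + 1) := by
        rw [Nat.choose_two_right, Nat.add_sub_cancel, Nat.mul_comm (t + 1) t]
        have hev : Even (t * (t + 1)) := Nat.even_mul_succ_self t
        obtain ⟨r, hr⟩ := hev
        omega
      rw [e1]
      omega
    have expand : (t + 1) * (2 + t * (d + 1)) = (t + 1) * (2 + t * d) + t * (t + 1) := by ring
    omega

lemma aux_sum_fn {α β : Type*} [AddCommMonoid β] {n : ℕ} (l : List α) (hlen : l.length = n)
    (f : α → β) :
    ∑ i : Fin n, f (l.get (Fin.cast hlen.symm i)) = (l.map f).sum := by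
  have h1 : ∑ i : Fin n, f (l.get (Fin.cast hlen.symm i))
      = ∑ i : Fin l.length, f (l.get i) :=
    Fintype.sum_equiv (finCongr hlen.symm) _ _ (fun i => rfl)
  rw [h1]
  simp only [List.get_eq_getElem]
  exact aux_list_sum l f

lemma aux_multiset_sum {α β : Type*} [AddCommMonoid β] (M : Multiset α) (f : α → β) :
    (M.toList.map f).sum = (M.map f).sum := by
  conv_rhs => rw [← Multiset.coe_toList M]
  rw [Multiset.map_coe, Multiset.sum_coe]

lemma aux_finset_val_sum {α β : Type*} [AddCommMonoid β] (G : Finset α) (f : α → β) :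
    (G.val.map f).sum = ∑ x ∈ G, f x := rfl

lemma aux_hall_count {n k m : ℕ} (X : Fin n → Finset (Fin m))
    (hall : ∀ J : Finset (Fin n), 1 ≤ J.card → J.card ≤ k → J.card ≤ (J.biUnion X).card)
    (U : Finset (Fin m)) (hU : U.card < k) :
    (Finset.univ.filter fun i => X i ⊆ U).card ≤ U.card := by
  by_contra hc
  push_neg at hc
  obtain ⟨J, hJsub, hJcard⟩ := Finset.exists_subset_card_eq (show U.card + 1 ≤ _ from hc)
  have h3 := hall J (by omega) (by omega)
  have hsub : J.biUnion X ⊆ U :=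
    Finset.biUnion_subset.2 fun j hj => (Finset.mem_filter.1 (hJsub hj)).2
  have h4 := Finset.card_le_card hsub
  omega

lemma aux_lower {n k m : ℕ} (hk : 5 ≤ k) (hkm : k ≤ m) (X : Fin n → Finset (Fin m))
    (hall : ∀ J : Finset (Fin n), 1 ≤ J.card → J.card ≤ k → J.card ≤ (J.biUnion X).card) :
    ((m - k + 1 : ℕ) : ℤ) * (((k : ℤ) - 2) * n - ∑ i, ((X i).card : ℤ))
      ≤ 2 * ((m.choose (k - 2) : ℤ) - n) := by
  set t : ℕ := m - k + 1 with ht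
  set P : Finset (Finset (Fin m)) := Finset.univ.powersetCard (k - 1) with hP
  -- per-server inequality
  have step2 : ∀ i : Fin n, ((t : ℤ) + 1) * (2 + t * ((k : ℤ) - 2 - (X i).card))
      ≤ 2 * ((P.filter fun U => X i ⊆ U).card : ℤ) := by
    intro i
    set c : ℕ := (X i).card with hc
    rcases le_or_gt c (k - 2) with hle | hgt
    · set d : ℕ := k - 2 - c with hd
      have hcnt : (P.filter fun U => X i ⊆ U).card = (t + 1 + d).choose (d + 1) := by
        rw [hP, aux_card_supersets (X i) (k - 1) (by omega)]
        congr 1 <;> omega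
      have hb := aux_binom t d (by omega)
      have e1 : ((k : ℤ) - 2 - c) = (d : ℤ) := by omega
      rw [hcnt, e1]
      exact_mod_cast hb
    · rcases eq_or_lt_of_le (show k - 1 ≤ c by omega) with heq | hgt2
      · -- c = k - 1 : count at least 1
        have hmem : X i ∈ P.filter fun U => X i ⊆ U := by
          rw [Finset.mem_filter, hP, Finset.mem_powersetCard]
          exact ⟨⟨Finset.subset_univ _, by omega⟩, le_rfl⟩
        have hpos : 1 ≤ ((P.filter fun U => X i ⊆ U).card : ℤ) := by
          exact_mod_cast Finset.card_pos.2 ⟨X i, hmem⟩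
        have hT : (1 : ℤ) ≤ (t : ℤ) := by omega
        have hcval : ((k : ℤ) - 2 - c) = -1 := by omega
        rw [hcval]
        nlinarith
      · -- c ≥ k : LHS nonpositive
        have hT : (1 : ℤ) ≤ (t : ℤ) := by omega
        have hcval : ((k : ℤ) - 2 - c) ≤ -2 := by omega
        have h0 : (0 : ℤ) ≤ ((P.filter fun U => X i ⊆ U).card : ℤ) := Nat.cast_nonneg _
        have h1 : (t : ℤ) * ((k : ℤ) - 2 - (c : ℤ)) ≤ (t : ℤ) * (-2) :=
          mul_le_mul_of_nonneg_left hcval (by linarith)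
        nlinarith
  -- double counting
  have dc : ∑ i : Fin n, ((P.filter fun U => X i ⊆ U).card)
      = ∑ U ∈ P, ((Finset.univ.filter fun i => X i ⊆ U).card) := by
    simp only [Finset.card_filter]
    exact Finset.sum_comm
  have hUb : ∀ U ∈ P, (Finset.univ.filter fun i => X i ⊆ U).card ≤ k - 1 := by
    intro U hU
    have hcard : U.card = k - 1 := (Finset.mem_powersetCard.1 hU).2
    have := aux_hall_count X hall U (by omega)
    omega
  have hPcard : P.card = m.choose (k - 1) := by
    rw [hP, Finset.card_powersetCard, Finset.card_univ, Fintype.card_fin]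
  have bound1 : ∑ U ∈ P, ((Finset.univ.filter fun i => X i ⊆ U).card)
      ≤ m.choose (k - 1) * (k - 1) := by
    calc ∑ U ∈ P, ((Finset.univ.filter fun i => X i ⊆ U).card)
        ≤ ∑ _U ∈ P, (k - 1) := Finset.sum_le_sum hUb
      _ = P.card * (k - 1) := by rw [Finset.sum_const, smul_eq_mul]
      _ = _ := by rw [hPcard]
  have id1 : m.choose (k - 1) * (k - 1) = (t + 1) * m.choose (k - 2) := by
    have h := Nat.choose_succ_right_eq m (k - 2)
    have e : k - 2 + 1 = k - 1 := by omega
    rw [e] at h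
    have e2 : m - (k - 2) = t + 1 := by omega
    rw [e2] at h
    rw [h, Nat.mul_comm]
  have hsum := Finset.sum_le_sum (fun i (_ : i ∈ (Finset.univ : Finset (Fin n))) => step2 i)
  set N : ℤ := ∑ i, ((X i).card : ℤ) with hN
  have lhs_eq : ∑ i : Fin n, ((t : ℤ) + 1) * (2 + (t : ℤ) * ((k : ℤ) - 2 - ((X i).card : ℤ)))
      = ((t : ℤ) + 1) * (2 * n + (t : ℤ) * (((k : ℤ) - 2) * n - N)) := by
    rw [← Finset.mul_sum]
    congr 1
    rw [Finset.sum_add_distrib, Finset.sum_const, Finset.card_univ, Fintype.card_fin,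
      ← Finset.mul_sum, Finset.sum_sub_distrib, Finset.sum_const, Finset.card_univ,
      Fintype.card_fin, hN]
    push_cast
    ring
  have rhs_le : ∑ i : Fin n, (2 : ℤ) * ((P.filter fun U => X i ⊆ U).card : ℤ)
      ≤ 2 * (((t : ℤ) + 1) * (m.choose (k - 2) : ℤ)) := by
    rw [← Finset.mul_sum]
    have h1 : ∑ i : Fin n, ((P.filter fun U => X i ⊆ U).card) ≤ (t + 1) * m.choose (k - 2) := by
      calc ∑ i : Fin n, ((P.filter fun U => X i ⊆ U).card)
          = ∑ U ∈ P, ((Finset.univ.filter fun i => X i ⊆ U).card) := dc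
        _ ≤ m.choose (k - 1) * (k - 1) := bound1
        _ = (t + 1) * m.choose (k - 2) := id1
    have h2 : (∑ i : Fin n, ((P.filter fun U => X i ⊆ U).card : ℤ))
        ≤ ((t : ℤ) + 1) * (m.choose (k - 2) : ℤ) := by exact_mod_cast h1
    linarith
  rw [lhs_eq] at hsum
  have main : ((t : ℤ) + 1) * (2 * n + (t : ℤ) * (((k : ℤ) - 2) * n - N))
      ≤ ((t : ℤ) + 1) * (2 * (m.choose (k - 2) : ℤ)) := by
    calc _ ≤ _ := hsum
      _ ≤ 2 * (((t : ℤ) + 1) * (m.choose (k - 2) : ℤ)) := rhs_le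
      _ = ((t : ℤ) + 1) * (2 * (m.choose (k - 2) : ℤ)) := by ring
  have hTpos : (0 : ℤ) < (t : ℤ) + 1 := by positivity
  have cancel := le_of_mul_le_mul_left main hTpos
  linarith

lemma aux_upper {n k m : ℕ} (hk : 5 ≤ k) (hkm : k ≤ m)
    (F : Finset (Finset (Fin m)))
    (hFw : ∀ C ∈ F, C.card = k - 3)
    (hFd : ∀ C ∈ F, ∀ D ∈ F, C ≠ D → 4 ≤ (symmDiff C D).card)
    (hq : m.choose (k - 2) - n ≤ (m - k + 1) * F.card)
    (hn2 : n ≤ m.choose (k - 2)) :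
    2 * ((m.choose (k - 2) - n) / (m - k + 1)) ≤ n ∧
    ∃ X : Fin n → Finset (Fin m),
      (∑ i, (X i).card) = n * (k - 2) - 2 * ((m.choose (k - 2) - n) / (m - k + 1)) ∧
      ∀ J : Finset (Fin n), 1 ≤ J.card → J.card ≤ k → J.card ≤ (J.biUnion X).card := by
  set t : ℕ := m - k + 1 with ht
  set q : ℕ := m.choose (k - 2) - n with hqdef
  set a : ℕ := q / t with ha
  have htpos : 1 ≤ t := by omega
  have hqar : t * a + q % t = q := Nat.div_add_mod q t
  have hrt : q % t < t := Nat.mod_lt _ (by omega)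
  have hFu : ∀ C ∈ F, ∀ D ∈ F, C ≠ D → k - 1 ≤ (C ∪ D).card := by
    intro C hC D hD hne
    have h1 := Finset.card_union_add_card_inter C D
    have h2 : (symmDiff C D).card = (C ∪ D).card - (C ∩ D).card := by
      rw [symmDiff_eq_sup_sdiff_inf]
      exact Finset.card_sdiff_of_subset Finset.inter_subset_union
    have h3 := hFd C hC D hD hne
    have h4 := hFw C hC
    have h5 := hFw D hD
    have h6 : (C ∩ D).card ≤ (C ∪ D).card := Finset.card_le_card Finset.inter_subset_union
    omega
  have hSc : ∀ C ∈ F, (((Finset.univ : Finset (Fin m)).powersetCard (k - 2)).filter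
      (fun S => C ⊆ S)).card = t + 2 := by
    intro C hC
    rw [aux_card_supersets C (k - 2) (by rw [hFw C hC]; omega), hFw C hC]
    have e1 : m - (k - 3) = t + 2 := by omega
    have e2 : k - 2 - (k - 3) = 1 := by omega
    rw [e1, e2, Nat.choose_one_right]
  have hdisjSc : ∀ C ∈ F, ∀ D ∈ F, C ≠ D →
      Disjoint (((Finset.univ : Finset (Fin m)).powersetCard (k - 2)).filter (fun S => C ⊆ S))
        (((Finset.univ : Finset (Fin m)).powersetCard (k - 2)).filter (fun S => D ⊆ S)) := by
    intro C hC D hD hne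
    rw [Finset.disjoint_left]
    intro S hS1 hS2
    rw [Finset.mem_filter, Finset.mem_powersetCard] at hS1 hS2
    have h1 : C ∪ D ⊆ S := Finset.union_subset hS1.2 hS2.2
    have h2 := Finset.card_le_card h1
    have h3 := hFu C hC D hD hne
    have h4 := hS1.1.2
    omega
  have hFbound : F.card * (t + 2) ≤ m.choose (k - 2) := by
    have hbi : (F.biUnion (fun C => ((Finset.univ : Finset (Fin m)).powersetCard (k - 2)).filter
        (fun S => C ⊆ S))).card = F.card * (t + 2) := by
      rw [Finset.card_biUnion hdisjSc, Finset.sum_congr rfl hSc, Finset.sum_const, smul_eq_mul]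
    have hsub : (F.biUnion (fun C => ((Finset.univ : Finset (Fin m)).powersetCard (k - 2)).filter
        (fun S => C ⊆ S))) ⊆ (Finset.univ : Finset (Fin m)).powersetCard (k - 2) :=
      Finset.biUnion_subset.2 fun C _ => Finset.filter_subset _ _
    have h5 := Finset.card_le_card hsub
    rw [hbi] at h5
    rwa [Finset.card_powersetCard, Finset.card_univ, Fintype.card_fin] at h5
  have haF : a ≤ F.card := by
    have h1 : q / t ≤ (t * F.card) / t := Nat.div_le_div_right hq
    rwa [Nat.mul_div_cancel_left _ (by omega : 0 < t)] at h1
  have h2a : 2 * a ≤ n := by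
    have e : F.card * (t + 2) = t * F.card + 2 * F.card := by ring
    omega
  obtain ⟨F', hF'sub, hF'card⟩ := Finset.exists_subset_card_eq haF
  set PS : Finset (Finset (Fin m)) := (Finset.univ : Finset (Fin m)).powersetCard (k - 2) with hPS
  have hPScard : PS.card = m.choose (k - 2) := by
    rw [hPS, Finset.card_powersetCard, Finset.card_univ, Fintype.card_fin]
  set Bad : Finset (Finset (Fin m)) := PS.filter (fun S => ∃ C ∈ F', C ⊆ S) with hBadDef
  have hBadEq : Bad = F'.biUnion (fun C => PS.filter (fun S => C ⊆ S)) := by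
    ext S
    simp only [hBadDef, Finset.mem_filter, Finset.mem_biUnion]
    tauto
  have hBadCard : Bad.card = a * (t + 2) := by
    rw [hBadEq, Finset.card_biUnion (fun C hC D hD hne =>
      hdisjSc C (hF'sub hC) D (hF'sub hD) hne)]
    rw [Finset.sum_congr rfl (fun C hC => hSc C (hF'sub hC)), Finset.sum_const, smul_eq_mul,
      hF'card]
  set Base : Finset (Finset (Fin m)) := PS.filter (fun S => ∀ C ∈ F', ¬ C ⊆ S) with hBaseDef
  have hBaseEq : Base = PS \ Bad := by
    ext S
    simp only [hBaseDef, hBadDef, Finset.mem_filter, Finset.mem_sdiff, not_exists, not_and]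
    tauto
  have hBaseCard : Base.card = m.choose (k - 2) - a * (t + 2) := by
    rw [hBaseEq, Finset.card_sdiff_of_subset (Finset.filter_subset _ _), hPScard, hBadCard]
  have hrBase : q % t ≤ Base.card := by
    have e : a * (t + 2) = t * a + 2 * a := by ring
    omega
  obtain ⟨R, hRsub, hRcard⟩ := Finset.exists_subset_card_eq hrBase
  set Good : Finset (Finset (Fin m)) := Base \ R with hGoodDef
  have hGoodCard : Good.card = n - 2 * a := by
    rw [hGoodDef, Finset.card_sdiff_of_subset hRsub, hBaseCard, hRcard]
    have e : a * (t + 2) = t * a + 2 * a := by ring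
    omega
  set M : Multiset (Finset (Fin m)) := Good.val + F'.val + F'.val with hM
  have hMcard : Multiset.card M = n := by
    rw [hM]
    simp only [Multiset.card_add]
    have e1 : Good.val.card = Good.card := rfl
    have e2 : F'.val.card = F'.card := rfl
    rw [e1, e2, hGoodCard, hF'card]
    omega
  set l : List (Finset (Fin m)) := M.toList with hl
  have hlen : l.length = n := by rw [hl, Multiset.length_toList, hMcard]
  set X : Fin n → Finset (Fin m) := fun i => l.get (Fin.cast hlen.symm i) with hX
  have hGoodMem : ∀ S ∈ Good, S.card = k - 2 ∧ ∀ C ∈ F', ¬ C ⊆ S := by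
    intro S hS
    have h1 : S ∈ Base := (Finset.mem_sdiff.1 hS).1
    rw [hBaseDef, Finset.mem_filter, hPS, Finset.mem_powersetCard] at h1
    exact ⟨h1.1.2, h1.2⟩
  have hF'w : ∀ C ∈ F', C.card = k - 3 := fun C hC => hFw C (hF'sub hC)
  have hsum : ∑ i, (X i).card = n * (k - 2) - 2 * a := by
    simp only [hX]
    rw [aux_sum_fn l hlen Finset.card, hl, aux_multiset_sum, hM]
    simp only [Multiset.map_add, Multiset.sum_add]
    rw [aux_finset_val_sum, aux_finset_val_sum]
    rw [Finset.sum_congr rfl (fun S hS => (hGoodMem S hS).1),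
      Finset.sum_congr rfl hF'w, Finset.sum_const, Finset.sum_const, smul_eq_mul, smul_eq_mul,
      hGoodCard, hF'card]
    have e1 : (n - 2 * a) * (k - 2) = n * (k - 2) - 2 * a * (k - 2) := Nat.sub_mul _ _ _
    have e2 : 2 * a * (k - 2) = 2 * (a * (k - 3)) + 2 * a := by
      have e : k - 2 = (k - 3) + 1 := by omega
      rw [e]; ring
    have e3 : 2 * a * (k - 2) ≤ n * (k - 2) := Nat.mul_le_mul_right _ h2a
    omega
  have hcnt : ∀ U : Finset (Fin m),
      (Finset.univ.filter fun i => X i ⊆ U).card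
        = (Good.filter (fun S => S ⊆ U)).card + 2 * (F'.filter (fun S => S ⊆ U)).card := by
    intro U
    rw [Finset.card_filter]
    simp only [hX]
    rw [aux_sum_fn l hlen (fun S => if S ⊆ U then 1 else 0), hl, aux_multiset_sum, hM]
    simp only [Multiset.map_add, Multiset.sum_add]
    rw [aux_finset_val_sum, aux_finset_val_sum]
    rw [← Finset.card_filter, ← Finset.card_filter]
    ring
  refine ⟨h2a, X, hsum, ?_⟩
  intro J hJ1 hJk
  set U : Finset (Fin m) := J.biUnion X with hU
  rcases le_or_gt k U.card with hbig | hsmall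
  · omega
  have hJcnt : J.card ≤ (Finset.univ.filter fun i => X i ⊆ U).card := by
    apply Finset.card_le_card
    intro j hj
    exact Finset.mem_filter.2 ⟨Finset.mem_univ _, Finset.subset_biUnion_of_mem X hj⟩
  rw [hcnt U] at hJcnt
  set FU := F'.filter (fun S => S ⊆ U) with hFU
  set GU := Good.filter (fun S => S ⊆ U) with hGU
  suffices hkey : GU.card + 2 * FU.card ≤ U.card by omega
  have hGUmem : ∀ S ∈ GU, S.card = k - 2 ∧ S ⊆ U ∧ ∀ C ∈ F', ¬ C ⊆ S := by
    intro S hS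
    have h1 := Finset.mem_filter.1 hS
    exact ⟨(hGoodMem S h1.1).1, h1.2, (hGoodMem S h1.1).2⟩
  have hFUmem : ∀ C ∈ FU, C.card = k - 3 ∧ C ⊆ U := by
    intro C hC
    have h1 := Finset.mem_filter.1 hC
    exact ⟨hF'w C h1.1, h1.2⟩
  rcases Nat.eq_zero_or_pos FU.card with hFU0 | hFUpos
  · have hsub : GU ⊆ U.powersetCard (k - 2) := by
      intro S hS
      rw [Finset.mem_powersetCard]
      exact ⟨(hGUmem S hS).2.1, (hGUmem S hS).1⟩
    have h1 : GU.card ≤ (U.card).choose (k - 2) := by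
      have h2 := Finset.card_le_card hsub
      rwa [Finset.card_powersetCard] at h2
    have h2 : (U.card).choose (k - 2) ≤ U.card := by
      rcases lt_or_ge U.card (k - 2) with hlt | hge
      · rw [Nat.choose_eq_zero_of_lt hlt]; omega
      · rcases eq_or_lt_of_le hge with heq | hlt2
        · rw [← heq, Nat.choose_self]; omega
        · have he : U.card = k - 1 := by omega
          rw [he]
          have h3 : k - 2 ≤ k - 1 := by omega
          have h4 := Nat.choose_symm h3
          have e : k - 1 - (k - 2) = 1 := by omega
          rw [e] at h4
          rw [← h4, Nat.choose_one_right]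
    omega
  · obtain ⟨C0, hC0⟩ := Finset.card_pos.1 hFUpos
    have hUk3 : k - 3 ≤ U.card := by
      have h1 := Finset.card_le_card (hFUmem C0 hC0).2
      have h2 := (hFUmem C0 hC0).1
      omega
    rcases le_or_gt U.card (k - 2) with hs2 | hs3
    · have hFU1 : FU.card ≤ 1 := by
        apply Finset.card_le_one.2
        intro C hC D hD
        by_contra hne
        have h1 := hFu C (hF'sub (Finset.mem_filter.1 hC).1) D
          (hF'sub (Finset.mem_filter.1 hD).1) hne
        have h2 : C ∪ D ⊆ U := Finset.union_subset (hFUmem C hC).2 (hFUmem D hD).2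
        have h3 := Finset.card_le_card h2
        omega
      have hGU0 : GU.card = 0 := by
        rw [Finset.card_eq_zero]
        apply Finset.eq_empty_of_forall_notMem
        intro S hS
        obtain ⟨hScard, hSU, hSnc⟩ := hGUmem S hS
        have h1 : U.card ≤ S.card := by omega
        have h2 : S = U := Finset.eq_of_subset_of_card_le hSU h1
        exact hSnc C0 (Finset.mem_filter.1 hC0).1 (h2 ▸ (hFUmem C0 hC0).2)
      omega
    · have hs : U.card = k - 1 := by omega
      set E : Finset (Fin m) := FU.biUnion (fun C => U \ C) with hE
      have hEdisj : ∀ C ∈ FU, ∀ D ∈ FU, C ≠ D → Disjoint (U \ C) (U \ D) := by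
        intro C hC D hD hne
        have h1 := hFu C (hF'sub (Finset.mem_filter.1 hC).1) D
          (hF'sub (Finset.mem_filter.1 hD).1) hne
        have h2 : C ∪ D ⊆ U := Finset.union_subset (hFUmem C hC).2 (hFUmem D hD).2
        have h3 : C ∪ D = U := Finset.eq_of_subset_of_card_le h2 (by
          have h4 := Finset.card_le_card h2; omega)
        rw [Finset.disjoint_left]
        intro x hx1 hx2
        have hxU : x ∈ U := (Finset.mem_sdiff.1 hx1).1
        rw [← h3, Finset.mem_union] at hxU
        rcases hxU with h | h
        · exact (Finset.mem_sdiff.1 hx1).2 h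
        · exact (Finset.mem_sdiff.1 hx2).2 h
      have hEcard : E.card = 2 * FU.card := by
        rw [hE, Finset.card_biUnion hEdisj]
        have h1 : ∀ C ∈ FU, (U \ C).card = 2 := by
          intro C hC
          rw [Finset.card_sdiff_of_subset (hFUmem C hC).2, (hFUmem C hC).1, hs]
          omega
        rw [Finset.sum_congr rfl h1, Finset.sum_const, smul_eq_mul]
        ring
      have hEsubU : E ⊆ U := by
        rw [hE]
        exact Finset.biUnion_subset.2 fun C _ => Finset.sdiff_subset
      have hinj : GU.card ≤ ((U \ E).powersetCard 1).card := by
        apply Finset.card_le_card_of_injOn (fun S => U \ S)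
        · intro S hS
          obtain ⟨hScard, hSU, hSnc⟩ := hGUmem S hS
          rw [Finset.mem_coe, Finset.mem_powersetCard]
          constructor
          · intro x hx
            rw [Finset.mem_sdiff] at hx ⊢
            refine ⟨hx.1, fun hxE => ?_⟩
            rw [hE, Finset.mem_biUnion] at hxE
            obtain ⟨C, hC, hxC⟩ := hxE
            have hCS : C ⊆ S := by
              intro y hy
              by_contra hyS
              have hyU : y ∈ U := (hFUmem C hC).2 hy
              have hUS : (U \ S).card = 1 := by
                rw [Finset.card_sdiff_of_subset hSU, hScard, hs]; omega
              obtain ⟨z, hz⟩ := Finset.card_eq_one.1 hUS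
              have hxz : x ∈ U \ S := Finset.mem_sdiff.2 ⟨hx.1, hx.2⟩
              have hyz : y ∈ U \ S := Finset.mem_sdiff.2 ⟨hyU, hyS⟩
              rw [hz, Finset.mem_singleton] at hxz hyz
              exact (Finset.mem_sdiff.1 hxC).2 (by rw [hxz, ← hyz]; exact hy)
            exact hSnc C (Finset.mem_filter.1 hC).1 hCS
          · rw [Finset.card_sdiff_of_subset hSU, hScard, hs]; omega
        · intro S1 h1 S2 h2 heq
          have hS1U : S1 ⊆ U := (hGUmem S1 (Finset.mem_coe.1 h1)).2.1
          have hS2U : S2 ⊆ U := (hGUmem S2 (Finset.mem_coe.1 h2)).2.1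
          have e1 : U \ (U \ S1) = S1 := Finset.sdiff_sdiff_eq_self hS1U
          have e2 : U \ (U \ S2) = S2 := Finset.sdiff_sdiff_eq_self hS2U
          rw [← e1, ← e2]
          simp only at heq
          rw [heq]
      have hfinal : GU.card ≤ U.card - 2 * FU.card := by
        rw [Finset.card_powersetCard] at hinj
        have h1 : (U \ E).card = U.card - 2 * FU.card := by
          rw [Finset.card_sdiff_of_subset hEsubU, hEcard]
        rw [h1, Nat.choose_one_right] at hinj
        exact hinj
      have hEle := Finset.card_le_card hEsubU
      omega

/-- For `m ≥ k ≥ 5` and `C(m,k-2) - (m-k+1)·A(m,4,k-3) ≤ n ≤ C(m,k-2)`, if the remainder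
of `C(m,k-2) - n` modulo `m-k+1` is strictly less than `(m-k+1)/2`, then
`N(n,k,m) = n(k-2) - ⌊2(C(m,k-2) - n)/(m-k+1)⌋`. -/
theorem Nmin_cw_optimal (n k m : ℕ) (hk : 5 ≤ k) (hkm : k ≤ m)
    (hn1 : Nat.choose m (k - 2) - (m - k + 1) * maxCW m 4 (k - 3) ≤ n)
    (hn2 : n ≤ Nat.choose m (k - 2))
    (hrem : (((Nat.choose m (k - 2) - n) % (m - k + 1) : ℕ) : ℚ)
        < ((m : ℚ) - k + 1) / 2) :
    (Nmin n k m : ℤ) = (n : ℤ) * (k - 2)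
      - ⌊2 * ((Nat.choose m (k - 2) : ℚ) - n) / ((m : ℚ) - k + 1)⌋ := by
  -- obtain an optimal constant-weight code
  have hbdd : BddAbove {s : ℕ | ∃ F : Finset (Finset (Fin m)), F.card = s ∧
      (∀ C ∈ F, C.card = k - 3) ∧
      ∀ C ∈ F, ∀ D ∈ F, C ≠ D → 4 ≤ (symmDiff C D).card} := by
    refine ⟨2 ^ m, fun s hs => ?_⟩
    obtain ⟨F, hF, -, -⟩ := hs
    rw [← hF]
    calc F.card ≤ (Finset.univ : Finset (Finset (Fin m))).card := Finset.card_le_univ F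
      _ = 2 ^ m := by rw [Finset.card_univ, Fintype.card_finset, Fintype.card_fin]
  have hne : Set.Nonempty {s : ℕ | ∃ F : Finset (Finset (Fin m)), F.card = s ∧
      (∀ C ∈ F, C.card = k - 3) ∧
      ∀ C ∈ F, ∀ D ∈ F, C ≠ D → 4 ≤ (symmDiff C D).card} :=
    ⟨0, ∅, by simp⟩
  have hmem := Nat.sSup_mem hne hbdd
  obtain ⟨F, hFcard, hFw, hFd⟩ := hmem
  have hFeq : F.card = maxCW m 4 (k - 3) := hFcard
  rw [← hFeq] at hn1
  set t : ℕ := m - k + 1 with ht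
  set q : ℕ := m.choose (k - 2) - n with hqdef
  set a : ℕ := q / t with ha
  have htpos : 1 ≤ t := by omega
  have hqar : t * a + q % t = q := Nat.div_add_mod q t
  have hq' : q ≤ t * F.card := by omega
  obtain ⟨h2a, X, hsumX, hhallX⟩ := aux_upper hk hkm F hFw hFd hq' hn2
  have hexp : (m.choose (k - 2) - n) / (m - k + 1) = a := by rw [ha, hqdef, ht]
  rw [hexp] at h2a hsumX
  -- the set defining Nmin
  have hmemS : (n * (k - 2) - 2 * a) ∈ {N : ℕ | ∃ X : Fin n → Finset (Fin m),
      (∑ t, (X t).card) = N ∧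
      ∀ J : Finset (Fin n), 1 ≤ J.card → J.card ≤ k → J.card ≤ (J.biUnion X).card} :=
    ⟨X, hsumX, hhallX⟩
  have hub : Nmin n k m ≤ n * (k - 2) - 2 * a := Nat.sInf_le hmemS
  have hSne : Set.Nonempty {N : ℕ | ∃ X : Fin n → Finset (Fin m),
      (∑ t, (X t).card) = N ∧
      ∀ J : Finset (Fin n), 1 ≤ J.card → J.card ≤ k → J.card ≤ (J.biUnion X).card} :=
    ⟨_, hmemS⟩
  have hNmem := Nat.sInf_mem hSne
  obtain ⟨Y, hsY, hhY⟩ := hNmem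
  have hsYN : (∑ i, (Y i).card) = Nmin n k m := hsY
  clear hsY hmemS hSne hbdd hne hFcard hsumX hhallX
  -- remainder condition
  have htQ : (t : ℚ) = (m : ℚ) - k + 1 := by
    rw [ht]
    push_cast [Nat.cast_sub hkm]
    ring
  have h2r : 2 * (q % t) < t := by
    rw [← htQ, lt_div_iff₀ (by norm_num : (0:ℚ) < 2)] at hrem
    have h1 : ((q % t : ℕ) : ℚ) * 2 < (t : ℚ) := hrem
    have h2 : q % t * 2 < t := by exact_mod_cast h1
    omega
  -- lower bound
  have hlow : ((k : ℤ) - 2) * n - (Nmin n k m : ℤ) ≤ 2 * a := by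
    have h0 := aux_lower hk hkm Y hhY
    have hsum' : (∑ i, ((Y i).card : ℤ)) = (Nmin n k m : ℤ) := by
      rw [← hsYN]; push_cast; rfl
    rw [hsum'] at h0
    have hq2 : 2 * ((m.choose (k - 2) : ℤ) - n) = 2 * (q : ℤ) := by
      rw [hqdef, Nat.cast_sub hn2]
    rw [hq2] at h0
    have hdiv : ((k : ℤ) - 2) * n - (Nmin n k m : ℤ) ≤ 2 * (q : ℤ) / (t : ℤ) := by
      rw [Int.le_ediv_iff_mul_le (by exact_mod_cast htpos : (0:ℤ) < (t:ℤ))]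
      calc (((k : ℤ) - 2) * n - (Nmin n k m : ℤ)) * t
          = (t : ℤ) * (((k : ℤ) - 2) * n - (Nmin n k m : ℤ)) := by ring
        _ ≤ 2 * (q : ℤ) := h0
    have hediv : 2 * (q : ℤ) / (t : ℤ) = 2 * a := by
      have e1 : 2 * (q : ℤ) = 2 * ((q % t : ℕ) : ℤ) + (2 * a) * t := by
        have e2 : (t : ℤ) * a + ((q % t : ℕ) : ℤ) = q := by exact_mod_cast hqar
        linarith
      rw [e1, Int.add_mul_ediv_right _ _
          (by exact_mod_cast Nat.one_le_iff_ne_zero.mp htpos : (t:ℤ) ≠ 0),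
        Int.ediv_eq_zero_of_lt (by positivity) (by exact_mod_cast h2r)]
      ring
    rw [hediv] at hdiv
    exact hdiv
  -- upper bound, with casts
  have h2ak : 2 * a ≤ n * (k - 2) := by
    calc 2 * a ≤ n := h2a
      _ ≤ n * (k - 2) := Nat.le_mul_of_pos_right n (by omega)
  have hubZ : (Nmin n k m : ℤ) ≤ (n : ℤ) * ((k : ℤ) - 2) - 2 * (a : ℤ) := by
    have h1 : (Nmin n k m : ℤ) ≤ ((n * (k - 2) - 2 * a : ℕ) : ℤ) := by exact_mod_cast hub
    have h2 : ((n * (k - 2) - 2 * a : ℕ) : ℤ) = (n : ℤ) * ((k : ℤ) - 2) - 2 * (a : ℤ) := by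
      rw [Nat.cast_sub h2ak]
      push_cast [Nat.cast_sub (show 2 ≤ k by omega)]
      ring
    rw [h2] at h1
    exact h1
  have heqZ : (Nmin n k m : ℤ) = (n : ℤ) * ((k : ℤ) - 2) - 2 * (a : ℤ) := by
    have hcomm : ((k : ℤ) - 2) * n = (n : ℤ) * ((k : ℤ) - 2) := by ring
    linarith [hlow, hubZ]
  -- floor computation
  have hfloor : ⌊2 * ((m.choose (k - 2) : ℚ) - n) / ((m : ℚ) - k + 1)⌋ = 2 * (a : ℤ) := by
    rw [← htQ]
    have e1 : 2 * ((m.choose (k - 2) : ℚ) - n) = ((2 * q : ℕ) : ℚ) := by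
      push_cast [hqdef, Nat.cast_sub hn2]
      ring
    rw [e1, Int.floor_eq_iff]
    have htQpos : (0 : ℚ) < (t : ℚ) := by exact_mod_cast htpos
    constructor
    · rw [le_div_iff₀ htQpos]
      have e0 : 2 * a * t = 2 * (t * a) := by ring
      have hN : 2 * a * t ≤ 2 * q := by omega
      exact_mod_cast hN
    · rw [div_lt_iff₀ htQpos]
      have hN : 2 * q < (2 * a + 1) * t := by
        have e : (2 * a + 1) * t = 2 * (t * a) + t := by ring
        omega
      push_cast
      exact_mod_cast hN
  rw [hfloor]
  exact heqZ

end AuxCBC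
end

section
/- Let m ≥ k ≥ 5 be integers and let n satisfy C(m, k−2) − (m−k+1)·A(m, 4, k−3) ≤ n ≤ C(m, k−2). If the remainder of C(m, k−2) − n upon division by m−k+1 is at least (m−k+1)/2, then N(n, k, m) ≤ n(k−2) − 2·⌊(C(m, k−2) − n)/(m−k+1)⌋. -/
open Finset

section Aux

variable {m k : ℕ}

/-- From symmetric-difference distance ≥ 4, the union of two w-sets has ≥ w+2 elements. -/
lemma union_card_of_dist {T T' : Finset (Fin m)} {w : ℕ}
    (hT : T.card = w) (hT' : T'.card = w) (hd : 4 ≤ (symmDiff T T').card) :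
    w + 2 ≤ (T ∪ T').card := by
  have h1 : (symmDiff T T').card = (T ∪ T').card - (T ∩ T').card := by
    rw [symmDiff_eq_sup_sdiff_inf]
    exact card_sdiff_of_subset inf_le_sup
  have h2 := card_union_add_card_inter T T'
  have h3 : (T ∩ T').card ≤ (T ∪ T').card := card_le_card inf_le_sup
  omega

/-- Core counting lemma in the case `|U| = k - 1`. -/
lemma lemM (hk : 5 ≤ k) (U : Finset (Fin m)) (Vf Vr : Finset (Finset (Fin m)))
    (hU : U.card = k - 1)
    (hVf : ∀ v ∈ Vf, v ⊆ U ∧ v.card = k - 2)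
    (hVr : ∀ T ∈ Vr, T ⊆ U ∧ T.card = k - 3)
    (hpair : ∀ T ∈ Vr, ∀ T' ∈ Vr, T ≠ T' → T ∪ T' = U)
    (havoid : ∀ v ∈ Vf, ∀ T ∈ Vr, ¬ T ⊆ v) :
    Vf.card + 2 * Vr.card ≤ k - 1 := by
  classical
  set W : Finset (Fin m) := Vr.biUnion (fun T => U \ T) with hW
  have hWsub : W ⊆ U := by
    intro x hx
    simp only [hW, mem_biUnion] at hx
    obtain ⟨T, hT, hxT⟩ := hx
    exact (mem_sdiff.1 hxT).1
  have hWcard : W.card = 2 * Vr.card := by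
    rw [hW, card_biUnion]
    · have hconst : ∀ T ∈ Vr, (U \ T).card = 2 := by
        intro T hT
        have h1 := (hVr T hT).1
        have h2 := (hVr T hT).2
        rw [card_sdiff_of_subset h1, hU, h2]
        omega
      rw [Finset.sum_congr rfl hconst, Finset.sum_const, smul_eq_mul, mul_comm]
    · intro T hT T' hT' hne
      have hcup := hpair T hT T' hT' hne
      show Disjoint (U \ T) (U \ T')
      rw [Finset.disjoint_left]
      intro x hx hx'
      have : x ∈ U \ (T ∪ T') := by
        rw [mem_sdiff, mem_union]
        exact ⟨(mem_sdiff.1 hx).1, by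
          push_neg
          exact ⟨(mem_sdiff.1 hx).2, (mem_sdiff.1 hx').2⟩⟩
      rw [hcup, sdiff_self] at this
      exact absurd this (notMem_empty x)
  have hVfcard : Vf.card ≤ (U \ W).card := by
    have hmaps : ∀ v ∈ Vf, U \ v ∈ (U \ W).powersetCard 1 := by
      intro v hv
      have hvU := (hVf v hv).1
      have hvc := (hVf v hv).2
      have hc1 : (U \ v).card = 1 := by rw [card_sdiff_of_subset hvU, hU, hvc]; omega
      rw [mem_powersetCard]
      refine ⟨?_, hc1⟩
      intro x hx
      rw [mem_sdiff]
      refine ⟨(mem_sdiff.1 hx).1, ?_⟩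
      intro hxW
      simp only [hW, mem_biUnion] at hxW
      obtain ⟨T, hT, hxT⟩ := hxW
      refine havoid v hv T hT ?_
      intro t ht
      by_contra htv
      have htU : t ∈ U := (hVr T hT).1 ht
      have ht' : t ∈ U \ v := mem_sdiff.2 ⟨htU, htv⟩
      obtain ⟨a, ha⟩ := Finset.card_eq_one.1 hc1
      have hx2 : x = a := by rw [ha] at hx; exact mem_singleton.1 hx
      have ht2 : t = a := by rw [ha] at ht'; exact mem_singleton.1 ht'
      rw [hx2, ← ht2] at hxT
      exact (mem_sdiff.1 hxT).2 ht
    have hinj : Set.InjOn (fun v => U \ v) Vf := by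
      intro v hv v' hv' hvv'
      have h1 := (hVf v hv).1
      have h2 := (hVf v' hv').1
      simp only at hvv'
      rw [← Finset.sdiff_sdiff_eq_self h1, ← Finset.sdiff_sdiff_eq_self h2, hvv']
    calc Vf.card ≤ ((U \ W).powersetCard 1).card :=
          card_le_card_of_injOn _ hmaps hinj
      _ = (U \ W).card := by rw [card_powersetCard, Nat.choose_one_right]
  have h1 : (U \ W).card = U.card - W.card := card_sdiff_of_subset hWsub
  have h2 : W.card ≤ U.card := card_le_card hWsub
  omega

/-- Main Hall-type combinatorial lemma. -/
lemma lemL (hk : 5 ≤ k) (U : Finset (Fin m)) (Vf Vr : Finset (Finset (Fin m)))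
    (hVf : ∀ v ∈ Vf, v ⊆ U ∧ v.card = k - 2)
    (hVr : ∀ T ∈ Vr, T ⊆ U ∧ T.card = k - 3)
    (hdist : ∀ T ∈ Vr, ∀ T' ∈ Vr, T ≠ T' → 4 ≤ (symmDiff T T').card)
    (havoid : ∀ v ∈ Vf, ∀ T ∈ Vr, ¬ T ⊆ v)
    (hne : Vf.Nonempty ∨ Vr.Nonempty) :
    min k (Vf.card + 2 * Vr.card) ≤ U.card := by
  classical
  by_cases hku : k ≤ U.card
  · exact le_trans (min_le_left _ _) hku
  push_neg at hku
  refine le_trans (min_le_right _ _) ?_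
  rcases Vr.eq_empty_or_nonempty with hVre | ⟨T0, hT0⟩
  · subst hVre
    simp only [card_empty, mul_zero, add_zero]
    obtain ⟨v0, hv0⟩ : Vf.Nonempty := by
      rcases hne with h | h
      · exact h
      · exact absurd h (by simp)
    have hv0U := (hVf v0 hv0).1
    have hv0c := (hVf v0 hv0).2
    have hle : k - 2 ≤ U.card := hv0c ▸ card_le_card hv0U
    have hcase : U.card = k - 2 ∨ U.card = k - 1 := by omega
    rcases hcase with h | h
    · have : Vf ⊆ {U} := by
        intro v hv
        rw [mem_singleton]
        exact eq_of_subset_of_card_le (hVf v hv).1 (by rw [(hVf v hv).2, h])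
      have := card_le_card this
      simp only [card_singleton] at this
      omega
    · have hsub : Vf ⊆ U.powersetCard (k - 2) := by
        intro v hv
        rw [mem_powersetCard]
        exact ⟨(hVf v hv).1, (hVf v hv).2⟩
      have := card_le_card hsub
      rw [card_powersetCard, h] at this
      have hch : (k - 1).choose (k - 2) = k - 1 := by
        have h1 : k - 1 = (k - 2) + 1 := by omega
        rw [h1, Nat.choose_succ_self_right]
      omega
  · have hT0U := (hVr T0 hT0).1
    have hT0c := (hVr T0 hT0).2
    have hu3 : k - 3 ≤ U.card := hT0c ▸ card_le_card hT0U
    have hpairU : ∀ T ∈ Vr, ∀ T' ∈ Vr, T ≠ T' → k - 1 ≤ (T ∪ T').card := by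
      intro T hT T' hT' hne'
      have := union_card_of_dist (hVr T hT).2 (hVr T' hT').2 (hdist T hT T' hT' hne')
      omega
    have hcase : U.card = k - 3 ∨ U.card = k - 2 ∨ U.card = k - 1 := by omega
    have hVr1 : U.card ≤ k - 2 → Vr.card ≤ 1 := by
      intro hu
      rw [card_le_one]
      intro T hT T' hT'
      by_contra hne'
      have h1 := hpairU T hT T' hT' hne'
      have h2 : (T ∪ T').card ≤ U.card :=
        card_le_card (union_subset (hVr T hT).1 (hVr T' hT').1)
      omega
    rcases hcase with h | h | h
    · have hVfe : Vf = ∅ := by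
        rw [eq_empty_iff_forall_notMem]
        intro v hv
        have := card_le_card (hVf v hv).1
        rw [(hVf v hv).2, h] at this
        omega
      have := hVr1 (by omega)
      rw [hVfe, card_empty]
      omega
    · have hVfe : Vf = ∅ := by
        rw [eq_empty_iff_forall_notMem]
        intro v hv
        have heq : v = U := eq_of_subset_of_card_le (hVf v hv).1 (by rw [(hVf v hv).2, h])
        exact havoid v hv T0 hT0 (heq ▸ hT0U)
      have := hVr1 (by omega)
      rw [hVfe, card_empty]
      omega
    · rw [h]
      refine lemM hk U Vf Vr h hVf hVr ?_ havoid
      intro T hT T' hT' hne'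
      refine eq_of_subset_of_card_le (union_subset (hVr T hT).1 (hVr T' hT').1) ?_
      rw [h]
      exact hpairU T hT T' hT' hne' 
  

end Aux
/-- The star of `T`: all `(k-2)`-subsets of `Fin m` containing `T`. -/
def starCBC (m k : ℕ) (T : Finset (Fin m)) : Finset (Finset (Fin m)) :=
  (Finset.powersetCard (k - 2) (Finset.univ : Finset (Fin m))).filter (fun v => T ⊆ v)

lemma mem_starCBC {m k : ℕ} {T v : Finset (Fin m)} :
    v ∈ starCBC m k T ↔ (v.card = k - 2 ∧ T ⊆ v) := by
  simp [starCBC, mem_powersetCard]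

lemma starCBC_card_le {m k : ℕ} (hk : 5 ≤ k) {T : Finset (Fin m)} (hT : T.card = k - 3) :
    (starCBC m k T).card ≤ m - k + 3 := by
  classical
  have hmaps : ∀ v ∈ starCBC m k T, v \ T ∈ (Finset.univ \ T).powersetCard 1 := by
    intro v hv
    rw [mem_starCBC] at hv
    rw [mem_powersetCard]
    refine ⟨sdiff_subset_sdiff (subset_univ v) le_rfl, ?_⟩
    rw [card_sdiff_of_subset hv.2, hv.1, hT]
    have : T.card ≤ v.card := card_le_card hv.2
    omega
  have hinj : Set.InjOn (fun v => v \ T) (starCBC m k T) := by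
    intro v hv v' hv' hvv'
    rw [Finset.mem_coe, mem_starCBC] at hv hv'
    simp only at hvv'
    rw [← Finset.union_sdiff_of_subset hv.2, ← Finset.union_sdiff_of_subset hv'.2, hvv']
  have h1 : (starCBC m k T).card ≤ ((Finset.univ \ T).powersetCard 1).card :=
    card_le_card_of_injOn _ hmaps hinj
  rw [card_powersetCard, Nat.choose_one_right] at h1
  have h2 : (Finset.univ \ T).card = m - (k - 3) := by
    rw [card_sdiff_of_subset (subset_univ T), hT, card_univ, Fintype.card_fin]
  omega

lemma starCBC_card_ge {m k : ℕ} (hk : 5 ≤ k) (hkm : k ≤ m) {T : Finset (Fin m)}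
    (hT : T.card = k - 3) : m - k + 3 ≤ (starCBC m k T).card := by
  classical
  have hmaps : ∀ x ∈ Finset.univ \ T, insert x T ∈ starCBC m k T := by
    intro x hx
    rw [mem_sdiff] at hx
    rw [mem_starCBC]
    refine ⟨?_, subset_insert x T⟩
    rw [card_insert_of_notMem hx.2, hT]
    omega
  have hinj : Set.InjOn (fun x => insert x T) ↑(Finset.univ \ T : Finset (Fin m)) := by
    intro x hx y hy hxy
    rw [Finset.mem_coe, mem_sdiff] at hx hy
    simp only at hxy
    have : x ∈ insert y T := hxy ▸ mem_insert_self x T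
    rcases mem_insert.1 this with h | h
    · exact h
    · exact absurd h hx.2
  have h1 : (Finset.univ \ T).card ≤ (starCBC m k T).card :=
    card_le_card_of_injOn _ hmaps hinj
  have h2 : (Finset.univ \ T).card = m - (k - 3) := by
    rw [card_sdiff_of_subset (subset_univ T), hT, card_univ, Fintype.card_fin]
  omega

lemma starCBC_disjoint {m k : ℕ} (hk : 5 ≤ k) {T T' : Finset (Fin m)}
    (hT : T.card = k - 3) (hT' : T'.card = k - 3) (hne : T ≠ T')
    (hd : 4 ≤ (symmDiff T T').card) : Disjoint (starCBC m k T) (starCBC m k T') := by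
  rw [Finset.disjoint_left]
  intro v hv hv'
  rw [mem_starCBC] at hv hv'
  have h1 : (T ∪ T').card ≤ v.card := card_le_card (union_subset hv.2 hv'.2)
  have h2 : k - 3 + 2 ≤ (T ∪ T').card := by
    have h3 : (symmDiff T T').card = (T ∪ T').card - (T ∩ T').card := by
      rw [symmDiff_eq_sup_sdiff_inf]; exact card_sdiff_of_subset inf_le_sup
    have h4 := card_union_add_card_inter T T'
    have h5 : (T ∩ T').card ≤ (T ∪ T').card := card_le_card inf_le_sup
    omega
  rw [hv.1] at h1
  omega

/-- Star counting: a distance-4 family of `(k-3)`-sets has at most `C(m,k-2)/(m-k+3)` members. -/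
lemma code_count {m k : ℕ} (hk : 5 ≤ k) (hkm : k ≤ m) (F : Finset (Finset (Fin m)))
    (hw : ∀ C ∈ F, C.card = k - 3)
    (hdist : ∀ C ∈ F, ∀ D ∈ F, C ≠ D → 4 ≤ (symmDiff C D).card) :
    F.card * (m - k + 3) ≤ Nat.choose m (k - 2) := by
  classical
  have hdisj : ∀ T ∈ F, ∀ T' ∈ F, T ≠ T' → Disjoint (starCBC m k T) (starCBC m k T') := by
    intro T hT T' hT' hne
    exact starCBC_disjoint hk (hw T hT) (hw T' hT') hne (hdist T hT T' hT' hne)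
  have hcard : (F.biUnion (starCBC m k)).card = ∑ T ∈ F, (starCBC m k T).card :=
    card_biUnion hdisj
  have hge : F.card * (m - k + 3) ≤ ∑ T ∈ F, (starCBC m k T).card := by
    have := Finset.card_nsmul_le_sum F (fun T => (starCBC m k T).card) (m - k + 3)
      (fun T hT => starCBC_card_ge hk hkm (hw T hT))
    simpa [smul_eq_mul] using this
  have hsub : F.biUnion (starCBC m k) ⊆ Finset.powersetCard (k - 2) Finset.univ := by
    intro v hv
    rw [mem_biUnion] at hv
    obtain ⟨T, hT, hvT⟩ := hv
    rw [mem_powersetCard]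
    exact ⟨subset_univ v, (mem_starCBC.1 hvT).1⟩
  have hle : (F.biUnion (starCBC m k)).card ≤ Nat.choose m (k - 2) := by
    have := card_le_card hsub
    rwa [card_powersetCard, card_univ, Fintype.card_fin] at this
  omega

/-- The supremum in `maxCW` is attained. -/
lemma maxCW_spec (m d w : ℕ) : ∃ F : Finset (Finset (Fin m)), F.card = maxCW m d w ∧
    (∀ C ∈ F, C.card = w) ∧
    ∀ C ∈ F, ∀ D ∈ F, C ≠ D → d ≤ (symmDiff C D).card := by
  classical
  have hne : {s : ℕ | ∃ F : Finset (Finset (Fin m)), F.card = s ∧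
      (∀ C ∈ F, C.card = w) ∧
      ∀ C ∈ F, ∀ D ∈ F, C ≠ D → d ≤ (symmDiff C D).card}.Nonempty :=
    ⟨0, ∅, by simp⟩
  have hbdd : BddAbove {s : ℕ | ∃ F : Finset (Finset (Fin m)), F.card = s ∧
      (∀ C ∈ F, C.card = w) ∧
      ∀ C ∈ F, ∀ D ∈ F, C ≠ D → d ≤ (symmDiff C D).card} := by
    refine ⟨Fintype.card (Finset (Fin m)), ?_⟩
    rintro s ⟨F, hF, -, -⟩
    rw [← hF, ← Finset.card_univ]
    exact card_le_card (subset_univ F)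
  have := Nat.sSup_mem hne hbdd
  obtain ⟨F, h1, h2, h3⟩ := this
  exact ⟨F, h1, h2, h3⟩

/-- Enumerate a finset of known cardinality. -/
lemma enumFinset {β : Type*} (s : Finset β) {c : ℕ} (h : s.card = c) :
    ∃ g : Fin c → β, (∀ j, g j ∈ s) ∧ Function.Injective g := by
  classical
  have e : {x // x ∈ s} ≃ Fin c := by
    refine (Fintype.equivFinOfCardEq ?_)
    rw [Fintype.card_coe, h]
  refine ⟨fun j => (e.symm j : β), fun j => (e.symm j).2, ?_⟩
  intro j j' hjj'
  have : e.symm j = e.symm j' := Subtype.coe_injective hjj'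
  exact e.symm.injective this

/-- For `m ≥ k ≥ 5` and `C(m,k-2) - (m-k+1)·A(m,4,k-3) ≤ n ≤ C(m,k-2)`, if the remainder
of `C(m,k-2) - n` modulo `m-k+1` is at least `(m-k+1)/2`, then
`N(n,k,m) ≤ n(k-2) - 2⌊(C(m,k-2) - n)/(m-k+1)⌋`. -/
theorem Nmin_cw_almost_optimal (n k m : ℕ) (hk : 5 ≤ k) (hkm : k ≤ m)
    (hn1 : Nat.choose m (k - 2) - (m - k + 1) * maxCW m 4 (k - 3) ≤ n)
    (hn2 : n ≤ Nat.choose m (k - 2))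
    (hrem : ((m : ℚ) - k + 1) / 2
        ≤ (((Nat.choose m (k - 2) - n) % (m - k + 1) : ℕ) : ℚ)) :
    (Nmin n k m : ℤ) ≤ (n : ℤ) * (k - 2)
      - 2 * ⌊((Nat.choose m (k - 2) : ℚ) - n) / ((m : ℚ) - k + 1)⌋ := by
  classical
  clear hrem
  set Cn := Nat.choose m (k - 2) with hCdef
  set A := maxCW m 4 (k - 3) with hAdef
  set dd := m - k + 1 with hddef
  set D := Cn - n with hDdef
  set q := D / dd with hqdef
  have hd0 : 0 < dd := by omega
  obtain ⟨F, hFcard, hFw, hFdist⟩ := maxCW_spec m 4 (k - 3)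
  have hCA : F.card * (m - k + 3) ≤ Cn := code_count hk hkm F hFw hFdist
  have hDA : D ≤ dd * A := by omega
  have hqA : q ≤ A := by
    have h : D / dd ≤ dd * A / dd := Nat.div_le_div_right hDA
    rwa [Nat.mul_div_cancel_left A hd0] at h
  have hqd : q * dd ≤ D := Nat.div_mul_le_self D dd
  have h2A : 2 * A ≤ n := by
    have h1 : A * (m - k + 3) = A * dd + 2 * A := by
      have h3 : m - k + 3 = dd + 2 := by omega
      rw [h3, Nat.mul_add]
      ring
    have h2 : A * dd = dd * A := Nat.mul_comm _ _
    have h4 : F.card = A := hFcard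
    rw [h4] at hCA
    omega
  have h2q : 2 * q ≤ n := by omega
  set f := n - 2 * q with hfdef
  have hnf : n = f + 2 * q := by omega
  have hqF : q ≤ F.card := by omega
  obtain ⟨F', hF'sub, hF'card⟩ := Finset.exists_subset_card_eq hqF
  set allowed := (Finset.powersetCard (k - 2) (Finset.univ : Finset (Fin m)))
      \ F'.biUnion (starCBC m k) with hallowdef
  have hF'w : ∀ T ∈ F', T.card = k - 3 := fun T hT => hFw T (hF'sub hT)
  have hF'dist : ∀ T ∈ F', ∀ T' ∈ F', T ≠ T' → 4 ≤ (symmDiff T T').card :=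
    fun T hT T' hT' h => hFdist T (hF'sub hT) T' (hF'sub hT') h
  have hfa : f ≤ allowed.card := by
    have hbu : (F'.biUnion (starCBC m k)).card ≤ q * (m - k + 3) := by
      calc (F'.biUnion (starCBC m k)).card ≤ ∑ T ∈ F', (starCBC m k T).card :=
            card_biUnion_le
        _ ≤ q * (m - k + 3) := by
            have h := Finset.sum_le_card_nsmul F' (fun T => (starCBC m k T).card)
              (m - k + 3) (fun T hT => starCBC_card_le hk (hF'w T hT))
            rw [hF'card] at h
            simpa [smul_eq_mul] using h
    have hsub : F'.biUnion (starCBC m k)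
        ⊆ Finset.powersetCard (k - 2) (Finset.univ : Finset (Fin m)) := by
      intro v hv
      rw [mem_biUnion] at hv
      obtain ⟨T, hT, hvT⟩ := hv
      rw [mem_powersetCard]
      exact ⟨subset_univ v, (mem_starCBC.1 hvT).1⟩
    have hcal : allowed.card = Cn - (F'.biUnion (starCBC m k)).card := by
      rw [hallowdef, card_sdiff_of_subset hsub, card_powersetCard, card_univ, Fintype.card_fin]
    have hq3 : q * (m - k + 3) = q * dd + 2 * q := by
      have h3 : m - k + 3 = dd + 2 := by omega
      rw [h3, Nat.mul_add]
      ring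
    omega
  obtain ⟨full, hfullsub, hfullcard⟩ := Finset.exists_subset_card_eq hfa
  have hfullw : ∀ v ∈ full, v.card = k - 2 := fun v hv =>
    (mem_powersetCard.1 (mem_sdiff.1 (hfullsub hv)).1).2
  have hfullavoid : ∀ v ∈ full, ∀ T ∈ F', ¬ T ⊆ v := by
    intro v hv T hT hTv
    exact (mem_sdiff.1 (hfullsub hv)).2
      (mem_biUnion.2 ⟨T, hT, mem_starCBC.2 ⟨hfullw v hv, hTv⟩⟩)
  obtain ⟨ef, hefmem, hefinj⟩ := enumFinset full hfullcard
  obtain ⟨er, hermem, herinj⟩ := enumFinset F' hF'card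
  set X : Fin n → Finset (Fin m) := fun i =>
    if h : (i : ℕ) < f then ef ⟨(i : ℕ), h⟩
    else if h2 : (i : ℕ) < f + q then er ⟨(i : ℕ) - f, by omega⟩
    else er ⟨(i : ℕ) - f - q, by have := i.isLt; omega⟩
    with hXdef
  have hXfull : ∀ (i : Fin n) (h : (i : ℕ) < f), X i = ef ⟨(i : ℕ), h⟩ := by
    intro i h
    rw [hXdef]
    exact dif_pos h
  have hXfullmem : ∀ (i : Fin n), (i : ℕ) < f → X i ∈ full := by
    intro i h
    rw [hXfull i h]
    exact hefmem _
  have hXredmem : ∀ (i : Fin n), ¬ (i : ℕ) < f → X i ∈ F' := by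
    intro i h
    rw [hXdef]
    simp only [dif_neg h]
    split
    · exact hermem _
    · exact hermem _
  have hall : ∀ J : Finset (Fin n), 1 ≤ J.card → J.card ≤ k →
      J.card ≤ (J.biUnion X).card := by
    intro J hJ1 hJk
    set U := J.biUnion X with hUdef
    set Jf := J.filter (fun i : Fin n => (i : ℕ) < f) with hJfdef
    set Jr := J.filter (fun i : Fin n => ¬ (i : ℕ) < f) with hJrdef
    have hsplit : Jf.card + Jr.card = J.card :=
      card_filter_add_card_filter_not (s := J) (fun i : Fin n => (i : ℕ) < f)
    set Vf := Jf.image X with hVfdef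
    set Vr := Jr.image X with hVrdef
    have hVfc : Vf.card = Jf.card := by
      rw [hVfdef]
      apply card_image_of_injOn
      intro i hi i' hi' hXii
      rw [Finset.mem_coe, hJfdef, mem_filter] at hi hi'
      rw [hXfull i hi.2, hXfull i' hi'.2] at hXii
      have := hefinj hXii
      simp only [Fin.mk.injEq] at this
      exact Fin.ext this
    have hJr2 : Jr.card ≤ 2 * Vr.card := by
      have hφinj : Set.InjOn
          (fun i : Fin n => (X i, decide ((i : ℕ) < f + q))) Jr := by
        intro i hi i' hi' hphi
        rw [Finset.mem_coe, hJrdef, mem_filter] at hi hi'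
        have hX1 : X i = X i' := congrArg Prod.fst hphi
        have hb : ((i : ℕ) < f + q) = ((i' : ℕ) < f + q) := by
          have := congrArg Prod.snd hphi
          simpa [decide_eq_decide] using this
        have hilt := i.isLt
        have hi'lt := i'.isLt
        by_cases hc : (i : ℕ) < f + q
        · have hc' : (i' : ℕ) < f + q := by rw [← hb]; exact hc
          rw [hXdef] at hX1
          simp only [dif_neg hi.2, dif_neg hi'.2, dif_pos hc, dif_pos hc'] at hX1
          have := herinj hX1
          simp only [Fin.mk.injEq] at this
          have h2 := hi.2
          have h2' := hi'.2
          exact Fin.ext (by omega)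
        · have hc' : ¬ (i' : ℕ) < f + q := by rw [← hb]; exact hc
          rw [hXdef] at hX1
          simp only [dif_neg hi.2, dif_neg hi'.2, dif_neg hc, dif_neg hc'] at hX1
          have := herinj hX1
          simp only [Fin.mk.injEq] at this
          have h2 := hi.2
          have h2' := hi'.2
          exact Fin.ext (by omega)
      have h1 : Jr.card =
          (Jr.image (fun i : Fin n => (X i, decide ((i : ℕ) < f + q)))).card :=
        (card_image_of_injOn hφinj).symm
      have h2 : Jr.image (fun i : Fin n => (X i, decide ((i : ℕ) < f + q)))
          ⊆ Vr ×ˢ (Finset.univ : Finset Bool) := by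
        intro p hp
        rw [mem_image] at hp
        obtain ⟨i, hi, rfl⟩ := hp
        rw [mem_product]
        exact ⟨mem_image_of_mem X hi, mem_univ _⟩
      have h3 := card_le_card h2
      rw [card_product, card_univ] at h3
      simp only [Fintype.card_bool] at h3
      omega
    have hVfU : ∀ v ∈ Vf, v ⊆ U ∧ v.card = k - 2 := by
      intro v hv
      obtain ⟨i, hi, rfl⟩ := mem_image.1 hv
      have hif := mem_filter.1 hi
      exact ⟨subset_biUnion_of_mem X hif.1, hfullw _ (hXfullmem i hif.2)⟩
    have hVrU : ∀ T ∈ Vr, T ⊆ U ∧ T.card = k - 3 := by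
      intro T hT
      obtain ⟨i, hi, rfl⟩ := mem_image.1 hT
      have hif := mem_filter.1 hi
      exact ⟨subset_biUnion_of_mem X hif.1, hF'w _ (hXredmem i hif.2)⟩
    have hVrF' : ∀ T ∈ Vr, T ∈ F' := by
      intro T hT
      obtain ⟨i, hi, rfl⟩ := mem_image.1 hT
      exact hXredmem i (mem_filter.1 hi).2
    have hVrdist : ∀ T ∈ Vr, ∀ T' ∈ Vr, T ≠ T' → 4 ≤ (symmDiff T T').card :=
      fun T hT T' hT' h => hF'dist T (hVrF' T hT) T' (hVrF' T' hT') h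
    have havoid' : ∀ v ∈ Vf, ∀ T ∈ Vr, ¬ T ⊆ v := by
      intro v hv T hT
      obtain ⟨i, hi, rfl⟩ := mem_image.1 hv
      exact hfullavoid _ (hXfullmem i (mem_filter.1 hi).2) T (hVrF' T hT)
    have hneV : Vf.Nonempty ∨ Vr.Nonempty := by
      rcases Jf.eq_empty_or_nonempty with he | hne
      · right
        have : Jr.Nonempty := by
          rw [← card_pos]
          rw [he, card_empty] at hsplit
          omega
        exact this.image X
      · exact Or.inl (hne.image X)
    have hmain := lemL hk U Vf Vr hVfU hVrU hVrdist havoid' hneV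
    have hmin : J.card ≤ min k (Vf.card + 2 * Vr.card) := le_min hJk (by omega)
    omega
  have hXcard : ∀ i : Fin n, (X i).card = if (i : ℕ) < f then k - 2 else k - 3 := by
    intro i
    by_cases h : (i : ℕ) < f
    · rw [if_pos h]
      exact hfullw _ (hXfullmem i h)
    · rw [if_neg h]
      exact hF'w _ (hXredmem i h)
  have hsum : (∑ i, (X i).card) = f * (k - 2) + (2 * q) * (k - 3) := by
    rw [Finset.sum_congr rfl (fun i _ => hXcard i)]
    rw [Fin.sum_univ_eq_sum_range (fun j => if j < f then k - 2 else k - 3) n]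
    rw [Finset.range_eq_Ico,
      ← Finset.sum_Ico_consecutive _ (Nat.zero_le f) (by omega : f ≤ n)]
    have e1 : (∑ j ∈ Finset.Ico 0 f, if j < f then k - 2 else k - 3) = f * (k - 2) := by
      rw [Finset.sum_congr rfl (fun j hj => if_pos (mem_Ico.1 hj).2),
        Finset.sum_const, Nat.card_Ico, smul_eq_mul, Nat.sub_zero]
    have e2 : (∑ j ∈ Finset.Ico f n, if j < f then k - 2 else k - 3)
        = (2 * q) * (k - 3) := by
      rw [Finset.sum_congr rfl (fun j hj => if_neg (not_lt.2 (mem_Ico.1 hj).1)),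
        Finset.sum_const, Nat.card_Ico, smul_eq_mul]
      have : n - f = 2 * q := by omega
      rw [this]
    rw [e1, e2]
  have hNle : Nmin n k m ≤ f * (k - 2) + (2 * q) * (k - 3) :=
    Nat.sInf_le ⟨X, hsum, hall⟩
  have hfloor : ⌊((Cn : ℚ) - n) / ((m : ℚ) - k + 1)⌋ = (q : ℤ) := by
    have h1 : ((Cn : ℚ) - (n : ℚ)) = ((D : ℕ) : ℚ) := by
      rw [hDdef]
      push_cast [hn2]
      ring
    have h2 : ((m : ℚ) - k + 1) = ((dd : ℕ) : ℚ) := by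
      rw [hddef]
      push_cast [hkm]
      ring
    rw [h1, h2]
    have h3 : ((D : ℕ) : ℚ) = (((D : ℤ) : ℚ)) := by push_cast; ring
    rw [h3, Rat.floor_intCast_div_natCast, hqdef]
    exact (Int.natCast_ediv D dd).symm
  rw [hfloor]
  have hcast : ((f * (k - 2) + (2 * q) * (k - 3) : ℕ) : ℤ)
      = (n : ℤ) * ((k : ℤ) - 2) - 2 * (q : ℤ) := by
    have hk2 : ((k - 2 : ℕ) : ℤ) = (k : ℤ) - 2 := by omega
    have hk3 : ((k - 3 : ℕ) : ℤ) = (k : ℤ) - 3 := by omega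
    have hn' : (n : ℤ) = (f : ℤ) + 2 * (q : ℤ) := by omega
    push_cast [hk2, hk3]
    rw [hn']
    ring
  calc (Nmin n k m : ℤ) ≤ ((f * (k - 2) + (2 * q) * (k - 3) : ℕ) : ℤ) := by
        exact_mod_cast hNle
    _ = _ := hcast
end
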